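/- arXiv:1109.6277 — 8 statements merged into one kernel-verified Lean document; each statement's English description precedes it below -/
import Mathlib

section
/- Let G be a graph on n = 2m ≥ 4 vertices that is the disjoint union of m copies of K₂. Then for every vertex v, DV_G(v) + DV_{Ḡ}(v) = n − 1 + 2^{n/2 − 1}, where Ḡ is the complement of G. -/
/-- `D` is a dominating set of `G`: every vertex not in `D` is adjacent to a vertex of `D`. -/
def IsDomSet {V : Type*} (G : SimpleGraph V) (D : Finset V) : Prop :=
  ∀ v, v ∉ D → ∃ u ∈ D, G.Adj u v

/-- The domination number `γ(G)`: the minimum cardinality of a dominating set. -/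
noncomputable def domNum {V : Type*} (G : SimpleGraph V) : ℕ :=
  sInf {n | ∃ D : Finset V, IsDomSet G D ∧ D.card = n}

/-- The collection of minimum dominating sets of `G`. -/
def minDomSets {V : Type*} (G : SimpleGraph V) : Set (Finset V) :=
  {D | IsDomSet G D ∧ D.card = domNum G}

/-- `τ(G)`: the number of minimum dominating sets of `G`. -/
noncomputable def tau {V : Type*} (G : SimpleGraph V) : ℕ :=
  (minDomSets G).ncard

/-- `DV(v)`: the number of minimum dominating sets of `G` containing `v`. -/
noncomputable def DV {V : Type*} (G : SimpleGraph V) (v : V) : ℕ :=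
  {D ∈ minDomSets G | v ∈ D}.ncard

/-- The perfect matching `mK₂`: `m` disjoint copies of `K₂`, on vertex set `Fin m × Fin 2`. -/
def matchingGraph (m : ℕ) : SimpleGraph (Fin m × Fin 2) where
  Adj x y := x.1 = y.1 ∧ x.2 ≠ y.2
  symm := ⟨fun x y h => ⟨h.1.symm, h.2.symm⟩⟩
  loopless := ⟨fun x h => h.2 rfl⟩

namespace Aux

variable {m : ℕ}

lemma fin2_eq (a b c : Fin 2) (h1 : a ≠ c) (h2 : b ≠ c) : a = b := by
  revert a b c; decide

lemma fin2_succ_ne (a : Fin 2) : a + 1 ≠ a := by revert a; decide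

lemma fin2_ne_zero (a : Fin 2) (h : a ≠ 0) : a = 1 := by revert a; decide

lemma matching_adj {x y : Fin m × Fin 2} :
    (matchingGraph m).Adj x y ↔ x.1 = y.1 ∧ x.2 ≠ y.2 := Iff.rfl

/-- The min dominating set determined by a choice function. -/
def Df (f : Fin m → Fin 2) : Finset (Fin m × Fin 2) :=
  Finset.univ.image fun i => (i, f i)

lemma mem_Df {f : Fin m → Fin 2} {x : Fin m × Fin 2} : x ∈ Df f ↔ f x.1 = x.2 := by
  constructor
  · intro h
    simp only [Df, Finset.mem_image, Finset.mem_univ, true_and] at h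
    obtain ⟨i, hi⟩ := h
    subst hi
    rfl
  · intro h
    simp only [Df, Finset.mem_image, Finset.mem_univ, true_and]
    exact ⟨x.1, by rw [h]⟩

lemma card_Df (f : Fin m → Fin 2) : (Df f).card = m := by
  rw [Df, Finset.card_image_of_injective _ (fun i j h => by
    simpa using congrArg Prod.fst h)]
  simp

lemma Df_dom (f : Fin m → Fin 2) : IsDomSet (matchingGraph m) (Df f) := by
  intro v hv
  exact ⟨(v.1, f v.1), mem_Df.mpr rfl, rfl, fun h => hv (mem_Df.mpr h)⟩

lemma dom_card_ge {D : Finset (Fin m × Fin 2)} (hD : IsDomSet (matchingGraph m) D) :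
    m ≤ D.card := by
  have hsub : (Finset.univ : Finset (Fin m)) ⊆ D.image Prod.fst := by
    intro i _
    rcases em ((i, 0) ∈ D) with h | h
    · exact Finset.mem_image.mpr ⟨(i, 0), h, rfl⟩
    · obtain ⟨u, hu, hadj⟩ := hD (i, 0) h
      exact Finset.mem_image.mpr ⟨u, hu, hadj.1⟩
  calc m = (Finset.univ : Finset (Fin m)).card := by simp
    _ ≤ (D.image Prod.fst).card := Finset.card_le_card hsub
    _ ≤ D.card := Finset.card_image_le

lemma domNum_matching : domNum (matchingGraph m) = m := by
  have hmem : m ∈ {n | ∃ D : Finset (Fin m × Fin 2), IsDomSet (matchingGraph m) D ∧ D.card = n} :=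
    ⟨Df fun _ => 0, Df_dom _, card_Df _⟩
  apply le_antisymm
  · exact Nat.sInf_le hmem
  · apply le_csInf ⟨m, hmem⟩
    rintro n ⟨D, hD, rfl⟩
    exact dom_card_ge hD

lemma minDom_matching : minDomSets (matchingGraph m) = Set.range Df := by
  classical
  ext D
  constructor
  · rintro ⟨hdom, hcard⟩
    rw [domNum_matching] at hcard
    refine ⟨fun i => if (i, (0 : Fin 2)) ∈ D then 0 else 1, ?_⟩
    have hsub : Df (fun i => if (i, (0 : Fin 2)) ∈ D then 0 else 1) ⊆ D := by
      intro x hx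
      have hx' := mem_Df.mp hx
      by_cases h : (x.1, (0 : Fin 2)) ∈ D
      · rw [if_pos h] at hx'
        have : x = (x.1, (0 : Fin 2)) := Prod.ext rfl hx'.symm
        rwa [this]
      · rw [if_neg h] at hx'
        obtain ⟨u, hu, hadj⟩ := hdom (x.1, 0) h
        have h1 : u.1 = x.1 := hadj.1
        have h2 : u.2 = 1 := fin2_ne_zero _ hadj.2
        have : u = x := Prod.ext h1 (by rw [h2, ← hx'])
        rwa [← this]
    exact Finset.eq_of_subset_of_card_le hsub (by rw [card_Df, hcard])
  · rintro ⟨f, rfl⟩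
    exact ⟨Df_dom f, by rw [card_Df, domNum_matching]⟩

lemma Df_inj : Function.Injective (Df (m := m)) := by
  intro f g h
  funext i
  have : (i, f i) ∈ Df g := h ▸ mem_Df.mpr rfl
  exact (mem_Df.mp this).symm

/-- Functions fixed at one point are equivalent to functions on the rest. -/
def eFix (a : Fin m) (b : Fin 2) :
    {f : Fin m → Fin 2 // f a = b} ≃ ({i : Fin m // i ≠ a} → Fin 2) where
  toFun f i := f.1 i.1
  invFun g := ⟨fun i => if h : i = a then b else g ⟨i, h⟩, by simp⟩
  left_inv f := by
    apply Subtype.ext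
    funext i
    dsimp
    split_ifs with h
    · subst h; exact f.2.symm
    · rfl
  right_inv g := by
    funext i
    dsimp
    rw [dif_neg i.2]

lemma card_fix (a : Fin m) (b : Fin 2) :
    Nat.card {f : Fin m → Fin 2 // f a = b} = 2 ^ (m - 1) := by
  classical
  rw [Nat.card_congr (eFix a b), Nat.card_eq_fintype_card, Fintype.card_fun]
  congr 1
  have := Fintype.card_subtype_compl (fun i : Fin m => i = a)
  simp only [Fintype.card_subtype_eq, Fintype.card_fin] at this
  exact this

lemma DV_matching (v : Fin m × Fin 2) : DV (matchingGraph m) v = 2 ^ (m - 1) := by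
  have hset : {D ∈ minDomSets (matchingGraph m) | v ∈ D}
      = Df '' {f : Fin m → Fin 2 | f v.1 = v.2} := by
    ext D
    simp only [minDom_matching, Set.mem_setOf_eq, Set.mem_image, Set.mem_range]
    constructor
    · rintro ⟨⟨f, rfl⟩, hv⟩
      exact ⟨f, mem_Df.mp hv, rfl⟩
    · rintro ⟨f, hf, rfl⟩
      exact ⟨⟨f, rfl⟩, mem_Df.mpr hf⟩
  rw [DV, hset, Set.ncard_image_of_injective _ Df_inj, ← Nat.card_coe_set_eq]
  exact card_fix v.1 v.2

lemma pair_dom (D : Finset (Fin m × Fin 2)) (hD : D.card = 2) :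
    IsDomSet (matchingGraph m)ᶜ D := by
  obtain ⟨a, b, hab, rfl⟩ := Finset.card_eq_two.mp hD
  intro w hw
  simp only [Finset.mem_insert, Finset.mem_singleton, not_or] at hw
  by_cases h : (matchingGraph m).Adj a w
  · refine ⟨b, by simp, ?_⟩
    rw [SimpleGraph.compl_adj]
    refine ⟨fun hbw => hw.2 hbw.symm, fun hadj => ?_⟩
    exact hab (Prod.ext (h.1.trans hadj.1.symm) (fin2_eq _ _ _ h.2 hadj.2))
  · exact ⟨a, by simp, (SimpleGraph.compl_adj _ _ _).mpr ⟨fun haw => hw.1 haw.symm, h⟩⟩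

lemma compl_dom_card_ge (hm : 0 < m) {D : Finset (Fin m × Fin 2)}
    (hD : IsDomSet (matchingGraph m)ᶜ D) : 2 ≤ D.card := by
  by_contra h
  push_neg at h
  rcases Nat.le_one_iff_eq_zero_or_eq_one.mp (Nat.lt_succ_iff.mp h) with h0 | h1
  · rw [Finset.card_eq_zero] at h0
    subst h0
    obtain ⟨u, hu, -⟩ := hD (⟨0, hm⟩, 0) (by simp)
    simp at hu
  · obtain ⟨u, rfl⟩ := Finset.card_eq_one.mp h1
    obtain ⟨x, hx, hadj⟩ := hD (u.1, u.2 + 1) (by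
      simp only [Finset.mem_singleton]
      intro he
      exact fin2_succ_ne u.2 (congrArg Prod.snd he))
    rw [Finset.mem_singleton] at hx
    rw [hx] at hadj
    exact ((SimpleGraph.compl_adj _ _ _).mp hadj).2 ⟨rfl, Ne.symm (fin2_succ_ne u.2)⟩

lemma domNum_compl (hm : 0 < m) : domNum (matchingGraph m)ᶜ = 2 := by
  have hab : ((⟨0, hm⟩, 0) : Fin m × Fin 2) ≠ (⟨0, hm⟩, 1) := fun he => by
    have h2 : (0 : Fin 2) = 1 := congrArg Prod.snd he
    exact absurd h2 (by decide)
  have hcard : ({(⟨0, hm⟩, 0), (⟨0, hm⟩, 1)} : Finset (Fin m × Fin 2)).card = 2 :=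
    Finset.card_pair hab
  have hmem : 2 ∈ {n | ∃ D : Finset (Fin m × Fin 2), IsDomSet (matchingGraph m)ᶜ D ∧ D.card = n} :=
    ⟨_, pair_dom _ hcard, hcard⟩
  apply le_antisymm
  · exact Nat.sInf_le hmem
  · apply le_csInf ⟨2, hmem⟩
    rintro n ⟨D, hD, rfl⟩
    exact compl_dom_card_ge hm hD

lemma minDom_compl (hm : 0 < m) :
    minDomSets (matchingGraph m)ᶜ = {D : Finset (Fin m × Fin 2) | D.card = 2} := by
  ext D
  simp only [minDomSets, Set.mem_setOf_eq, domNum_compl hm]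
  exact ⟨fun h => h.2, fun h => ⟨pair_dom _ h, h⟩⟩

lemma DV_compl (hm : 0 < m) (v : Fin m × Fin 2) :
    DV (matchingGraph m)ᶜ v = 2 * m - 1 := by
  have hset : {D ∈ minDomSets (matchingGraph m)ᶜ | v ∈ D}
      = (fun u => ({v, u} : Finset (Fin m × Fin 2))) '' {u | u ≠ v} := by
    ext D
    simp only [minDom_compl hm, Set.mem_setOf_eq, Set.mem_image]
    constructor
    · rintro ⟨h2, hv⟩
      obtain ⟨a, b, hab, rfl⟩ := Finset.card_eq_two.mp h2
      rcases Finset.mem_insert.mp hv with rfl | hv'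
      · exact ⟨b, Ne.symm hab, rfl⟩
      · rw [Finset.mem_singleton] at hv'
        subst hv'
        exact ⟨a, hab, Finset.pair_comm v a⟩
    · rintro ⟨u, hu, rfl⟩
      exact ⟨Finset.card_pair (Ne.symm hu), Finset.mem_insert_self _ _⟩
  have hinj : Set.InjOn (fun u => ({v, u} : Finset (Fin m × Fin 2))) {u | u ≠ v} := by
    intro u1 hu1 u2 hu2 he
    dsimp only at he
    have : u1 ∈ ({v, u2} : Finset (Fin m × Fin 2)) := by
      rw [← he]; exact Finset.mem_insert.mpr (Or.inr (Finset.mem_singleton_self _))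
    rcases Finset.mem_insert.mp this with h | h
    · exact absurd h hu1
    · exact Finset.mem_singleton.mp h
  rw [DV, hset, Set.ncard_image_of_injOn hinj]
  have : {u : Fin m × Fin 2 | u ≠ v} = ↑(Finset.univ.erase v) := by
    ext u; simp
  rw [this, Set.ncard_coe_finset, Finset.card_erase_of_mem (Finset.mem_univ _),
    Finset.card_univ]
  simp only [Fintype.card_prod, Fintype.card_fin]
  omega

end Aux

theorem stmt_6 (m : ℕ) (hm : 2 ≤ m) (v : Fin m × Fin 2) :
    DV (matchingGraph m) v + DV (matchingGraph m)ᶜ v = (2 * m - 1) + 2 ^ (m - 1) := by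
  rw [Aux.DV_matching, Aux.DV_compl (by omega), Nat.add_comm]
end

section
/- Let G be a graph of order n ≥ 3 with maximum degree Δ(G) = n − 2. Then γ(G) = 2, DV(v) ≤ n − 1 for all vertices v, and if deg(v) = n − 2 then DV(v) = |N[w]| where w is the unique vertex not adjacent to v (and w ≠ v). -/
theorem stmt_8 {V : Type*} [Fintype V] [DecidableEq V] (G : SimpleGraph V)
    [DecidableRel G.Adj] (n : ℕ) (hn : Fintype.card V = n) (hn3 : 3 ≤ n)
    (hΔ : G.maxDegree = n - 2) :
    domNum G = 2 ∧ (∀ v : V, DV G v ≤ n - 1) ∧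
    ∀ v w : V, G.degree v = n - 2 → w ≠ v → ¬ G.Adj v w →
      DV G v = (insert w (G.neighborFinset w)).card := by
  have hNE : Nonempty V := Fintype.card_pos_iff.mp (by omega)
  -- unique non-neighbor characterization
  have hnonadj : ∀ v w : V, G.degree v = n - 2 → w ≠ v → ¬ G.Adj v w →
      ∀ x, ¬ G.Adj v x ↔ (x = v ∨ x = w) := by
    intro v w hdeg hwv hvw x
    constructor
    · intro hx
      by_contra hc
      push_neg at hc
      obtain ⟨hxv, hxw⟩ := hc
      have h1 : x ∉ G.neighborFinset v := by simp [hx]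
      have h2 : w ∉ insert x (G.neighborFinset v) := by
        simp only [Finset.mem_insert, SimpleGraph.mem_neighborFinset, not_or]
        exact ⟨fun h => hxw h.symm, hvw⟩
      have h3 : v ∉ insert w (insert x (G.neighborFinset v)) := by
        simp only [Finset.mem_insert, SimpleGraph.mem_neighborFinset, not_or]
        exact ⟨fun h => hwv h.symm, fun h => hxv h.symm, G.irrefl⟩
      have hc1 : (insert v (insert w (insert x (G.neighborFinset v)))).card = n + 1 := by
        rw [Finset.card_insert_of_notMem h3, Finset.card_insert_of_notMem h2,
          Finset.card_insert_of_notMem h1]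
        have : (G.neighborFinset v).card = n - 2 := by
          rw [G.card_neighborFinset_eq_degree]; exact hdeg
        omega
      have hle := Finset.card_le_card (Finset.subset_univ
        (insert v (insert w (insert x (G.neighborFinset v)))))
      rw [hc1, Finset.card_univ, hn] at hle
      omega
    · rintro (rfl | rfl)
      · exact G.irrefl
      · exact hvw
  -- a dominating pair exists
  obtain ⟨v0, hv0⟩ := G.exists_maximal_degree_vertex
  have hdeg0 : G.degree v0 = n - 2 := by rw [← hv0, hΔ]
  have hex : ∃ w, w ≠ v0 ∧ ¬ G.Adj v0 w := by
    by_contra h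
    push_neg at h
    have hsub : Finset.univ.erase v0 ⊆ G.neighborFinset v0 := by
      intro x hx
      rw [Finset.mem_erase] at hx
      rw [SimpleGraph.mem_neighborFinset]
      exact h x hx.1
    have hle := Finset.card_le_card hsub
    rw [Finset.card_erase_of_mem (Finset.mem_univ _), Finset.card_univ, hn,
      G.card_neighborFinset_eq_degree, hdeg0] at hle
    omega
  obtain ⟨w0, hw0v, hw0adj⟩ := hex
  -- a pair {v, u} with u in N[w] is a minimum dominating set (for deg v = n-2)
  have hpairdom : ∀ v w u : V, G.degree v = n - 2 → w ≠ v → ¬ G.Adj v w →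
      u ∈ insert w (G.neighborFinset w) → IsDomSet G {v, u} := by
    intro v w u hdeg hwv hvw hu x hx
    simp only [Finset.mem_insert, Finset.mem_singleton, not_or] at hx
    obtain ⟨hxv, hxu⟩ := hx
    by_cases hxw : x = w
    · subst hxw
      refine ⟨u, by simp, ?_⟩
      rw [Finset.mem_insert, SimpleGraph.mem_neighborFinset] at hu
      rcases hu with rfl | hu
      · exact absurd rfl hxu
      · exact hu.symm
    · refine ⟨v, by simp, ?_⟩
      by_contra hadj
      rcases (hnonadj v w hdeg hwv hvw x).mp hadj with h | h
      · exact hxv h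
      · exact hxw h
  have hdom2 : domNum G = 2 := by
    have hmem2 : (2 : ℕ) ∈ {m | ∃ D : Finset V, IsDomSet G D ∧ D.card = m} := by
      refine ⟨{v0, w0}, hpairdom v0 w0 w0 hdeg0 hw0v hw0adj (by simp), ?_⟩
      rw [Finset.card_insert_of_notMem (by simp [Ne.symm hw0v]), Finset.card_singleton]
    apply le_antisymm
    · exact Nat.sInf_le hmem2
    · apply le_csInf ⟨2, hmem2⟩
      rintro m ⟨D, hD, rfl⟩
      by_contra h
      push_neg at h
      interval_cases hDc : D.card
      · rw [Finset.card_eq_zero] at hDc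
        subst hDc
        obtain ⟨x⟩ := hNE
        obtain ⟨u, hu, -⟩ := hD x (Finset.notMem_empty x)
        exact Finset.notMem_empty u hu
      · rw [Finset.card_eq_one] at hDc
        obtain ⟨u, rfl⟩ := hDc
        have hsub : Finset.univ.erase u ⊆ G.neighborFinset u := by
          intro x hx
          rw [Finset.mem_erase] at hx
          obtain ⟨u', hu', hadj⟩ := hD x (by simp [hx.1])
          rw [Finset.mem_singleton] at hu'
          subst hu'
          rw [SimpleGraph.mem_neighborFinset]
          exact hadj
        have hle := Finset.card_le_card hsub
        rw [Finset.card_erase_of_mem (Finset.mem_univ _), Finset.card_univ, hn,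
          G.card_neighborFinset_eq_degree] at hle
        have hmax := G.degree_le_maxDegree u
        rw [hΔ] at hmax
        omega
  refine ⟨hdom2, ?_, ?_⟩
  · -- DV v ≤ n - 1
    intro v
    have hsub : {D ∈ minDomSets G | v ∈ D} ⊆
        ↑((Finset.univ.erase v).image (fun u => ({v, u} : Finset V))) := by
      rintro D ⟨⟨hDdom, hDcard⟩, hvD⟩
      rw [hdom2] at hDcard
      obtain ⟨a, b, hab, rfl⟩ := Finset.card_eq_two.mp hDcard
      simp only [Finset.coe_image, Set.mem_image, Finset.mem_coe, Finset.mem_erase]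
      rcases Finset.mem_insert.mp hvD with rfl | hvb
      · exact ⟨b, ⟨Ne.symm hab, Finset.mem_univ _⟩, rfl⟩
      · rw [Finset.mem_singleton] at hvb
        subst hvb
        exact ⟨a, ⟨hab, Finset.mem_univ _⟩, by rw [Finset.pair_comm]⟩
    calc {D ∈ minDomSets G | v ∈ D}.ncard
        ≤ ((Finset.univ.erase v).image (fun u => ({v, u} : Finset V)) : Set (Finset V)).ncard :=
          Set.ncard_le_ncard hsub (Set.toFinite _)
      _ = ((Finset.univ.erase v).image (fun u => ({v, u} : Finset V))).card :=
          Set.ncard_coe_finset _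
      _ ≤ (Finset.univ.erase v).card := Finset.card_image_le
      _ = n - 1 := by rw [Finset.card_erase_of_mem (Finset.mem_univ _), Finset.card_univ, hn]
  · -- the main count
    intro v w hdeg hwv hvw
    have hvnw : v ∉ insert w (G.neighborFinset w) := by
      simp only [Finset.mem_insert, SimpleGraph.mem_neighborFinset, not_or]
      exact ⟨Ne.symm hwv, fun h => hvw h.symm⟩
    have hseteq : {D ∈ minDomSets G | v ∈ D} =
        ↑((insert w (G.neighborFinset w)).image (fun u => ({v, u} : Finset V))) := by
      ext D
      simp only [Set.mem_setOf_eq, Finset.coe_image, Set.mem_image, Finset.mem_coe]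
      constructor
      · rintro ⟨⟨hDdom, hDcard⟩, hvD⟩
        rw [hdom2] at hDcard
        obtain ⟨a, b, hab, rfl⟩ := Finset.card_eq_two.mp hDcard
        have key : ∀ u : V, u ≠ v → ({v, u} : Finset V) = {a, b} → IsDomSet G {a, b} →
            ∃ x ∈ insert w (G.neighborFinset w), ({v, x} : Finset V) = {a, b} := by
          intro u huv hpair hdom
          refine ⟨u, ?_, hpair⟩
          by_cases hwD : w ∈ ({a, b} : Finset V)
          · rw [← hpair, Finset.mem_insert, Finset.mem_singleton] at hwD
            rcases hwD with h | h
            · exact absurd h hwv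
            · rw [← h]; exact Finset.mem_insert_self _ _
          · obtain ⟨c, hc, hadj⟩ := hdom w hwD
            rw [← hpair, Finset.mem_insert, Finset.mem_singleton] at hc
            rcases hc with rfl | rfl
            · exact absurd hadj hvw
            · rw [Finset.mem_insert, SimpleGraph.mem_neighborFinset]
              exact Or.inr hadj.symm
        rcases Finset.mem_insert.mp hvD with rfl | hvb
        · exact key b (Ne.symm hab) rfl hDdom
        · rw [Finset.mem_singleton] at hvb
          subst hvb
          exact key a hab (Finset.pair_comm v a) hDdom
      · rintro ⟨u, hu, rfl⟩
        have huv : u ≠ v := fun h => hvnw (h ▸ hu)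
        refine ⟨⟨hpairdom v w u hdeg hwv hvw hu, ?_⟩, Finset.mem_insert_self _ _⟩
        rw [hdom2, Finset.card_insert_of_notMem (by simp [Ne.symm huv]),
          Finset.card_singleton]
    show {D ∈ minDomSets G | v ∈ D}.ncard = _
    rw [hseteq, Set.ncard_coe_finset]
    apply Finset.card_image_of_injOn
    intro u1 hu1 u2 hu2 heq
    have h1 : u1 ≠ v := fun h => hvnw (h ▸ hu1)
    have heq' : ({v, u1} : Finset V) = {v, u2} := heq
    have hmem : u2 ∈ ({v, u1} : Finset V) := by
      rw [heq']; exact Finset.mem_insert_of_mem (Finset.mem_singleton_self _)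
    rcases Finset.mem_insert.mp hmem with h | h
    · exact absurd h (fun hh => hvnw (hh ▸ hu2))
    · exact (Finset.mem_singleton.mp h).symm
end

section
/- For the cycle C_n with n ≥ 3: τ(C_n) = 3 if n ≡ 0 (mod 3); τ(C_n) = n(1 + ⌊n/3⌋/2) if n ≡ 1 (mod 3); and τ(C_n) = n if n ≡ 2 (mod 3). -/
open Finset
open scoped Fin.NatCast Fin.CommRing

namespace Stmt13Aux

variable {m : ℕ}

abbrev F (m : ℕ) := Fin (m+3)

def Dom (D : Finset (F m)) : Prop := ∀ v : F m, v ∈ D ∨ v + 1 ∈ D ∨ v - 1 ∈ D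

lemma isDomSet_iff (D : Finset (F m)) :
    IsDomSet (SimpleGraph.cycleGraph (m+3)) D ↔ Dom D := by
  constructor
  · intro h v
    by_cases hv : v ∈ D
    · exact Or.inl hv
    · obtain ⟨u, hu, hadj⟩ := h v hv
      rw [SimpleGraph.cycleGraph_adj (n := m+1)] at hadj
      rcases hadj with h1 | h1
      · refine Or.inr (Or.inl ?_)
        have : u = v + 1 := by linear_combination h1
        rwa [← this]
      · refine Or.inr (Or.inr ?_)
        have : u = v - 1 := by linear_combination -h1
        rwa [← this]
  · intro h v hv
    rcases h v with h1 | h1 | h1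
    · exact absurd h1 hv
    · exact ⟨v + 1, h1, by rw [SimpleGraph.cycleGraph_adj (n := m+1)]; left; ring⟩
    · exact ⟨v - 1, h1, by rw [SimpleGraph.cycleGraph_adj (n := m+1)]; right; rw [sub_sub_cancel]⟩

lemma gap_exists (D : Finset (F m)) {d : F m} (hd : d ∈ D) :
    ∃ g, 0 < g ∧ d + ((g:ℕ) : F m) ∈ D := ⟨m+3, by omega, by simpa using hd⟩

open Classical in
noncomputable def gap (D : Finset (F m)) (d : F m) : ℕ :=
  if h : ∃ g, 0 < g ∧ d + ((g:ℕ) : F m) ∈ D then Nat.find h else 0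

lemma gap_eq_find {D : Finset (F m)} {d : F m} (hd : d ∈ D) :
    gap D d = Nat.find (p := fun g => 0 < g ∧ d + ((g:ℕ) : F m) ∈ D) (gap_exists D hd) := by
  rw [gap]
  exact dif_pos (gap_exists D hd)

variable {D : Finset (F m)} {d d' : F m}

lemma gap_pos (hd : d ∈ D) : 0 < gap D d := by
  rw [gap_eq_find hd]; exact (Nat.find_spec (gap_exists D hd)).1

lemma gap_mem (hd : d ∈ D) : d + ((gap D d : ℕ) : F m) ∈ D := by
  rw [gap_eq_find hd]; exact (Nat.find_spec (gap_exists D hd)).2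

lemma gap_le (hd : d ∈ D) : gap D d ≤ m + 3 := by
  rw [gap_eq_find hd]
  exact Nat.find_le ⟨by omega, by simpa using hd⟩

lemma gap_min (hd : d ∈ D) {i : ℕ} (h1 : 0 < i) (h2 : i < gap D d) :
    d + ((i:ℕ) : F m) ∉ D := by
  rw [gap_eq_find hd] at h2
  have := Nat.find_min (gap_exists D hd) h2
  tauto

lemma chain_inj_aux (hd : d ∈ D) (hd' : d' ∈ D) {j j' : ℕ}
    (hj : j < gap D d) (hle : j' ≤ j)
    (he : d + ((j:ℕ) : F m) = d' + ((j':ℕ) : F m)) : d = d' ∧ j = j' := by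
  have hdd : d + ((j - j' : ℕ) : F m) = d' := by
    push_cast [hle]
    linear_combination he
  rcases Nat.eq_or_lt_of_le hle with rfl | hlt
  · constructor
    · simpa using hdd
    · rfl
  · exfalso
    exact gap_min hd (by omega) (by omega) (hdd ▸ hd')

lemma chain_inj (hd : d ∈ D) (hd' : d' ∈ D) {j j' : ℕ}
    (hj : j < gap D d) (hj' : j' < gap D d')
    (he : d + ((j:ℕ) : F m) = d' + ((j':ℕ) : F m)) : d = d' ∧ j = j' := by
  rcases le_total j' j with h | h
  · exact chain_inj_aux hd hd' hj h he
  · obtain ⟨h1, h2⟩ := chain_inj_aux hd' hd hj' h he.symm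
    exact ⟨h1.symm, h2.symm⟩

lemma cover (hD : D.Nonempty) (v : F m) :
    ∃ d ∈ D, ∃ j < gap D d, v = d + ((j:ℕ) : F m) := by
  obtain ⟨d₀, hd₀⟩ := hD
  have hex : ∃ j : ℕ, v - ((j:ℕ) : F m) ∈ D :=
    ⟨(v - d₀).val, by simpa [Fin.cast_val_eq_self] using hd₀⟩
  set j := Nat.find hex with hjdef
  have hjD : v - ((j:ℕ) : F m) ∈ D := Nat.find_spec hex
  refine ⟨v - ((j:ℕ) : F m), hjD, j, ?_, by ring⟩
  by_contra hle
  push_neg at hle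
  have hgp := gap_pos hjD
  have hg := gap_mem hjD
  have hkey : v - (((j - gap D (v - ((j:ℕ):F m)) : ℕ)) : F m) ∈ D := by
    have : v - (((j - gap D (v - ((j:ℕ):F m)) : ℕ)) : F m)
        = v - ((j:ℕ):F m) + ((gap D (v - ((j:ℕ):F m)) : ℕ) : F m) := by
      push_cast [hle]
      ring
    rw [this]; exact hg
  exact Nat.find_min hex (by omega) hkey

lemma sum_gap (hD : D.Nonempty) : ∑ d ∈ D, gap D d = m + 3 := by
  classical
  have hun : (Finset.univ : Finset (F m))
      = D.biUnion (fun d => (range (gap D d)).image (fun j => d + ((j:ℕ) : F m))) := by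
    ext v
    simp only [mem_univ, true_iff, mem_biUnion, mem_image, mem_range]
    obtain ⟨d, hd, j, hj, hv⟩ := cover hD v
    exact ⟨d, hd, j, hj, hv.symm⟩
  have hcard := congrArg Finset.card hun
  rw [Finset.card_univ, Fintype.card_fin, Finset.card_biUnion] at hcard
  · rw [hcard]
    apply Finset.sum_congr rfl
    intro d hd
    rw [Finset.card_image_of_injOn, Finset.card_range]
    intro j hj j' hj' he
    simp only [coe_range, Set.mem_Iio] at hj hj'
    exact (chain_inj hd hd hj hj' he).2
  · intro a ha b hb hab
    simp only [Finset.disjoint_left, mem_image, mem_range]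
    rintro x ⟨j, hj, rfl⟩ ⟨j', hj', he⟩
    exact hab (chain_inj ha hb hj hj' he.symm).1

lemma Dom.nonempty (h : Dom D) : D.Nonempty := by
  rcases h 0 with h1 | h1 | h1 <;> exact ⟨_, h1⟩

lemma Dom.gap_le_three (h : Dom D) (hd : d ∈ D) : gap D d ≤ 3 := by
  by_contra hg
  push_neg at hg
  have h1 : d + ((1:ℕ) : F m) ∉ D := gap_min hd (by omega) (by omega)
  have h2 : d + ((2:ℕ) : F m) ∉ D := gap_min hd (by omega) (by omega)
  have h3 : d + ((3:ℕ) : F m) ∉ D := gap_min hd (by omega) (by omega)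
  rcases h (d + ((2:ℕ) : F m)) with hh | hh | hh
  · exact h2 hh
  · apply h3; convert hh using 1; push_cast; ring
  · apply h1; convert hh using 1; push_cast; ring

lemma Dom.card_bound (h : Dom D) : m + 3 ≤ 3 * D.card := by
  have := sum_gap h.nonempty
  calc m + 3 = ∑ d ∈ D, gap D d := this.symm
    _ ≤ ∑ _d ∈ D, 3 := Finset.sum_le_sum (fun d hd => h.gap_le_three hd)
    _ = 3 * D.card := by rw [Finset.sum_const, smul_eq_mul, mul_comm]

lemma domNum_eq {c : ℕ} (E : Finset (F m)) (hE : Dom E) (hcard : E.card = c)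
    (hlb : ∀ D : Finset (F m), Dom D → c ≤ D.card) :
    domNum (SimpleGraph.cycleGraph (m+3)) = c := by
  apply le_antisymm
  · exact Nat.sInf_le ⟨E, (isDomSet_iff E).mpr hE, hcard⟩
  · have hne : {k | ∃ D : Finset (F m), IsDomSet (SimpleGraph.cycleGraph (m+3)) D ∧ D.card = k}.Nonempty :=
      ⟨c, E, (isDomSet_iff E).mpr hE, hcard⟩
    obtain ⟨D, hD, hc⟩ := Nat.sInf_mem hne
    rw [domNum, ← hc]
    exact hlb D ((isDomSet_iff D).mp hD)

lemma mem_minDomSets_iff {c : ℕ} (hγ : domNum (SimpleGraph.cycleGraph (m+3)) = c)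
    (D : Finset (F m)) :
    D ∈ minDomSets (SimpleGraph.cycleGraph (m+3)) ↔ Dom D ∧ D.card = c := by
  rw [minDomSets, Set.mem_setOf_eq, isDomSet_iff, hγ]


/-! ### chainSet infrastructure -/

lemma cast_eq_iff {u v : ℕ} : ((u : F m) = (v : F m)) ↔ u % (m+3) = v % (m+3) := by
  rw [Fin.ext_iff, Fin.val_natCast, Fin.val_natCast]

lemma cast_add_n (u : ℕ) : ((u + (m+3) : ℕ) : F m) = (u : F m) := by
  rw [Nat.cast_add, Fin.natCast_self, add_zero]

lemma cast_add_mul (u c : ℕ) : ((u + c*(m+3) : ℕ) : F m) = (u : F m) := by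
  rw [Nat.cast_add, Nat.cast_mul, Fin.natCast_self, mul_zero, add_zero]

def chainSet (a : F m) (c : ℕ) (e : ℕ → ℕ) : Finset (F m) :=
  (range c).image fun t => a + ((e t : ℕ) : F m)

lemma mem_chainSet {a : F m} {c : ℕ} {e : ℕ → ℕ} {x : F m} :
    x ∈ chainSet a c e ↔ ∃ t < c, x = a + ((e t : ℕ) : F m) := by
  simp only [chainSet, mem_image, mem_range]
  constructor
  · rintro ⟨t, ht, rfl⟩; exact ⟨t, ht, rfl⟩
  · rintro ⟨t, ht, rfl⟩; exact ⟨t, ht, rfl⟩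

lemma mem_chainSet_of {a : F m} {c : ℕ} {e : ℕ → ℕ} {u : ℕ} (t : ℕ) (ht : t < c)
    (h : e t = u ∨ e t = u + (m+3) ∨ u = e t + (m+3)) :
    a + ((u : ℕ) : F m) ∈ chainSet a c e := by
  refine mem_chainSet.mpr ⟨t, ht, ?_⟩
  rcases h with h | h | h
  · rw [h]
  · rw [h, cast_add_n]
  · rw [h, cast_add_n]

lemma shift1 (a : F m) (u : ℕ) : a + ((u : ℕ) : F m) + 1 = a + ((u+1 : ℕ) : F m) := by
  push_cast; ring

lemma shift1' (a : F m) {u : ℕ} (h : 1 ≤ u) :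
    a + ((u : ℕ) : F m) - 1 = a + ((u-1 : ℕ) : F m) := by
  push_cast [h]; ring

lemma shift2' (a : F m) {u : ℕ} (h : 2 ≤ u) :
    a + ((u : ℕ) : F m) - ((2:ℕ) : F m) = a + ((u-2 : ℕ) : F m) := by
  push_cast [h]; ring

lemma card_chainSet {a : F m} {c : ℕ} {e : ℕ → ℕ}
    (hinj : ∀ t < c, ∀ t' < c, e t % (m+3) = e t' % (m+3) → t = t') :
    (chainSet a c e).card = c := by
  rw [chainSet, Finset.card_image_of_injOn, card_range]
  intro t ht t' ht' h
  simp only [coe_range, Set.mem_Iio] at ht ht'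
  rw [add_right_inj, cast_eq_iff] at h
  exact hinj t ht t' ht' h

lemma decomp (a v : F m) : v = a + (((v - a).val : ℕ) : F m) := by
  simp [Fin.cast_val_eq_self]

/-! ### slack lemmas -/

variable {D : Finset (F m)}

lemma slack_sum (h : Dom D) : (∑ d ∈ D, (3 - gap D d)) + (m + 3) = 3 * D.card := by
  have hpt : ∀ d ∈ D, (3 - gap D d) + gap D d = 3 := fun d hd => by
    have := h.gap_le_three hd; omega
  have h1 : ∑ d ∈ D, ((3 - gap D d) + gap D d) = 3 * D.card := by
    rw [Finset.sum_congr rfl hpt, Finset.sum_const, smul_eq_mul, mul_comm]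
  rw [Finset.sum_add_distrib, sum_gap h.nonempty] at h1
  omega

lemma exists_of_sum_eq_one {α : Type*} [DecidableEq α] {s : Finset α} {f : α → ℕ}
    (h : ∑ x ∈ s, f x = 1) :
    ∃ a ∈ s, f a = 1 ∧ ∀ b ∈ s, b ≠ a → f b = 0 := by
  have hne : ∃ a ∈ s, f a ≠ 0 := Finset.exists_ne_zero_of_sum_ne_zero (by omega)
  obtain ⟨a, ha, hfa⟩ := hne
  have he := Finset.add_sum_erase s f ha
  rw [h] at he
  have h0 : ∑ x ∈ s.erase a, f x = 0 := by omega
  refine ⟨a, ha, by omega, fun b hb hba => ?_⟩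
  exact (Finset.sum_eq_zero_iff).mp h0 b (Finset.mem_erase.mpr ⟨hba, hb⟩)

lemma exists_of_sum_eq_two {α : Type*} [DecidableEq α] {s : Finset α} {f : α → ℕ}
    (h : ∑ x ∈ s, f x = 2) :
    (∃ a ∈ s, f a = 2 ∧ ∀ b ∈ s, b ≠ a → f b = 0) ∨
    (∃ a ∈ s, ∃ b ∈ s, a ≠ b ∧ f a = 1 ∧ f b = 1 ∧
      ∀ c ∈ s, c ≠ a → c ≠ b → f c = 0) := by
  have hne : ∃ a ∈ s, f a ≠ 0 := Finset.exists_ne_zero_of_sum_ne_zero (by omega)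
  obtain ⟨a, ha, hfa⟩ := hne
  have he := Finset.add_sum_erase s f ha
  rw [h] at he
  by_cases h2 : f a = 2
  · left
    have h0 : ∑ x ∈ s.erase a, f x = 0 := by omega
    exact ⟨a, ha, h2, fun b hb hba =>
      (Finset.sum_eq_zero_iff).mp h0 b (Finset.mem_erase.mpr ⟨hba, hb⟩)⟩
  · right
    have hfa1 : f a = 1 := by omega
    have h1 : ∑ x ∈ s.erase a, f x = 1 := by omega
    obtain ⟨b, hb, hfb, hrest⟩ := exists_of_sum_eq_one h1
    have hbs := (Finset.mem_erase.mp hb).2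
    have hba := (Finset.mem_erase.mp hb).1
    refine ⟨a, ha, b, hbs, hba.symm.symm.symm, hfa1, hfb, fun c hc hca hcb => ?_⟩
    exact hrest c (Finset.mem_erase.mpr ⟨hca, hc⟩) hcb

/-! ### Case n ≡ 0 mod 3 -/

section Case0
variable {k : ℕ}

def e0 : ℕ → ℕ := fun t => 3*t

lemma card_S0 (hk : m+3 = 3*k) (a : F m) : (chainSet a k e0).card = k := by
  apply card_chainSet
  intro t ht t' ht' h
  rw [Nat.mod_eq_of_lt (by simp only [e0]; omega),
      Nat.mod_eq_of_lt (by simp only [e0]; omega)] at h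
  simp only [e0] at h; omega

lemma dom_S0 (hk : m+3 = 3*k) (a : F m) : Dom (chainSet a k e0) := by
  intro v
  have hv := decomp a v
  set w := (v - a).val with hwdef
  have hw : w < m + 3 := (v - a).isLt
  have h3 : w % 3 = 0 ∨ w % 3 = 1 ∨ w % 3 = 2 := by omega
  rcases h3 with h3 | h3 | h3
  · left; rw [hv]
    exact mem_chainSet_of (w/3) (by omega) (by simp only [e0]; first | tauto | omega)
  · right; right; rw [hv, shift1' a (show 1 ≤ w by omega)]
    exact mem_chainSet_of ((w-1)/3) (by omega) (by simp only [e0]; first | tauto | omega)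
  · right; left; rw [hv, shift1 a w]
    by_cases hwn : w + 1 < m + 3
    · exact mem_chainSet_of ((w+1)/3) (by omega) (by simp only [e0]; first | tauto | omega)
    · exact mem_chainSet_of 0 (by omega) (by simp only [e0]; first | tauto | omega)

lemma class0 (hk : m+3 = 3*k) (h : Dom D) (hc : D.card = k) :
    ∃ r : ℕ, r < 3 ∧ D = chainSet ((r : ℕ) : F m) k e0 := by
  have hg3 : ∀ d ∈ D, gap D d = 3 := by
    intro d hd
    by_contra hne
    have h2 := h.gap_le_three hd
    have hlt : ∑ d ∈ D, gap D d < ∑ _d ∈ D, 3 :=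
      Finset.sum_lt_sum (fun i hi => h.gap_le_three hi) ⟨d, hd, by omega⟩
    rw [sum_gap h.nonempty, Finset.sum_const, smul_eq_mul, hc] at hlt
    omega
  obtain ⟨d₀, hd₀⟩ := h.nonempty
  have hchain : ∀ t : ℕ, d₀ + ((3*t : ℕ) : F m) ∈ D := by
    intro t
    induction t with
    | zero => simpa using hd₀
    | succ t ih =>
      have hm := gap_mem ih
      rw [hg3 _ ih] at hm
      have : d₀ + ((3*(t+1) : ℕ) : F m) = d₀ + ((3*t : ℕ) : F m) + ((3:ℕ) : F m) := by
        push_cast; ring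
      rw [this]; exact hm
  have hsub : chainSet d₀ k e0 ⊆ D := by
    intro x hx
    obtain ⟨t, ht, rfl⟩ := mem_chainSet.mp hx
    exact hchain t
  have hkpos : 0 < k := by omega
  have hqlt : d₀.val / 3 < k := by have := d₀.isLt; omega
  have heq : D = chainSet d₀ k e0 :=
    (Finset.eq_of_subset_of_card_le hsub (by rw [card_S0 hk, hc])).symm
  refine ⟨d₀.val % 3, by omega, ?_⟩
  rw [heq]
  set r := d₀.val % 3 with hr
  set q := d₀.val / 3 with hq
  have hsub2 : chainSet d₀ k e0 ⊆ chainSet ((r : ℕ) : F m) k e0 := by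
    intro x hx
    obtain ⟨t, ht, rfl⟩ := mem_chainSet.mp hx
    have hx2 : d₀ + ((e0 t : ℕ) : F m) = ((r:ℕ) : F m) + ((r + 3*(q+t) - r : ℕ) : F m) := by
      conv_lhs => rw [← Fin.cast_val_eq_self d₀]
      rw [← Nat.cast_add, ← Nat.cast_add]
      congr 1
      simp only [e0]; omega
    rw [hx2]
    apply mem_chainSet_of ((q+t) % k)
    · exact Nat.mod_lt _ hkpos
    · simp only [e0]
      have hd1 : (q+t) % k = q + t ∨ (q+t) % k + k = q + t := by
        rcases Nat.lt_or_ge (q+t) k with hlt | hge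
        · left; exact Nat.mod_eq_of_lt hlt
        · right
          have : (q+t) - k < k := by omega
          have := Nat.mod_eq_sub_mod hge
          rw [this, Nat.mod_eq_of_lt ‹(q+t) - k < k›]
          omega
      rcases hd1 with hd1 | hd1
      · left; omega
      · right; right; omega
  exact Finset.eq_of_subset_of_card_le hsub2 (by rw [card_S0 hk, card_S0 hk])

lemma domNum0 (hk : m+3 = 3*k) :
    domNum (SimpleGraph.cycleGraph (m+3)) = k := by
  apply domNum_eq (chainSet (0 : F m) k e0) (dom_S0 hk 0) (card_S0 hk 0)
  intro D hD
  have := hD.card_bound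
  omega

lemma notmem_S0 {r u : ℕ} (hk : m+3 = 3*k) (hr : r < 3) (hu : u < 3) (hne : u ≠ r)
    (h : ((u:ℕ) : F m) ∈ chainSet ((r : ℕ) : F m) k e0) : False := by
  obtain ⟨t, ht, hx⟩ := mem_chainSet.mp h
  rw [← Nat.cast_add, cast_eq_iff] at hx
  rw [Nat.mod_eq_of_lt (by omega), Nat.mod_eq_of_lt (by simp only [e0]; omega)] at hx
  simp only [e0] at hx
  omega

lemma tau0 (hk : m+3 = 3*k) : tau (SimpleGraph.cycleGraph (m+3)) = 3 := by
  have hkpos : 0 < k := by omega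
  have hmem : ∀ r : ℕ, ((r:ℕ) : F m) ∈ chainSet ((r : ℕ) : F m) k e0 := by
    intro r
    exact mem_chainSet.mpr ⟨0, hkpos, by simp [e0]⟩
  have hset : minDomSets (SimpleGraph.cycleGraph (m+3)) =
      {chainSet ((0:ℕ) : F m) k e0, chainSet ((1:ℕ) : F m) k e0, chainSet ((2:ℕ) : F m) k e0} := by
    ext D
    rw [mem_minDomSets_iff (domNum0 hk)]
    constructor
    · rintro ⟨hD, hc⟩
      obtain ⟨r, hr, rfl⟩ := class0 hk hD hc
      interval_cases r
      · exact Set.mem_insert _ _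
      · exact Set.mem_insert_of_mem _ (Set.mem_insert _ _)
      · exact Set.mem_insert_of_mem _ (Set.mem_insert_of_mem _ rfl)
    · intro hD
      rcases hD with rfl | rfl | rfl
      · exact ⟨dom_S0 hk _, card_S0 hk _⟩
      · exact ⟨dom_S0 hk _, card_S0 hk _⟩
      · exact ⟨dom_S0 hk _, card_S0 hk _⟩
  rw [tau, hset]
  rw [Set.ncard_eq_three]
  refine ⟨_, _, _, ?_, ?_, ?_, rfl⟩
  · intro hcon; exact notmem_S0 hk (by omega) (by omega) (by omega) (hcon ▸ hmem 0)
  · intro hcon; exact notmem_S0 hk (by omega) (by omega) (by omega) (hcon ▸ hmem 0)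
  · intro hcon; exact notmem_S0 hk (by omega) (by omega) (by omega) (hcon ▸ hmem 1)

end Case0

/-! ### more helpers -/

lemma mod_inj_helper {u v : ℕ} (hu : u ≤ m+3) (hv : v ≤ m+3) (h : u % (m+3) = v % (m+3)) :
    u = v ∨ (u = m+3 ∧ v = 0) ∨ (u = 0 ∧ v = m+3) := by
  rcases eq_or_lt_of_le hu with rfl | hu'
  · rcases eq_or_lt_of_le hv with rfl | hv'
    · left; rfl
    · rw [Nat.mod_self, Nat.mod_eq_of_lt hv'] at h; omega
  · rcases eq_or_lt_of_le hv with rfl | hv'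
    · rw [Nat.mod_self, Nat.mod_eq_of_lt hu'] at h; omega
    · rw [Nat.mod_eq_of_lt hu', Nat.mod_eq_of_lt hv'] at h; omega

lemma add_cast_ne (a : F m) {u : ℕ} (h0 : 0 < u) (hlt : u < m+3) :
    a + ((u:ℕ) : F m) ≠ a := by
  intro hcon
  have h1 : ((u:ℕ) : F m) = ((0:ℕ) : F m) := by
    have := add_eq_left.mp hcon
    simpa using this
  rw [cast_eq_iff, Nat.mod_eq_of_lt hlt, Nat.zero_mod] at h1
  omega

lemma chain_eq_cast {a : F m} {u v : ℕ} (h : u = v) :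
    a + ((u:ℕ) : F m) = a + ((v:ℕ) : F m) := by rw [h]

/-! ### Case n ≡ 2 mod 3 -/

section Case2
variable {k : ℕ}

def e2 : ℕ → ℕ := fun t => 3*t + 2

lemma card_S2 (hk : m+3 = 3*k+2) (a : F m) : (chainSet a (k+1) e2).card = k+1 := by
  apply card_chainSet
  intro t ht t' ht' h
  simp only [e2] at h
  rcases mod_inj_helper (show 3*t+2 ≤ m+3 by omega) (show 3*t'+2 ≤ m+3 by omega) h
    with h1 | h1 | h1 <;> omega

lemma dom_S2 (hk : m+3 = 3*k+2) (a : F m) : Dom (chainSet a (k+1) e2) := by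
  intro v
  have hv := decomp a v
  set w := (v - a).val with hwdef
  have hw : w < m + 3 := (v - a).isLt
  have h3 : w % 3 = 0 ∨ w % 3 = 1 ∨ w % 3 = 2 := by omega
  rcases h3 with h3 | h3 | h3
  · by_cases hw0 : w = 0
    · left; rw [hv]
      exact mem_chainSet_of k (by omega) (by simp only [e2]; first | tauto | omega)
    · right; right; rw [hv, shift1' a (show 1 ≤ w by omega)]
      exact mem_chainSet_of ((w-1)/3) (by omega) (by simp only [e2]; first | tauto | omega)
  · right; left; rw [hv, shift1 a w]
    exact mem_chainSet_of (w/3) (by omega) (by simp only [e2]; first | tauto | omega)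
  · left; rw [hv]
    exact mem_chainSet_of (w/3) (by omega) (by simp only [e2]; first | tauto | omega)

lemma class2 (hk : m+3 = 3*k+2) (h : Dom D) (hc : D.card = k+1) :
    ∃ a : F m, D = chainSet a (k+1) e2 := by
  have hs := slack_sum h
  rw [hc] at hs
  have hs1 : ∑ d ∈ D, (3 - gap D d) = 1 := by omega
  obtain ⟨a, ha, hfa, hrest⟩ := exists_of_sum_eq_one hs1
  have hga : gap D a = 2 := by
    have h1 := gap_pos ha; have h2 := h.gap_le_three ha; omega
  have hg3 : ∀ b ∈ D, b ≠ a → gap D b = 3 := by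
    intro b hb hba
    have h1 := gap_pos hb; have h2 := h.gap_le_three hb
    have := hrest b hb hba; omega
  have hchain : ∀ t : ℕ, t ≤ k → a + ((e2 t : ℕ) : F m) ∈ D := by
    intro t
    induction t with
    | zero =>
      intro _
      have := gap_mem ha
      rw [hga] at this
      simpa only [e2] using this
    | succ t ih =>
      intro htk
      have hx := ih (by omega)
      have hxa : a + ((e2 t : ℕ) : F m) ≠ a :=
        add_cast_ne a (by simp only [e2]; first | tauto | omega) (by simp only [e2]; first | tauto | omega)
      have hgx := hg3 _ hx hxa
      have hm := gap_mem hx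
      rw [hgx] at hm
      have : a + ((e2 (t+1) : ℕ) : F m) = a + ((e2 t : ℕ) : F m) + ((3:ℕ) : F m) := by
        simp only [e2]; push_cast; ring
      rw [this]; exact hm
  have hsub : chainSet a (k+1) e2 ⊆ D := by
    intro x hx
    obtain ⟨t, ht, rfl⟩ := mem_chainSet.mp hx
    exact hchain t (by omega)
  exact ⟨a, (Finset.eq_of_subset_of_card_le hsub (by rw [card_S2 hk, hc])).symm⟩

lemma uniq2 (hk : m+3 = 3*k+2) {a a' : F m}
    (h : chainSet a (k+1) e2 = chainSet a' (k+1) e2) : a = a' := by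
  have claim : ∀ x, x ∈ chainSet a (k+1) e2 → x - ((2:ℕ) : F m) ∈ chainSet a (k+1) e2 →
      x = a + ((2:ℕ) : F m) := by
    intro x hx hx2
    obtain ⟨t, ht, rfl⟩ := mem_chainSet.mp hx
    rw [shift2' a (by simp only [e2]; first | tauto | omega)] at hx2
    obtain ⟨t', ht', he⟩ := mem_chainSet.mp hx2
    rw [add_right_inj, cast_eq_iff] at he
    rcases mod_inj_helper (by simp only [e2]; first | tauto | omega) (by simp only [e2]; first | tauto | omega) he
      with h1 | h1 | h1
    · simp only [e2] at h1; omega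
    · simp only [e2] at h1; omega
    · simp only [e2] at h1 ⊢
      apply chain_eq_cast; omega
  have h1 : a' + ((2:ℕ) : F m) ∈ chainSet a (k+1) e2 := by
    rw [h]
    exact mem_chainSet_of 0 (by omega) (by simp only [e2]; first | tauto | omega)
  have h2 : a' + ((2:ℕ) : F m) - ((2:ℕ) : F m) ∈ chainSet a (k+1) e2 := by
    rw [h, shift2' a' (le_refl 2)]
    exact mem_chainSet_of k (by omega) (by simp only [e2]; first | tauto | omega)
  have := claim _ h1 h2
  exact (add_right_cancel this).symm

lemma domNum2 (hk : m+3 = 3*k+2) :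
    domNum (SimpleGraph.cycleGraph (m+3)) = k+1 := by
  apply domNum_eq (chainSet (0 : F m) (k+1) e2) (dom_S2 hk 0) (card_S2 hk 0)
  intro D hD
  have := hD.card_bound
  omega

lemma tau2 (hk : m+3 = 3*k+2) : tau (SimpleGraph.cycleGraph (m+3)) = m+3 := by
  have hset : minDomSets (SimpleGraph.cycleGraph (m+3)) =
      ↑((Finset.univ : Finset (F m)).image (fun a => chainSet a (k+1) e2)) := by
    ext D
    rw [mem_minDomSets_iff (domNum2 hk)]
    constructor
    · rintro ⟨hD, hc⟩
      obtain ⟨a, rfl⟩ := class2 hk hD hc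
      exact Finset.mem_coe.mpr (Finset.mem_image.mpr ⟨a, Finset.mem_univ a, rfl⟩)
    · intro hD
      obtain ⟨a, _, rfl⟩ := Finset.mem_image.mp (Finset.mem_coe.mp hD)
      exact ⟨dom_S2 hk a, card_S2 hk a⟩
  rw [tau, hset, Set.ncard_coe_finset,
    Finset.card_image_of_injective _ (fun a a' hh => uniq2 hk hh), card_univ, Fintype.card_fin]

end Case2

/-! ### Case n ≡ 1 mod 3 -/

section Case1
variable {k j : ℕ}

def eA : ℕ → ℕ := fun t => 3*t + 1

def eB (j : ℕ) : ℕ → ℕ := fun t => if t ≤ j then 3*t + 2 else 3*t + 1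

lemma eq_n_of_mod {u : ℕ} (h : u % (m+3) = 0) (h1 : 0 < u) (h2 : u < 2*(m+3)) :
    u = m+3 := by
  obtain ⟨c, hc⟩ := Nat.dvd_of_mod_eq_zero h
  match c with
  | 0 => omega
  | 1 => omega
  | (c+2) =>
    have h3 : (m+3) * 2 ≤ (m+3) * (c+2) := Nat.mul_le_mul_left _ (by omega)
    omega

lemma shift2'' (a : F m) (u : ℕ) :
    a + ((u : ℕ) : F m) - ((2:ℕ) : F m) = a + ((u + (m+3) - 2 : ℕ) : F m) := by
  conv_lhs => rw [← cast_add_n u]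
  rw [shift2' a (by omega)]

lemma cast_zero_helper {u : ℕ} (h : ((u : ℕ) : F m) = 0) : u % (m+3) = 0 := by
  have h2 : ((u : ℕ) : F m) = ((0 : ℕ) : F m) := by simpa using h
  rw [cast_eq_iff] at h2
  simpa using h2

lemma card_SA (hk : m+3 = 3*k+1) (a : F m) : (chainSet a (k+1) eA).card = k+1 := by
  apply card_chainSet
  intro t ht t' ht' h
  simp only [eA] at h
  rcases mod_inj_helper (show 3*t+1 ≤ m+3 by omega) (show 3*t'+1 ≤ m+3 by omega) h
    with h1 | h1 | h1 <;> omega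

lemma card_SB (hk : m+3 = 3*k+1) (hj : j < k) (a : F m) :
    (chainSet a (k+1) (eB j)).card = k+1 := by
  apply card_chainSet
  intro t ht t' ht' h
  have hv1 : (t ≤ j ∧ eB j t = 3*t+2) ∨ (j < t ∧ eB j t = 3*t+1) := by
    simp only [eB]; split_ifs <;> omega
  have hv2 : (t' ≤ j ∧ eB j t' = 3*t'+2) ∨ (j < t' ∧ eB j t' = 3*t'+1) := by
    simp only [eB]; split_ifs <;> omega
  rcases hv1 with ⟨hc1, e1⟩ | ⟨hc1, e1⟩ <;> rcases hv2 with ⟨hc2, e2⟩ | ⟨hc2, e2⟩ <;>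
    rcases mod_inj_helper (u := eB j t) (v := eB j t') (by rw [e1]; omega)
      (by rw [e2]; omega) h with h1 | h1 | h1 <;>
    rw [e1, e2] at h1 <;> omega

lemma dom_SA (hk : m+3 = 3*k+1) (a : F m) : Dom (chainSet a (k+1) eA) := by
  intro v
  have hv := decomp a v
  set w := (v - a).val with hwdef
  have hw : w < m + 3 := (v - a).isLt
  have h3 : w % 3 = 0 ∨ w % 3 = 1 ∨ w % 3 = 2 := by omega
  rcases h3 with h3 | h3 | h3
  · right; left; rw [hv, shift1 a w]
    exact mem_chainSet_of (w/3) (by omega) (by simp only [eA]; first | tauto | omega)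
  · left; rw [hv]
    exact mem_chainSet_of (w/3) (by omega) (by simp only [eA]; first | tauto | omega)
  · right; right; rw [hv, shift1' a (show 1 ≤ w by omega)]
    exact mem_chainSet_of ((w-1)/3) (by omega) (by simp only [eA]; first | tauto | omega)

lemma dom_SB (hk : m+3 = 3*k+1) (hj : j < k) (a : F m) :
    Dom (chainSet a (k+1) (eB j)) := by
  intro v
  have hv := decomp a v
  set w := (v - a).val with hwdef
  have hw : w < m + 3 := (v - a).isLt
  have h3 : w % 3 = 0 ∨ w % 3 = 1 ∨ w % 3 = 2 := by omega
  rcases h3 with h3 | h3 | h3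
  · by_cases hw0 : w = 0
    · left; rw [hv]
      exact mem_chainSet_of k (by omega) (by simp only [eB]; split_ifs <;> omega)
    · by_cases hsj : w/3 ≤ j + 1
      · right; right; rw [hv, shift1' a (show 1 ≤ w by omega)]
        exact mem_chainSet_of (w/3 - 1) (by omega) (by simp only [eB]; split_ifs <;> omega)
      · right; left; rw [hv, shift1 a w]
        exact mem_chainSet_of (w/3) (by omega) (by simp only [eB]; split_ifs <;> omega)
  · by_cases hsj : j < w/3
    · left; rw [hv]
      exact mem_chainSet_of (w/3) (by omega) (by simp only [eB]; split_ifs <;> omega)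
    · right; left; rw [hv, shift1 a w]
      exact mem_chainSet_of (w/3) (by omega) (by simp only [eB]; split_ifs <;> omega)
  · by_cases hsj : w/3 ≤ j
    · left; rw [hv]
      exact mem_chainSet_of (w/3) (by omega) (by simp only [eB]; split_ifs <;> omega)
    · right; right; rw [hv, shift1' a (show 1 ≤ w by omega)]
      exact mem_chainSet_of (w/3) (by omega) (by simp only [eB]; split_ifs <;> omega)

lemma chainCH (hk : m+3 = 3*k+1) {p q : F m} (hp : p ∈ D) (hgp : gap D p = 2)
    (hg3 : ∀ c ∈ D, c ≠ p → c ≠ q → gap D c = 3) :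
    ∀ t : ℕ, t ≤ k → (∀ t' < t, p + ((3*t'+2 : ℕ) : F m) ≠ q) →
      p + ((3*t+2 : ℕ) : F m) ∈ D := by
  intro t
  induction t with
  | zero =>
    intro _ _
    have hm := gap_mem hp
    rw [hgp] at hm
    simpa using hm
  | succ t ih =>
    intro htk hne
    have hx : p + ((3*t+2 : ℕ) : F m) ∈ D := ih (by omega) (fun t' ht' => hne t' (by omega))
    have hxp : p + ((3*t+2 : ℕ) : F m) ≠ p := add_cast_ne p (by omega) (by omega)
    have hxq : p + ((3*t+2 : ℕ) : F m) ≠ q := hne t (by omega)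
    have hgx := hg3 _ hx hxp hxq
    have hm := gap_mem hx
    rw [hgx] at hm
    have he : p + ((3*(t+1)+2 : ℕ) : F m) = p + ((3*t+2 : ℕ) : F m) + ((3:ℕ) : F m) := by
      push_cast; ring
    rw [he]; exact hm

lemma exists_link (hk : m+3 = 3*k+1) (hc : D.card = k+1)
    {p q : F m} (hp : p ∈ D) (hgp : gap D p = 2)
    (hg3 : ∀ c ∈ D, c ≠ p → c ≠ q → gap D c = 3) :
    ∃ t, t < k ∧ p + ((3*t+2 : ℕ) : F m) = q := by
  by_contra hno
  push_neg at hno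
  have hall : ∀ t, t ≤ k → p + ((3*t+2 : ℕ) : F m) ∈ D := fun t ht =>
    chainCH hk hp hgp hg3 t ht (fun t' ht' => hno t' (by omega))
  set eBig : ℕ → ℕ := fun t => if t = 0 then 0 else if t = k+1 then 1 else 3*t - 1
    with heBig
  have hsubB : chainSet p (k+2) eBig ⊆ D := by
    intro x hx
    obtain ⟨t, ht, rfl⟩ := mem_chainSet.mp hx
    rcases t with _ | t
    · simpa [heBig] using hp
    · by_cases htk : t+1 = k+1
      · have h1 : p + ((eBig (t+1) : ℕ) : F m) = p + ((3*k+2 : ℕ) : F m) := by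
          simp only [heBig, if_neg (show ¬ t+1 = 0 by omega), if_pos htk]
          rw [show (3*k+2 : ℕ) = 1 + (m+3) by omega, cast_add_n]
        rw [h1]; exact hall k (le_refl k)
      · have h1 : eBig (t+1) = 3*t+2 := by
          simp only [heBig, if_neg (show ¬ t+1 = 0 by omega), if_neg htk]
          omega
        rw [h1]
        exact hall t (Nat.le_of_lt_succ (Nat.lt_of_succ_lt_succ ht))
  have hcardB : (chainSet p (k+2) eBig).card = k+2 := by
    apply card_chainSet
    intro t ht t' ht' hmod
    have hv1 : (t = 0 ∧ eBig t = 0) ∨ (t = k+1 ∧ eBig t = 1) ∨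
        (1 ≤ t ∧ t ≤ k ∧ eBig t = 3*t-1) := by
      by_cases h0 : t = 0
      · exact Or.inl ⟨h0, by simp only [heBig, if_pos h0]⟩
      · by_cases h1 : t = k+1
        · exact Or.inr (Or.inl ⟨h1, by simp only [heBig, if_neg h0, if_pos h1]⟩)
        · exact Or.inr (Or.inr ⟨by omega, by omega, by simp only [heBig, if_neg h0, if_neg h1]⟩)
    have hv2 : (t' = 0 ∧ eBig t' = 0) ∨ (t' = k+1 ∧ eBig t' = 1) ∨
        (1 ≤ t' ∧ t' ≤ k ∧ eBig t' = 3*t'-1) := by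
      by_cases h0 : t' = 0
      · exact Or.inl ⟨h0, by simp only [heBig, if_pos h0]⟩
      · by_cases h1 : t' = k+1
        · exact Or.inr (Or.inl ⟨h1, by simp only [heBig, if_neg h0, if_pos h1]⟩)
        · exact Or.inr (Or.inr ⟨by omega, by omega, by simp only [heBig, if_neg h0, if_neg h1]⟩)
    rcases hv1 with ⟨hc1, hval1⟩ | ⟨hc1, hval1⟩ | ⟨hc1, hc1', hval1⟩ <;>
      rcases hv2 with ⟨hc2, hval2⟩ | ⟨hc2, hval2⟩ | ⟨hc2, hc2', hval2⟩ <;>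
      rcases mod_inj_helper (u := eBig t) (v := eBig t') (by rw [hval1]; omega)
        (by rw [hval2]; omega) hmod with h1 | h1 | h1 <;>
      rw [hval1, hval2] at h1 <;> omega
  have hle := Finset.card_le_card hsubB
  rw [hcardB, hc] at hle
  omega

lemma class1 (hk : m+3 = 3*k+1) (h : Dom D) (hc : D.card = k+1) :
    (∃ a : F m, D = chainSet a (k+1) eA) ∨
    (∃ a : F m, ∃ j < k, D = chainSet a (k+1) (eB j)) := by
  have hkpos : 1 ≤ k := by omega
  have hs := slack_sum h
  rw [hc] at hs
  have hs2 : ∑ d ∈ D, (3 - gap D d) = 2 := by omega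
  rcases exists_of_sum_eq_two hs2 with ⟨a, ha, hfa, hrest⟩ | ⟨a, ha, b, hb, hab, hfa, hfb, hrest⟩
  · -- one gap-1 vertex
    left
    have hga : gap D a = 1 := by
      have h1 := gap_pos ha; have h2 := h.gap_le_three ha; omega
    have hg3 : ∀ c ∈ D, c ≠ a → gap D c = 3 := by
      intro c hcD hca
      have h1 := gap_pos hcD; have h2 := h.gap_le_three hcD
      have := hrest c hcD hca; omega
    have hchain : ∀ t : ℕ, t ≤ k → a + ((eA t : ℕ) : F m) ∈ D := by
      intro t
      induction t with
      | zero =>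
        intro _
        have hm := gap_mem ha
        rw [hga] at hm
        simpa only [eA] using hm
      | succ t ih =>
        intro htk
        have hx := ih (by omega)
        have hxa : a + ((eA t : ℕ) : F m) ≠ a :=
          add_cast_ne a (by simp only [eA]; omega) (by simp only [eA]; omega)
        have hgx := hg3 _ hx hxa
        have hm := gap_mem hx
        rw [hgx] at hm
        have he : a + ((eA (t+1) : ℕ) : F m) = a + ((eA t : ℕ) : F m) + ((3:ℕ) : F m) := by
          simp only [eA]; push_cast; ring
        rw [he]; exact hm
    have hsub : chainSet a (k+1) eA ⊆ D := by
      intro x hx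
      obtain ⟨t, ht, rfl⟩ := mem_chainSet.mp hx
      exact hchain t (by omega)
    exact ⟨a, (Finset.eq_of_subset_of_card_le hsub (by rw [card_SA hk, hc])).symm⟩
  · -- two gap-2 vertices
    right
    have hga : gap D a = 2 := by
      have h1 := gap_pos ha; have h2 := h.gap_le_three ha; omega
    have hgb : gap D b = 2 := by
      have h1 := gap_pos hb; have h2 := h.gap_le_three hb; omega
    have hg3a : ∀ c ∈ D, c ≠ a → c ≠ b → gap D c = 3 := by
      intro c hcD hca hcb
      have h1 := gap_pos hcD; have h2 := h.gap_le_three hcD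
      have := hrest c hcD hca hcb; omega
    have hg3b : ∀ c ∈ D, c ≠ b → c ≠ a → gap D c = 3 := fun c hcD h1 h2 => hg3a c hcD h2 h1
    have hPex := exists_link hk hc ha hga hg3a
    have hPex' := exists_link hk hc hb hgb hg3b
    classical
    set j := Nat.find hPex with hjdef
    obtain ⟨hjk, hjb⟩ := Nat.find_spec hPex
    have hmin : ∀ t' < j, a + ((3*t'+2 : ℕ) : F m) ≠ b := by
      intro t' ht' heq
      exact Nat.find_min hPex ht' ⟨by omega, heq⟩
    set j' := Nat.find hPex' with hj'def
    obtain ⟨hj'k, hj'a⟩ := Nat.find_spec hPex'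
    have hmin' : ∀ t' < j', b + ((3*t'+2 : ℕ) : F m) ≠ a := by
      intro t' ht' heq
      exact Nat.find_min hPex' ht' ⟨by omega, heq⟩
    have CH_a : ∀ t ≤ j, a + ((3*t+2 : ℕ) : F m) ∈ D := fun t ht =>
      chainCH hk ha hga hg3a t (by omega) (fun t' ht' => hmin t' (by omega))
    have CH_b : ∀ t ≤ j', b + ((3*t+2 : ℕ) : F m) ∈ D := fun t ht =>
      chainCH hk hb hgb hg3b t (by omega) (fun t' ht' => hmin' t' (by omega))
    -- round trip : j + j' = k - 1
    have h5 : a + ((3*j+2 : ℕ) : F m) + ((3*j'+2 : ℕ) : F m) = a := by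
      rw [hjb]; exact hj'a
    have hc0 : ((3*j+3*j'+4 : ℕ) : F m) = 0 := by
      push_cast at h5 ⊢
      linear_combination h5
    have hmod0 := cast_zero_helper hc0
    have hjj' : j + j' = k - 1 := by
      have := eq_n_of_mod hmod0 (by omega) (by omega)
      omega
    have hsub : chainSet a (k+1) (eB j) ⊆ D := by
      intro x hx
      obtain ⟨t, ht, rfl⟩ := mem_chainSet.mp hx
      by_cases htj : t ≤ j
      · have h1 : eB j t = 3*t+2 := by simp only [eB, if_pos htj]
        rw [h1]; exact CH_a t htj
      · have h1 : eB j t = 3*t+1 := by simp only [eB, if_neg htj]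
        have h2 : a + ((3*t+1 : ℕ) : F m) = b + ((3*(t-j-1)+2 : ℕ) : F m) := by
          rw [← hjb, add_assoc, ← Nat.cast_add]
          exact chain_eq_cast (by omega)
        rw [h1, h2]
        exact CH_b (t-j-1) (by omega)
    exact ⟨a, j, hjk,
      (Finset.eq_of_subset_of_card_le hsub (by rw [card_SB hk hjk, hc])).symm⟩

lemma mod_inj_helper' {u v : ℕ} (h : u % (m+3) = v % (m+3)) (hu : u ≤ m+3) (hv : v ≤ m+3) :
    u = v ∨ (u = m+3 ∧ v = 0) ∨ (u = 0 ∧ v = m+3) := mod_inj_helper hu hv h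

lemma memP_SB1 (hk : m+3 = 3*k+1) (hj : j < k) (a : F m) :
    a + ((2:ℕ) : F m) ∈ chainSet a (k+1) (eB j) ∧
    a + ((2:ℕ) : F m) - ((2:ℕ) : F m) ∈ chainSet a (k+1) (eB j) := by
  constructor
  · exact mem_chainSet_of 0 (by omega) (by simp only [eB]; split_ifs <;> omega)
  · rw [shift2' a (le_refl 2)]
    exact mem_chainSet_of k (by omega) (by simp only [eB]; split_ifs <;> omega)

lemma memP_SB2 (hk : m+3 = 3*k+1) (hj : j < k) (a : F m) :
    a + ((3*j+4 : ℕ) : F m) ∈ chainSet a (k+1) (eB j) ∧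
    a + ((3*j+4 : ℕ) : F m) - ((2:ℕ) : F m) ∈ chainSet a (k+1) (eB j) := by
  constructor
  · exact mem_chainSet_of (j+1) (by omega) (by simp only [eB]; split_ifs <;> omega)
  · rw [shift2' a (by omega)]
    exact mem_chainSet_of j (by omega) (by simp only [eB]; split_ifs <;> omega)

lemma pair_SB (hk : m+3 = 3*k+1) (hj : j < k) (a : F m) {x : F m}
    (hx : x ∈ chainSet a (k+1) (eB j))
    (hx2 : x - ((2:ℕ) : F m) ∈ chainSet a (k+1) (eB j)) :
    x = a + ((2:ℕ) : F m) ∨ x = a + ((3*j+4 : ℕ) : F m) := by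
  obtain ⟨t, ht, rfl⟩ := mem_chainSet.mp hx
  have hvt : (t ≤ j ∧ eB j t = 3*t+2) ∨ (j < t ∧ eB j t = 3*t+1) := by
    simp only [eB]; split_ifs <;> omega
  have hge : 2 ≤ eB j t := by
    rcases hvt with ⟨c, e⟩ | ⟨c, e⟩ <;> rw [e] <;> omega
  rw [shift2' a hge] at hx2
  obtain ⟨t', ht', he⟩ := mem_chainSet.mp hx2
  rw [add_right_inj, cast_eq_iff] at he
  have hvt' : (t' ≤ j ∧ eB j t' = 3*t'+2) ∨ (j < t' ∧ eB j t' = 3*t'+1) := by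
    simp only [eB]; split_ifs <;> omega
  rcases hvt with ⟨c1, e1⟩ | ⟨c1, e1⟩ <;> rcases hvt' with ⟨c2, e2⟩ | ⟨c2, e2⟩ <;>
    rw [e1, e2] at he <;> rw [e1] <;>
    rcases mod_inj_helper' he (by omega) (by omega) with h1 | h1 | h1 <;>
    first
      | (left; exact chain_eq_cast (by omega))
      | (right; exact chain_eq_cast (by omega))
      | (exact absurd h1 (by omega))

lemma noP_SA (hk : m+3 = 3*k+1) (a : F m) {x : F m}
    (hx : x ∈ chainSet a (k+1) eA)
    (hx2 : x - ((2:ℕ) : F m) ∈ chainSet a (k+1) eA) : False := by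
  obtain ⟨t, ht, rfl⟩ := mem_chainSet.mp hx
  by_cases ht0 : t = 0
  · subst ht0
    rw [show eA 0 = 1 from rfl, shift2'' a 1] at hx2
    obtain ⟨t', ht', he⟩ := mem_chainSet.mp hx2
    rw [add_right_inj, cast_eq_iff] at he
    simp only [eA] at he
    rcases mod_inj_helper' he (by omega) (by omega) with h1 | h1 | h1 <;> omega
  · have hge : 2 ≤ eA t := by simp only [eA]; omega
    rw [shift2' a hge] at hx2
    obtain ⟨t', ht', he⟩ := mem_chainSet.mp hx2
    rw [add_right_inj, cast_eq_iff] at he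
    simp only [eA] at he
    rcases mod_inj_helper' he (by omega) (by omega) with h1 | h1 | h1 <;> omega

lemma Q_SA (hk : m+3 = 3*k+1) (a : F m) {x : F m}
    (hx : x ∈ chainSet a (k+1) eA)
    (hx1 : x - 1 ∈ chainSet a (k+1) eA) : x = a + ((1:ℕ) : F m) := by
  obtain ⟨t, ht, rfl⟩ := mem_chainSet.mp hx
  rw [shift1' a (show 1 ≤ eA t by simp only [eA]; omega)] at hx1
  obtain ⟨t', ht', he⟩ := mem_chainSet.mp hx1
  rw [add_right_inj, cast_eq_iff] at he
  simp only [eA] at he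
  rcases mod_inj_helper' he (by omega) (by omega) with h1 | h1 | h1 <;>
    first
      | (exact chain_eq_cast (by simp only [eA]; omega))
      | (exact absurd h1 (by omega))

lemma inj_SA (hk : m+3 = 3*k+1) {a a' : F m}
    (h : chainSet a (k+1) eA = chainSet a' (k+1) eA) : a = a' := by
  have h1 : a' + ((1:ℕ) : F m) ∈ chainSet a (k+1) eA := by
    rw [h]
    exact mem_chainSet_of 0 (by omega) (by simp only [eA]; first | tauto | omega)
  have h2 : a' + ((1:ℕ) : F m) - 1 ∈ chainSet a (k+1) eA := by
    rw [h, shift1' a' (le_refl 1)]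
    exact mem_chainSet_of k (by omega) (by simp only [eA]; first | tauto | omega)
  have := Q_SA hk a h1 h2
  exact (add_right_cancel this).symm

lemma disj_AB (hk : m+3 = 3*k+1) (hj : j < k) (a a₂ : F m)
    (h : chainSet a (k+1) eA = chainSet a₂ (k+1) (eB j)) : False := by
  have hm := memP_SB1 hk hj a₂
  rw [← h] at hm
  exact noP_SA hk a hm.1 hm.2

lemma fiber_SB (hk : m+3 = 3*k+1) {a a₂ : F m} {j j₂ : ℕ} (hj : j < k) (hj₂ : j₂ < k)
    (h : chainSet a₂ (k+1) (eB j₂) = chainSet a (k+1) (eB j)) :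
    (a₂ = a ∧ j₂ = j) ∨ (a₂ = a + ((3*j+2 : ℕ) : F m) ∧ j₂ = k-1-j) := by
  have hm1 := memP_SB1 hk hj₂ a₂
  rw [h] at hm1
  have hp1 := pair_SB hk hj a hm1.1 hm1.2
  have hm2 := memP_SB2 hk hj₂ a₂
  rw [h] at hm2
  have hp2 := pair_SB hk hj a hm2.1 hm2.2
  rcases hp1 with h1 | h1
  · left
    have ha : a₂ = a := add_right_cancel h1
    subst ha
    rcases hp2 with h2 | h2
    · exfalso
      rw [add_right_inj, cast_eq_iff] at h2
      rcases mod_inj_helper' h2 (by omega) (by omega) with h3 | h3 | h3 <;> omega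
    · refine ⟨rfl, ?_⟩
      rw [add_right_inj, cast_eq_iff] at h2
      rcases mod_inj_helper' h2 (by omega) (by omega) with h3 | h3 | h3 <;> omega
  · right
    have ha : a₂ = a + ((3*j+2 : ℕ) : F m) := by
      have h4 : a + ((3*j+4 : ℕ) : F m) = a + ((3*j+2 : ℕ) : F m) + ((2:ℕ) : F m) := by
        push_cast; ring
      rw [h4] at h1
      exact add_right_cancel h1
    refine ⟨ha, ?_⟩
    rcases hp2 with h2 | h2
    · rw [ha, add_assoc, ← Nat.cast_add] at h2
      have h5 := add_left_cancel h2
      rw [cast_eq_iff] at h5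
      have h6 : ((3*j+2 + (3*j₂+4)) - 2) % (m+3) = 0 :=
        Nat.sub_mod_eq_zero_of_mod_eq h5
      have h7 := eq_n_of_mod h6 (by omega) (by omega)
      omega
    · exfalso
      rw [ha, add_assoc, ← Nat.cast_add] at h2
      have h5 := add_left_cancel h2
      rw [cast_eq_iff] at h5
      have h6 : ((3*j+2 + (3*j₂+4)) - (3*j+4)) % (m+3) = 0 :=
        Nat.sub_mod_eq_zero_of_mod_eq h5
      have h7 : (3*j₂+2) % (m+3) = 0 := by
        rw [show (3*j+2 + (3*j₂+4)) - (3*j+4) = 3*j₂+2 by omega] at h6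
        exact h6
      have h8 := eq_n_of_mod h7 (by omega) (by omega)
      omega

lemma incl_SB (hk : m+3 = 3*k+1) (hj : j < k) (a : F m) :
    chainSet (a + ((3*j+2 : ℕ) : F m)) (k+1) (eB (k-1-j)) ⊆ chainSet a (k+1) (eB j) := by
  intro x hx
  obtain ⟨t, ht, rfl⟩ := mem_chainSet.mp hx
  rw [add_assoc, ← Nat.cast_add]
  have hvt : (t ≤ k-1-j ∧ eB (k-1-j) t = 3*t+2) ∨ (k-1-j < t ∧ eB (k-1-j) t = 3*t+1) := by
    simp only [eB]; split_ifs <;> omega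
  rcases hvt with ⟨c1, e1⟩ | ⟨c1, e1⟩
  · rw [e1]
    exact mem_chainSet_of (j+t+1) (by omega) (by simp only [eB]; split_ifs <;> omega)
  · rw [e1]
    exact mem_chainSet_of (j+t-k) (by omega) (by simp only [eB]; split_ifs <;> omega)

lemma swap_SB (hk : m+3 = 3*k+1) (hj : j < k) (a : F m) :
    chainSet (a + ((3*j+2 : ℕ) : F m)) (k+1) (eB (k-1-j)) = chainSet a (k+1) (eB j) :=
  Finset.eq_of_subset_of_card_le (incl_SB hk hj a)
    (by rw [card_SB hk hj, card_SB hk (show k-1-j < k by omega)])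

lemma domNum1 (hk : m+3 = 3*k+1) :
    domNum (SimpleGraph.cycleGraph (m+3)) = k+1 := by
  apply domNum_eq (chainSet (0 : F m) (k+1) eA) (dom_SA hk 0) (card_SA hk 0)
  intro D hD
  have := hD.card_bound
  omega

lemma tau1 (hk : m+3 = 3*k+1) :
    2 * tau (SimpleGraph.cycleGraph (m+3)) = (m+3) * (k + 2) := by
  have hkpos : 1 ≤ k := by omega
  classical
  set ψ : F m × Fin k → Finset (F m) := fun p => chainSet p.1 (k+1) (eB p.2.val) with hψ
  set A : Finset (Finset (F m)) :=
    Finset.univ.image (fun a : F m => chainSet a (k+1) eA) with hA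
  set B : Finset (Finset (F m)) := Finset.univ.image ψ with hB
  have hsetEq : minDomSets (SimpleGraph.cycleGraph (m+3)) = ↑(A ∪ B) := by
    ext D
    rw [mem_minDomSets_iff (domNum1 hk)]
    constructor
    · rintro ⟨hD, hc⟩
      rcases class1 hk hD hc with ⟨a, rfl⟩ | ⟨a, j, hj, rfl⟩
      · exact Finset.mem_coe.mpr (Finset.mem_union_left _
          (Finset.mem_image.mpr ⟨a, Finset.mem_univ _, rfl⟩))
      · exact Finset.mem_coe.mpr (Finset.mem_union_right _
          (Finset.mem_image.mpr ⟨(a, ⟨j, hj⟩), Finset.mem_univ _, rfl⟩))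
    · intro hD
      rcases Finset.mem_union.mp (Finset.mem_coe.mp hD) with hD1 | hD1
      · obtain ⟨a, _, rfl⟩ := Finset.mem_image.mp hD1
        exact ⟨dom_SA hk a, card_SA hk a⟩
      · obtain ⟨p, _, rfl⟩ := Finset.mem_image.mp hD1
        exact ⟨dom_SB hk p.2.isLt p.1, card_SB hk p.2.isLt p.1⟩
  have hAcard : A.card = m+3 := by
    rw [hA, Finset.card_image_of_injective _ (fun a a' hh => inj_SA hk hh),
      card_univ, Fintype.card_fin]
  have hdisj : Disjoint A B := by
    rw [Finset.disjoint_left]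
    rintro S hSA hSB
    obtain ⟨a, _, rfl⟩ := Finset.mem_image.mp hSA
    obtain ⟨p, _, hp⟩ := Finset.mem_image.mp hSB
    exact disj_AB hk p.2.isLt a p.1 hp.symm
  have hBcard : 2 * B.card = (m+3) * k := by
    have hcount := Finset.card_eq_sum_card_image ψ (Finset.univ : Finset (F m × Fin k))
    have hfib : ∀ b ∈ Finset.univ.image ψ,
        (Finset.univ.filter (fun p => ψ p = b)).card = 2 := by
      intro b hb
      obtain ⟨p, _, rfl⟩ := Finset.mem_image.mp hb
      obtain ⟨a, j⟩ := p
      have hfil : Finset.univ.filter (fun q => ψ q = ψ (a, j)) =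
          {(a, j), (a + ((3*j.val+2 : ℕ) : F m), ⟨k-1-j.val, by omega⟩)} := by
        ext q
        simp only [Finset.mem_filter, Finset.mem_univ, true_and, Finset.mem_insert,
          Finset.mem_singleton]
        constructor
        · intro hq
          obtain ⟨a₂, j₂⟩ := q
          simp only [hψ] at hq
          rcases fiber_SB hk j.isLt j₂.isLt hq with ⟨h1, h2⟩ | ⟨h1, h2⟩
          · left; exact Prod.ext h1 (Fin.ext h2)
          · right; exact Prod.ext h1 (Fin.ext h2)
        · intro hq
          rcases hq with rfl | rfl
          · rfl
          · simp only [hψ]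
            exact swap_SB hk j.isLt a
      rw [hfil, Finset.card_insert_of_notMem, Finset.card_singleton]
      simp only [Finset.mem_singleton]
      intro hcon
      have hfst := congrArg Prod.fst hcon
      simp only at hfst
      exact add_cast_ne a (by omega) (by omega) hfst.symm
    rw [Finset.sum_congr rfl hfib, Finset.sum_const, smul_eq_mul, card_univ] at hcount
    have hcu : Fintype.card (F m × Fin k) = (m+3) * k := by
      simp [Fintype.card_prod]
    rw [hcu] at hcount
    rw [mul_comm]
    exact hcount.symm
  have hcard : (A ∪ B).card = A.card + B.card := Finset.card_union_of_disjoint hdisj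
  rw [tau, hsetEq, Set.ncard_coe_finset, hcard, hAcard]
  have hr : (m+3)*(k+2) = (m+3)*k + 2*(m+3) := by ring
  rw [hr, ← hBcard]
  ring

end Case1

end Stmt13Aux

theorem stmt_13 (n : ℕ) (hn : 3 ≤ n) :
    (n % 3 = 0 → tau (SimpleGraph.cycleGraph n) = 3) ∧
    (n % 3 = 1 → tau (SimpleGraph.cycleGraph n) = n * (2 + n / 3) / 2) ∧
    (n % 3 = 2 → tau (SimpleGraph.cycleGraph n) = n) := by
  obtain ⟨m, rfl⟩ : ∃ m, n = m + 3 := ⟨n - 3, by omega⟩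
  refine ⟨fun h0 => ?_, fun h1 => ?_, fun h2 => ?_⟩
  · exact Stmt13Aux.tau0 (k := (m+3)/3) (by omega)
  · have hk : m + 3 = 3 * ((m+3)/3) + 1 := by omega
    have h2t := Stmt13Aux.tau1 hk
    have h3 : (m+3) * (2 + (m+3)/3) = (m+3) * ((m+3)/3 + 2) := by ring
    rw [h3, ← h2t]
    omega
  · exact Stmt13Aux.tau2 (k := (m+1)/3) (by omega)
end

section
/- For the cycle C_n with n ≥ 3 and any vertex v: DV(v) = 1 if n ≡ 0 (mod 3); DV(v) = ⌈n/3⌉(1 + ⌈n/3⌉)/2 if n ≡ 1 (mod 3); and DV(v) = ⌈n/3⌉ if n ≡ 2 (mod 3). -/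
namespace Stmt14Aux

open Finset SimpleGraph
open Fin.CommRing

/-! ### gap sequences and partial sums -/

/-- gap value of index `j` (as natural number in `{1,2,3}`). -/
def gv {k : ℕ} (g : Fin k → Fin 3) (j : ℕ) : ℕ :=
  if h : j < k then (g ⟨j, h⟩ : ℕ) + 1 else 0

/-- partial sums of gaps. -/
def psum {k : ℕ} (g : Fin k → Fin 3) (i : ℕ) : ℕ :=
  ∑ j ∈ Finset.range i, gv g j

/-- admissible gap sequences: gaps in `{1,2,3}` summing to `n`. -/
def SOK (n k : ℕ) : Finset (Fin k → Fin 3) :=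
  Finset.univ.filter fun g => ∑ i, ((g i : ℕ) + 1) = n

variable {n k : ℕ}

lemma gv_of_lt {g : Fin k → Fin 3} {j : ℕ} (h : j < k) : gv g j = (g ⟨j, h⟩ : ℕ) + 1 := dif_pos h

lemma gv_pos {g : Fin k → Fin 3} {j : ℕ} (h : j < k) : 1 ≤ gv g j := by
  rw [gv_of_lt h]; omega

lemma gv_le {g : Fin k → Fin 3} {j : ℕ} (h : j < k) : gv g j ≤ 3 := by
  rw [gv_of_lt h]; have := (g ⟨j, h⟩).isLt; omega

lemma mem_SOK {g : Fin k → Fin 3} : g ∈ SOK n k ↔ ∑ i, ((g i : ℕ) + 1) = n := by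
  simp [SOK]

lemma psum_zero {g : Fin k → Fin 3} : psum g 0 = 0 := rfl

lemma psum_succ {g : Fin k → Fin 3} (i : ℕ) : psum g (i + 1) = psum g i + gv g i :=
  Finset.sum_range_succ _ _

lemma psum_k {g : Fin k → Fin 3} (hg : g ∈ SOK n k) : psum g k = n := by
  rw [mem_SOK] at hg
  rw [psum, ← Fin.sum_univ_eq_sum_range (fun j => gv g j) k, ← hg]
  exact Finset.sum_congr rfl fun i _ => by rw [gv_of_lt i.isLt]

lemma psum_mono {g : Fin k → Fin 3} : Monotone (psum g) := by
  intro i j hij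
  exact Finset.sum_le_sum_of_subset (Finset.range_subset_range.2 hij)

lemma psum_strict {g : Fin k → Fin 3} {i j : ℕ} (hij : i < j) (hjk : j ≤ k) :
    psum g i < psum g j := by
  have h1 : psum g i + 1 ≤ psum g (i + 1) := by
    rw [psum_succ]; have := gv_pos (g := g) (lt_of_lt_of_le hij hjk); omega
  have := psum_mono (g := g) (show i + 1 ≤ j by omega)
  omega

lemma psum_add_le {g : Fin k → Fin 3} (hg : g ∈ SOK n k) {i : ℕ} (hi : i ≤ k) :
    psum g i + (k - i) ≤ n := by
  have h1 : psum g i + ∑ j ∈ Finset.Ico i k, gv g j = n := by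
    rw [← psum_k hg, psum, psum]
    simp only [Finset.range_eq_Ico]
    exact Finset.sum_Ico_consecutive _ (Nat.zero_le _) hi
  have h2 : (k - i) ≤ ∑ j ∈ Finset.Ico i k, gv g j := by
    calc (k - i) = ∑ _j ∈ Finset.Ico i k, 1 := by simp
    _ ≤ _ := Finset.sum_le_sum fun j hj => gv_pos (Finset.mem_Ico.1 hj).2
  omega

lemma psum_lt_n {g : Fin k → Fin 3} (hg : g ∈ SOK n k) {i : ℕ} (hi : i < k) :
    psum g i < n := by
  have := psum_add_le hg (le_of_lt hi); omega

lemma k_pos (hn3 : 3 ≤ n) {g : Fin k → Fin 3} (hg : g ∈ SOK n k) : 0 < k := by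
  rcases Nat.eq_zero_or_pos k with h | h
  · subst h; rw [mem_SOK] at hg; simp at hg; omega
  · exact h

/-! ### vertices from partial sums -/

/-- the vertex at distance `p` from `v` around the cycle. -/
def vtx [NeZero n] (v : Fin n) (p : ℕ) : Fin n := v + (p : Fin n)

def FF [NeZero n] (v : Fin n) (g : Fin k → Fin 3) : Finset (Fin n) :=
  Finset.image (fun i : Fin k => vtx v (psum g i)) Finset.univ

lemma vtx_zero [NeZero n] (v : Fin n) : vtx v 0 = v := by simp [vtx]

lemma vtx_n [NeZero n] (v : Fin n) : vtx v n = v := by simp [vtx]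

lemma vtx_sub_val [NeZero n] (v : Fin n) {p : ℕ} (hp : p < n) : (vtx v p - v).val = p := by
  rw [vtx, add_sub_cancel_left, Fin.val_natCast, Nat.mod_eq_of_lt hp]

lemma vtx_eq_iff [NeZero n] (v : Fin n) {p q : ℕ} (hp : p < n) (hq : q < n) :
    vtx v p = vtx v q ↔ p = q := by
  constructor
  · intro h
    have := congrArg (fun x => (x - v).val) h
    simpa [vtx_sub_val v hp, vtx_sub_val v hq] using this
  · rintro rfl; rfl

lemma eq_vtx_of_mem [NeZero n] (v u : Fin n) : u = vtx v ((u - v).val) := by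
  rw [vtx, Fin.cast_val_eq_self, add_sub_cancel]

lemma adj_vtx [NeZero n] (hn3 : 3 ≤ n) (v : Fin n) (p : ℕ) :
    (cycleGraph n).Adj (vtx v p) (vtx v (p + 1)) := by
  rw [cycleGraph_adj']
  right
  have : vtx v (p + 1) - vtx v p = (1 : Fin n) := by
    simp only [vtx, Nat.cast_add, Nat.cast_one]; ring
  rw [this, Fin.val_one', Nat.mod_eq_of_lt (by omega)]

lemma sub_val_eq_one [NeZero n] {p q : ℕ} (hp : p < n) (hq : q < n)
    (h : ((q : Fin n) - (p : Fin n)).val = 1) : q = p + 1 ∨ (p = n - 1 ∧ q = 0) := by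
  have hn : 0 < n := Fin.pos_iff_nonempty.mpr ⟨0⟩
  rw [Fin.sub_def] at h
  simp only [Fin.val_natCast] at h
  rw [Nat.mod_eq_of_lt hq, Nat.mod_eq_of_lt hp] at h
  rcases Nat.lt_or_ge (n - p + q) n with h2 | h2
  · rw [Nat.mod_eq_of_lt h2] at h; omega
  · rw [Nat.mod_eq_sub_mod h2, Nat.mod_eq_of_lt (by omega)] at h; omega

/-! ### FF produces minimum dominating sets -/

lemma mem_FF_iff [NeZero n] {v : Fin n} {g : Fin k → Fin 3} {x : Fin n} :
    x ∈ FF v g ↔ ∃ i : Fin k, vtx v (psum g i) = x := by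
  simp [FF]

lemma v_mem_FF [NeZero n] (hn3 : 3 ≤ n) {v : Fin n} {g : Fin k → Fin 3} (hg : g ∈ SOK n k) :
    v ∈ FF v g := by
  rw [mem_FF_iff]
  exact ⟨⟨0, k_pos hn3 hg⟩, by simp [psum_zero, vtx_zero]⟩

lemma FF_card [NeZero n] {v : Fin n} {g : Fin k → Fin 3} (hg : g ∈ SOK n k) :
    (FF v g).card = k := by
  rw [FF, Finset.card_image_of_injective _ ?_, Finset.card_univ, Fintype.card_fin]
  intro i j hij
  rw [vtx_eq_iff v (psum_lt_n hg i.isLt) (psum_lt_n hg j.isLt)] at hij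
  rcases lt_trichotomy i j with h | h | h
  · exact absurd hij (Nat.ne_of_lt (psum_strict h j.isLt.le))
  · exact h
  · exact absurd hij.symm (Nat.ne_of_lt (psum_strict h i.isLt.le))

lemma FF_isDom [NeZero n] (hn3 : 3 ≤ n) (v : Fin n) {g : Fin k → Fin 3} (hg : g ∈ SOK n k) :
    IsDomSet (cycleGraph n) (FF v g) := by
  intro u hu
  have hk0 : 0 < k := k_pos hn3 hg
  set m := (u - v).val with hm
  have hmn : m < n := (u - v).isLt
  have hu_eq : u = vtx v m := eq_vtx_of_mem v u
  have hne : ((Finset.range k).filter fun i => psum g i ≤ m).Nonempty :=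
    ⟨0, by simp [Finset.mem_filter, Finset.mem_range, psum_zero, hk0]⟩
  set i := (((Finset.range k).filter fun i => psum g i ≤ m).max' hne) with hi
  have hiI : i ∈ (Finset.range k).filter fun i => psum g i ≤ m := Finset.max'_mem _ _
  rw [Finset.mem_filter, Finset.mem_range] at hiI
  have hlt : m < psum g (i + 1) := by
    rcases Nat.lt_or_ge (i + 1) k with h | h
    · by_contra hcon
      have hmem : i + 1 ∈ (Finset.range k).filter fun j => psum g j ≤ m := by
        rw [Finset.mem_filter, Finset.mem_range]; omega
      have := Finset.le_max' _ _ hmem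
      omega
    · have hik : i + 1 = k := by omega
      rw [hik, psum_k hg]; exact hmn
  have hg3 : gv g i ≤ 3 := gv_le hiI.1
  have hps : psum g (i + 1) = psum g i + gv g i := psum_succ i
  have hd : m = psum g i ∨ m = psum g i + 1 ∨ (m = psum g i + 2 ∧ gv g i = 3) := by omega
  rcases hd with h | h | ⟨h, hgv3⟩
  · exact absurd (mem_FF_iff.2 ⟨⟨i, hiI.1⟩, by rw [← h, ← hu_eq]⟩) hu
  · refine ⟨vtx v (psum g i), mem_FF_iff.2 ⟨⟨i, hiI.1⟩, rfl⟩, ?_⟩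
    rw [hu_eq, h]
    exact adj_vtx hn3 v (psum g i)
  · refine ⟨vtx v (psum g (i + 1)), ?_, ?_⟩
    · rcases Nat.lt_or_ge (i + 1) k with hik1 | hik1
      · exact mem_FF_iff.2 ⟨⟨i + 1, hik1⟩, rfl⟩
      · have hik1' : i + 1 = k := by omega
        refine mem_FF_iff.2 ⟨⟨0, hk0⟩, ?_⟩
        rw [psum_zero, vtx_zero, hik1', psum_k hg, vtx_n]
    · have hmm : psum g (i + 1) = m + 1 := by omega
      rw [hmm, hu_eq]
      exact (adj_vtx hn3 v m).symm

lemma sub_v_injective [NeZero n] (v : Fin n) :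
    Function.Injective (fun x : Fin n => (x - v).val) := by
  intro x y hxy
  have h : x - v = y - v := Fin.val_injective hxy
  have := congrArg (fun z => z + v) h
  simpa using this

lemma psum_mem_image [NeZero n] (v : Fin n) {g : Fin k → Fin 3} (hg : g ∈ SOK n k) (i : Fin k) :
    psum g i ∈ Finset.image (fun x : Fin n => (x - v).val) (FF v g) :=
  Finset.mem_image.2 ⟨vtx v (psum g i), mem_FF_iff.2 ⟨i, rfl⟩, vtx_sub_val v (psum_lt_n hg i.isLt)⟩

lemma FF_injOn [NeZero n] (v : Fin n) : Set.InjOn (FF (k := k) v) (SOK n k) := by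
  intro g hg g' hg' hFF
  rw [Finset.mem_coe, mem_SOK] at *
  set A := Finset.image (fun x : Fin n => (x - v).val) (FF v g) with hA
  have hg2 : g ∈ SOK n k := mem_SOK.2 hg
  have hg2' : g' ∈ SOK n k := mem_SOK.2 hg'
  have hcardA : A.card = k := by
    rw [hA, Finset.card_image_of_injective _ (sub_v_injective v), FF_card hg2]
  have main : ∀ (g0 : Fin k → Fin 3), g0 ∈ SOK n k → FF v g0 = FF v g →
      (fun i : Fin k => psum g0 i) = A.orderEmbOfFin hcardA := by
    intro g0 hg0 hF0
    apply Finset.orderEmbOfFin_unique hcardA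
    · intro i; rw [hA, ← hF0]; exact psum_mem_image v hg0 i
    · intro i j hij
      exact psum_strict hij j.isLt.le
  have h1 := main g hg2 rfl
  have h2 := main g' hg2' hFF.symm
  have hps : ∀ i : Fin k, psum g i = psum g' i := by
    intro i
    exact (congrFun h1 i).trans (congrFun h2 i).symm
  funext i
  have e2 : psum g (i.val + 1) = psum g' (i.val + 1) := by
    rcases Nat.lt_or_ge (i.val + 1) k with h | h
    · exact hps ⟨i.val + 1, h⟩
    · have hik : i.val + 1 = k := by omega
      rw [hik, psum_k hg2, psum_k hg2']
  have s1 := psum_succ (g := g) i.val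
  have s2 := psum_succ (g := g') i.val
  have hpi := hps i
  have hgveq : gv g i.val = gv g' i.val := by omega
  rw [gv_of_lt i.isLt, gv_of_lt i.isLt] at hgveq
  simp only [Fin.eta] at hgveq
  exact Fin.ext (by omega)

lemma FF_surj [NeZero n] (hn3 : 3 ≤ n) (v : Fin n) {D : Finset (Fin n)}
    (hdom : IsDomSet (cycleGraph n) D) (hv : v ∈ D) (hcard : D.card = k) :
    ∃ g ∈ SOK n k, FF v g = D := by
  classical
  set M := D.image (fun x : Fin n => (x - v).val) with hM
  have hMcard : M.card = k := by
    rw [hM, Finset.card_image_of_injective _ (sub_v_injective v), hcard]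
  have hMlt : ∀ m ∈ M, m < n := by
    intro m hm; obtain ⟨x, _, rfl⟩ := Finset.mem_image.1 hm; exact (x - v).isLt
  have h0M : (0 : ℕ) ∈ M := Finset.mem_image.2 ⟨v, hv, by simp⟩
  have hk0 : 0 < k := by rw [← hMcard]; exact Finset.card_pos.2 ⟨0, h0M⟩
  set e := M.orderEmbOfFin hMcard with he
  have heM : ∀ i, e i ∈ M := fun i => Finset.orderEmbOfFin_mem M hMcard i
  have heLt : ∀ i, e i < n := fun i => hMlt _ (heM i)
  have heSurj : ∀ m ∈ M, ∃ i, e i = m := by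
    intro m hm
    have hr : m ∈ Set.range e := by rw [he, Finset.range_orderEmbOfFin]; exact hm
    exact hr
  have he0 : e ⟨0, hk0⟩ = 0 := by
    rw [he, Finset.orderEmbOfFin_zero hMcard hk0]
    exact le_antisymm (Finset.min'_le M 0 h0M) (Nat.zero_le _)
  set E : ℕ → ℕ := fun i => if h : i < k then e ⟨i, h⟩ else n with hE
  have hEe : ∀ (i : ℕ) (h : i < k), E i = e ⟨i, h⟩ := fun i h => dif_pos h
  have hEn : ∀ (i : ℕ), ¬ i < k → E i = n := fun i h => dif_neg h
  have hE0 : E 0 = 0 := by rw [hEe 0 hk0]; exact he0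
  have hEk : E k = n := hEn k (lt_irrefl k)
  have hEle : ∀ i, E i ≤ n := by
    intro i
    rcases Nat.lt_or_ge i k with h | h
    · rw [hEe i h]; exact (heLt _).le
    · rw [hEn i (by omega)]
  have hEstrict : ∀ i < k, E i + 1 ≤ E (i + 1) := by
    intro i hik
    rcases Nat.lt_or_ge (i + 1) k with h | h
    · rw [hEe i hik, hEe (i + 1) h]
      exact e.strictMono (show (⟨i, hik⟩ : Fin k) < ⟨i + 1, h⟩ from by
        rw [Fin.lt_def]; exact Nat.lt_succ_self i)
    · rw [hEe i hik, hEn (i + 1) (by omega)]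
      exact heLt _
  have hEmono : Monotone E := monotone_nat_of_le_succ (by
    intro i
    rcases Nat.lt_or_ge i k with h | h
    · have := hEstrict i h; omega
    · rw [hEn i (by omega), hEn (i + 1) (by omega)])
  have notM : ∀ i < k, ∀ m, E i < m → m < E (i + 1) → m ∉ M := by
    intro i hik m h1 h2 hmM
    obtain ⟨j, hj⟩ := heSurj m hmM
    have hij : (⟨i, hik⟩ : Fin k) < j := by
      rw [← e.lt_iff_lt, hj]
      rw [hEe i hik] at h1
      omega
    have hij2 : i < j.val := by simpa [Fin.lt_def] using hij
    rcases Nat.lt_or_ge (i + 1) k with h | h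
    · have hmono : e ⟨i + 1, h⟩ ≤ e j := e.monotone (by
        simp only [Fin.le_def]; exact hij2)
      rw [hEe (i + 1) h] at h2
      omega
    · have := j.isLt; omega
  have hgap : ∀ i < k, E (i + 1) ≤ E i + 3 := by
    intro i hik
    by_contra hcon
    push_neg at hcon
    have hpn : E i + 3 < E (i + 1) := hcon
    set p := E i + 2 with hp
    have hpn1 : p + 1 < E (i + 1) := by omega
    have hpn' : p + 1 < n := lt_of_lt_of_le hpn1 (hEle _)
    have hunotD : vtx v p ∉ D := by
      intro hin
      have hmem : (vtx v p - v).val ∈ M := Finset.mem_image.2 ⟨_, hin, rfl⟩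
      rw [vtx_sub_val v (by omega)] at hmem
      exact notM i hik p (by omega) (by omega) hmem
    obtain ⟨w, hwD, hadj⟩ := hdom _ hunotD
    set q := (w - v).val with hq
    have hqM : q ∈ M := Finset.mem_image.2 ⟨w, hwD, rfl⟩
    have hqn : q < n := (w - v).isLt
    have hw : w = vtx v q := eq_vtx_of_mem v w
    rw [cycleGraph_adj'] at hadj
    have hsub1 : w - vtx v p = (q : Fin n) - (p : Fin n) := by
      rw [hw, vtx, vtx]; ring
    have hsub2 : vtx v p - w = (p : Fin n) - (q : Fin n) := by
      rw [hw, vtx, vtx]; ring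
    rcases hadj with hA | hA
    · rw [hsub1] at hA
      rcases sub_val_eq_one (by omega) hqn hA with h' | ⟨h', _⟩
      · exact notM i hik q (by omega) (by omega) hqM
      · omega
    · rw [hsub2] at hA
      rcases sub_val_eq_one hqn (by omega) hA with h' | ⟨h', h''⟩
      · exact notM i hik q (by omega) (by omega) hqM
      · omega
  have hbound : ∀ i : Fin k, E (i.val + 1) - E i.val - 1 < 3 := by
    intro i; have := hgap i.val i.isLt; have := hEstrict i.val i.isLt; omega
  set g : Fin k → Fin 3 := fun i => ⟨E (i.val + 1) - E i.val - 1, hbound i⟩ with hgdef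
  have hterm : ∀ (i : ℕ) (h : i < k), (g ⟨i, h⟩ : ℕ) + 1 = E (i + 1) - E i := by
    intro i h
    show E (i + 1) - E i - 1 + 1 = E (i + 1) - E i
    have := hEstrict i h; omega
  have hgsum : g ∈ SOK n k := by
    rw [mem_SOK]
    calc ∑ i : Fin k, ((g i : ℕ) + 1)
        = ∑ i : Fin k, (E (i.val + 1) - E i.val) :=
          Finset.sum_congr rfl fun i _ => hterm i.val i.isLt
      _ = ∑ i ∈ Finset.range k, (E (i + 1) - E i) :=
          Fin.sum_univ_eq_sum_range (fun j => E (j + 1) - E j) k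
      _ = E k - E 0 := Finset.sum_range_tsub hEmono k
      _ = n := by rw [hEk, hE0]; omega
  have hpsE : ∀ i, i ≤ k → psum g i = E i := by
    intro i
    induction i with
    | zero => intro _; rw [psum_zero, hE0]
    | succ i ih =>
      intro hik
      have hik' : i < k := by omega
      rw [psum_succ, ih (by omega), gv_of_lt hik', hterm i hik']
      have := hEstrict i hik'
      omega
  refine ⟨g, hgsum, ?_⟩
  ext x
  rw [mem_FF_iff]
  constructor
  · rintro ⟨i, rfl⟩
    rw [hpsE i.val i.isLt.le, hEe i.val i.isLt]
    obtain ⟨y, hyD, hy⟩ := Finset.mem_image.1 (heM ⟨i.val, i.isLt⟩)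
    rw [← hy, ← eq_vtx_of_mem v y]
    exact hyD
  · intro hxD
    have hxM : (x - v).val ∈ M := Finset.mem_image.2 ⟨x, hxD, rfl⟩
    obtain ⟨j, hj⟩ := heSurj _ hxM
    refine ⟨j, ?_⟩
    rw [hpsE j.val j.isLt.le, hEe j.val j.isLt]
    have hje : (⟨j.val, j.isLt⟩ : Fin k) = j := rfl
    rw [hje, hj, ← eq_vtx_of_mem v x]

/-! ### domination number -/

lemma dom_lower (hn3 : 3 ≤ n) {D : Finset (Fin n)} (hdom : IsDomSet (cycleGraph n) D) :
    n ≤ 3 * D.card := by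
  classical
  haveI : NeZero n := ⟨by omega⟩
  have hchoice : ∀ u : Fin n, ∃ w, w ∈ D ∧ (w = u ∨ (cycleGraph n).Adj w u) := by
    intro u
    by_cases hu : u ∈ D
    · exact ⟨u, hu, Or.inl rfl⟩
    · obtain ⟨w, hw, hadj⟩ := hdom u hu; exact ⟨w, hw, Or.inr hadj⟩
  choose f hfD hfadj using hchoice
  have hmain := Finset.card_le_mul_card_image_of_maps_to (f := f) (s := Finset.univ) (t := D)
    (fun u _ => hfD u) 3 ?_
  · simpa using hmain
  · intro d _
    have hsub : (Finset.univ.filter fun u => f u = d) ⊆ {d - 1, d, d + 1} := by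
      intro u hu
      rw [Finset.mem_filter] at hu
      have h := hfadj u
      rw [hu.2] at h
      simp only [Finset.mem_insert, Finset.mem_singleton]
      rcases h with h | h
      · right; left; exact h.symm
      · rw [cycleGraph_adj'] at h
        rcases h with h | h
        · left
          have hdu : d - u = 1 := by
            apply Fin.val_injective; rw [h, Fin.val_one', Nat.mod_eq_of_lt (by omega)]
          rw [← hdu]; ring
        · right; right
          have hdu : u - d = 1 := by
            apply Fin.val_injective; rw [h, Fin.val_one', Nat.mod_eq_of_lt (by omega)]
          rw [← hdu]; ring
    calc (Finset.univ.filter fun u => f u = d).card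
        ≤ ({d - 1, d, d + 1} : Finset (Fin n)).card := Finset.card_le_card hsub
      _ ≤ 3 := by
        have h1 := Finset.card_insert_le (d - 1) ({d, d + 1} : Finset (Fin n))
        have h2 := Finset.card_insert_le d ({d + 1} : Finset (Fin n))
        have h3 : ({d + 1} : Finset (Fin n)).card = 1 := Finset.card_singleton _
        omega

lemma SOK_nonempty (hn3 : 3 ≤ n) : ∃ g : Fin ((n + 2) / 3) → Fin 3, g ∈ SOK n ((n + 2) / 3) := by
  set k := (n + 2) / 3 with hk
  have hk0 : 0 < k := by omega
  have hr : (n + 2) % 3 < 3 := Nat.mod_lt _ (by omega)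
  refine ⟨fun i => if i = ⟨0, hk0⟩ then ⟨(n + 2) % 3, hr⟩ else 2, ?_⟩
  rw [mem_SOK, Finset.sum_eq_sum_sdiff_singleton_add (Finset.mem_univ (⟨0, hk0⟩ : Fin k))]
  rw [if_pos rfl]
  have hrest : ∀ i ∈ Finset.univ \ {(⟨0, hk0⟩ : Fin k)},
      (((if i = ⟨0, hk0⟩ then (⟨(n + 2) % 3, hr⟩ : Fin 3) else 2) : Fin 3) : ℕ) + 1 = 3 := by
    intro i hi
    rw [Finset.mem_sdiff, Finset.mem_singleton] at hi
    rw [if_neg hi.2]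
    rfl
  rw [Finset.sum_congr rfl hrest, Finset.sum_const, smul_eq_mul]
  rw [Finset.card_sdiff_of_subset (by simp), Finset.card_singleton, Finset.card_univ, Fintype.card_fin]
  have hval : ((⟨(n + 2) % 3, hr⟩ : Fin 3) : ℕ) = (n + 2) % 3 := rfl
  omega

lemma domNum_eq (hn3 : 3 ≤ n) : domNum (cycleGraph n) = (n + 2) / 3 := by
  haveI : NeZero n := ⟨by omega⟩
  obtain ⟨g, hg⟩ := SOK_nonempty hn3
  have hmem : (n + 2) / 3 ∈
      {m | ∃ D : Finset (Fin n), IsDomSet (cycleGraph n) D ∧ D.card = m} :=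
    ⟨FF 0 g, FF_isDom hn3 0 hg, FF_card hg⟩
  apply le_antisymm
  · exact Nat.sInf_le hmem
  · obtain ⟨D, hD, hDc⟩ := Nat.sInf_mem (⟨_, hmem⟩ :
      {m | ∃ D : Finset (Fin n), IsDomSet (cycleGraph n) D ∧ D.card = m}.Nonempty)
    have := dom_lower hn3 hD
    rw [domNum]
    omega

/-! ### counting -/

def cnt (m s : ℕ) : ℕ := (Finset.univ.filter fun g : Fin m → Fin 3 => ∑ i, (g i : ℕ) = s).card

lemma cnt_succ (m s : ℕ) : cnt (m + 1) s =
    ∑ a : Fin 3, (Finset.univ.filter fun g : Fin m → Fin 3 => (a : ℕ) + ∑ i, (g i : ℕ) = s).card := by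
  classical
  rw [cnt, Finset.card_eq_sum_card_fiberwise
    (f := fun g : Fin (m + 1) → Fin 3 => g 0) (t := Finset.univ) (fun _ _ => Finset.mem_univ _)]
  apply Finset.sum_congr rfl
  intro a _
  rw [Finset.filter_filter]
  refine Finset.card_nbij' (fun g => Fin.tail g) (fun g => Fin.cons a g) ?_ ?_ ?_ ?_
  · intro g hg
    simp only [Finset.coe_filter, Finset.mem_filter, Finset.mem_univ, true_and, Set.mem_setOf_eq] at hg ⊢
    obtain ⟨hsum, h0⟩ := hg
    rw [← hsum, Fin.sum_univ_succ, h0]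
    rfl
  · intro g hg
    simp only [Finset.coe_filter, Finset.mem_filter, Finset.mem_univ, true_and, Set.mem_setOf_eq] at hg ⊢
    constructor
    · rw [Fin.sum_univ_succ, ← hg]
      simp
    · simp
  · intro g hg
    simp only [Finset.coe_filter, Finset.mem_filter, Finset.mem_univ, true_and, Set.mem_setOf_eq] at hg
    obtain ⟨hsum, h0⟩ := hg
    subst h0
    exact Fin.cons_self_tail g
  · intro g hg
    funext i
    exact congrFun (Fin.tail_cons (α := fun _ => Fin 3) a g) i

lemma cnt_zero (m : ℕ) : cnt m 0 = 1 := by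
  rw [cnt, Finset.card_eq_one]
  refine ⟨fun _ => 0, ?_⟩
  ext g
  simp only [Finset.mem_filter, Finset.mem_univ, true_and, Finset.mem_singleton]
  rw [Finset.sum_eq_zero_iff]
  constructor
  · intro h
    funext i
    exact Fin.ext (h i (Finset.mem_univ i))
  · rintro rfl
    intro i _
    rfl

lemma cnt_shift (m s b : ℕ) (a : Fin 3) (h : (a : ℕ) + b = s) :
    (Finset.univ.filter fun g : Fin m → Fin 3 => (a : ℕ) + ∑ i, (g i : ℕ) = s).card
      = cnt m b := by
  subst h
  rw [cnt]
  apply congrArg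
  apply Finset.filter_congr
  intro g _
  omega

lemma cnt_big (m s : ℕ) (a : Fin 3) (h : s < (a : ℕ)) :
    (Finset.univ.filter fun g : Fin m → Fin 3 => (a : ℕ) + ∑ i, (g i : ℕ) = s).card = 0 := by
  rw [Finset.card_eq_zero, Finset.filter_eq_empty_iff]
  intro g _
  omega

lemma cnt_start_empty (s : ℕ) (hs : s ≠ 0) :
    cnt 0 s = 0 := by
  rw [cnt, Finset.card_eq_zero, Finset.filter_eq_empty_iff]
  intro g _
  simp [hs.symm]

lemma cnt_one (m : ℕ) : cnt m 1 = m := by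
  induction m with
  | zero => exact cnt_start_empty 1 one_ne_zero
  | succ m ih =>
    rw [cnt_succ, Fin.sum_univ_three, cnt_shift m 1 1 0 rfl, cnt_shift m 1 0 1 rfl,
      cnt_big m 1 2 (by norm_num), ih, cnt_zero]

lemma cnt_two' (m : ℕ) : 2 * cnt m 2 = m * (m + 1) := by
  induction m with
  | zero => rw [cnt_start_empty 2 two_ne_zero]
  | succ m ih =>
    have hstep : cnt (m + 1) 2 = cnt m 2 + m + 1 := by
      rw [cnt_succ, Fin.sum_univ_three, cnt_shift m 2 2 0 rfl, cnt_shift m 2 1 1 rfl,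
        cnt_shift m 2 0 2 rfl, cnt_one, cnt_zero]
    rw [hstep]
    have hexp : 2 * (cnt m 2 + m + 1) = 2 * cnt m 2 + 2 * m + 2 := by ring
    rw [hexp, ih]
    ring

lemma cnt_rev (m s : ℕ) (hs : s ≤ 2 * m) :
    cnt m s = cnt m (2 * m - s) := by
  have hsum : ∀ g : Fin m → Fin 3,
      (∑ i, ((Fin.rev (g i) : ℕ))) + ∑ i, (g i : ℕ) = 2 * m := by
    intro g
    rw [← Finset.sum_add_distrib]
    calc ∑ i, ((Fin.rev (g i) : ℕ) + (g i : ℕ))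
        = ∑ _i : Fin m, 2 := Finset.sum_congr rfl fun i _ => by
          rw [Fin.val_rev]
          have := (g i).isLt
          omega
      _ = 2 * m := by rw [Finset.sum_const]; simp [Nat.mul_comm]
  rw [cnt, cnt]
  apply Finset.card_bij' (fun g _ => Fin.rev ∘ g) (fun g _ => Fin.rev ∘ g)
  · intro g hg
    rw [Finset.mem_filter] at hg ⊢
    refine ⟨Finset.mem_univ _, ?_⟩
    have := hsum g
    simp only [Function.comp]
    omega
  · intro g hg
    rw [Finset.mem_filter] at hg ⊢
    refine ⟨Finset.mem_univ _, ?_⟩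
    have := hsum g
    simp only [Function.comp]
    omega
  · intro g _
    funext i
    simp [Function.comp]
  · intro g _
    funext i
    simp [Function.comp]

lemma SOK_card (hn3 : 3 ≤ n) (hk : k = (n + 2) / 3) :
    (SOK n k).card = cnt k (3 * k - n) := by
  have hkn : k ≤ n := by omega
  have h3k : n ≤ 3 * k := by omega
  have h1 : (SOK n k).card = cnt k (n - k) := by
    rw [SOK, cnt]
    congr 1
    apply Finset.filter_congr
    intro g _
    have hts : ∑ i, ((g i : ℕ) + 1) = (∑ i, (g i : ℕ)) + k := by
      rw [Finset.sum_add_distrib]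
      simp
    rw [hts]
    omega
  rw [h1, cnt_rev k (n - k) (by omega)]
  congr 1
  omega

end Stmt14Aux

open Stmt14Aux in
theorem stmt_14 (n : ℕ) (hn : 3 ≤ n) (v : Fin n) :
    (n % 3 = 0 → DV (SimpleGraph.cycleGraph n) v = 1) ∧
    (n % 3 = 1 → DV (SimpleGraph.cycleGraph n) v = (n + 2) / 3 * (1 + (n + 2) / 3) / 2) ∧
    (n % 3 = 2 → DV (SimpleGraph.cycleGraph n) v = (n + 2) / 3) := by
  haveI : NeZero n := ⟨by omega⟩
  set k := (n + 2) / 3 with hk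
  have hset : {D ∈ minDomSets (SimpleGraph.cycleGraph n) | v ∈ D} = ↑((SOK n k).image (FF v)) := by
    ext D
    simp only [Set.mem_setOf_eq, minDomSets, Finset.coe_image, Set.mem_image, Finset.mem_coe]
    constructor
    · rintro ⟨⟨hdom, hcard⟩, hv⟩
      rw [domNum_eq hn] at hcard
      obtain ⟨g, hg, hFg⟩ := FF_surj hn v hdom hv hcard
      exact ⟨g, hg, hFg⟩
    · rintro ⟨g, hg, rfl⟩
      exact ⟨⟨FF_isDom hn v hg, by rw [FF_card hg, domNum_eq hn]⟩, v_mem_FF hn hg⟩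
  have hDV : DV (SimpleGraph.cycleGraph n) v = (SOK n k).card := by
    rw [DV, hset, Set.ncard_coe_finset, Finset.card_image_of_injOn (FF_injOn v)]
  rw [hDV, SOK_card hn hk]
  refine ⟨fun h0 => ?_, fun h1 => ?_, fun h2 => ?_⟩
  · have : 3 * k - n = 0 := by omega
    rw [this, cnt_zero]
  · have : 3 * k - n = 2 := by omega
    rw [this]
    have h2 := cnt_two' k
    have hr : k * (1 + k) = k * (k + 1) := by ring
    rw [hr]
    omega
  · have : 3 * k - n = 1 := by omega
    rw [this, cnt_one]
end

section
/- For the path P_n with n ≥ 2: τ(P_n) = 1 if n ≡ 0 (mod 3); τ(P_n) = n + ⌊n/3⌋(⌊n/3⌋ − 1)/2 if n ≡ 1 (mod 3); and τ(P_n) = 2 + ⌊n/3⌋ if n ≡ 2 (mod 3). -/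
namespace Stmt15Aux

open Finset

/-- the canonical element function: `3i+1` minus deficits at `p` and `q`. -/
def g (p q i : ℕ) : ℕ := 3*i + 1 - (if p ≤ i then 1 else 0) - (if q ≤ i then 1 else 0)

lemma g_mono {p q i j : ℕ} (h : i ≤ j) : g p q i ≤ g p q j := by
  unfold g; split_ifs <;> omega

lemma g_strict {p q i j : ℕ} (h : i < j) : g p q i < g p q j := by
  unfold g; split_ifs <;> omega

lemma g_gap (p q i : ℕ) : g p q (i+1) ≤ g p q i + 3 := by
  unfold g; split_ifs <;> omega

lemma g_zero (p q : ℕ) : g p q 0 ≤ 1 := by unfold g; split_ifs <;> omega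

/-- the candidate minimum dominating set with deficit positions `p ≤ q` and `k` elements. -/
def E (p q k : ℕ) : Finset ℕ := (Finset.range k).image (g p q)

lemma E_mem {p q k x : ℕ} : x ∈ E p q k ↔ ∃ i < k, g p q i = x := by
  simp [E]

lemma card_E (p q k : ℕ) : (E p q k).card = k := by
  rw [E, Finset.card_image_of_injOn, Finset.card_range]
  intro i _ j _ hij
  rcases Nat.lt_trichotomy i j with h | h | h
  · exact absurd hij (Nat.ne_of_lt (g_strict h))
  · exact h
  · exact absurd hij.symm (Nat.ne_of_lt (g_strict h))

/-- domination for subsets of `[0,n)` in `ℕ` terms. -/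
def domN (n : ℕ) (S : Finset ℕ) : Prop :=
  S ⊆ Finset.range n ∧ ∀ v < n, ∃ u ∈ S, u ≤ v + 1 ∧ v ≤ u + 1

lemma E_domN {n k p q : ℕ} (hk : 1 ≤ k) (h1 : n ≤ g p q (k-1) + 2) (h2 : g p q (k-1) < n) :
    domN n (E p q k) := by
  constructor
  · intro x hx
    rw [E_mem] at hx
    obtain ⟨i, hi, rfl⟩ := hx
    exact Finset.mem_range.2 (lt_of_le_of_lt (g_mono (by omega)) h2)
  · intro v hv
    have hP0 : g p q 0 ≤ v + 1 := le_trans (g_zero p q) (by omega)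
    have hPj : g p q (Nat.findGreatest (fun i => g p q i ≤ v + 1) (k-1)) ≤ v + 1 :=
      Nat.findGreatest_spec (P := fun i => g p q i ≤ v + 1) (Nat.zero_le _) hP0
    set j := Nat.findGreatest (fun i => g p q i ≤ v + 1) (k-1) with hj
    have hjk : j ≤ k - 1 := Nat.findGreatest_le _
    by_cases hc : v ≤ g p q j + 1
    · exact ⟨g p q j, E_mem.2 ⟨j, by omega, rfl⟩, hPj, hc⟩
    · exfalso
      push_neg at hc
      rcases eq_or_lt_of_le hjk with he | hlt
      · have := h1
        rw [← he] at this
        omega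
      · have hnext : g p q (j+1) ≤ v + 1 := le_trans (g_gap p q j) (by omega)
        have := Nat.le_findGreatest (P := fun i => g p q i ≤ v + 1)
          (by omega : j + 1 ≤ k - 1) hnext
        omega

lemma domN_lower {n : ℕ} {S : Finset ℕ} (h : domN n S) : n ≤ 3 * S.card := by
  classical
  obtain ⟨hsub, hdom⟩ := h
  set f : ℕ → ℕ := fun v => if h : ∃ u ∈ S, u ≤ v + 1 ∧ v ≤ u + 1 then h.choose else 0 with hf
  have hmaps : ∀ v ∈ Finset.range n, f v ∈ S := by
    intro v hv
    have hex := hdom v (Finset.mem_range.1 hv)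
    rw [hf]
    simp only [dif_pos hex]
    exact hex.choose_spec.1
  have hfib : ∀ a ∈ S, ((Finset.range n).filter (fun x => f x = a)).card ≤ 3 := by
    intro a _
    have hss : (Finset.range n).filter (fun x => f x = a) ⊆ Finset.Ico (a-1) (a+2) := by
      intro x hx
      obtain ⟨hx1, hx2⟩ := Finset.mem_filter.1 hx
      have hex := hdom x (Finset.mem_range.1 hx1)
      have hspec := hex.choose_spec
      rw [hf] at hx2
      simp only [dif_pos hex] at hx2
      rw [hx2] at hspec
      exact Finset.mem_Ico.2 ⟨by omega, by omega⟩
    calc ((Finset.range n).filter (fun x => f x = a)).card ≤ (Finset.Ico (a-1) (a+2)).card :=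
          Finset.card_le_card hss
      _ ≤ 3 := by rw [Nat.card_Ico]; omega
  have := Finset.card_le_mul_card_image_of_maps_to hmaps 3 hfib
  simpa using this

lemma classify {n k : ℕ} (hk : 1 ≤ k) (hn3 : n ≤ 3*k) (hn2 : 3*k ≤ n + 2) (hn : 2 ≤ n)
    {S : Finset ℕ} (hS : domN n S) (hcard : S.card = k) :
    ∃ p q, p ≤ q ∧ q ≤ k ∧ (p = q → 1 ≤ p) ∧
      n ≤ g p q (k-1) + 2 ∧ g p q (k-1) < n ∧ S = E p q k := by
  classical
  obtain ⟨hsub, hdom⟩ := hS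
  set e : Fin k → ℕ := ⇑(S.orderEmbOfFin hcard) with he
  have hmem : ∀ i, e i ∈ S := fun i => S.orderEmbOfFin_mem hcard i
  have hsm : StrictMono e := (S.orderEmbOfFin hcard).strictMono
  have hsurj : ∀ x ∈ S, ∃ i, e i = x := by
    intro x hx
    have : x ∈ Set.range e := by rw [he, Finset.range_orderEmbOfFin]; exact hx
    exact this
  -- flatten to ℕ-indexed function
  set ee : ℕ → ℕ := fun i => if h : i < k then e ⟨i, h⟩ else 0 with heedef
  have heek : ∀ i (h : i < k), ee i = e ⟨i, h⟩ := fun i h => dif_pos h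
  have emem : ∀ i, i < k → ee i ∈ S := by intro i h; rw [heek i h]; exact hmem _
  have eltn : ∀ i, i < k → ee i < n := fun i h => Finset.mem_range.1 (hsub (emem i h))
  have emono : ∀ i j, i < j → j < k → ee i < ee j := by
    intro i j hij hj
    rw [heek i (by omega), heek j hj]
    exact hsm (by rw [Fin.mk_lt_mk]; omega)
  have ee0 : ee 0 ≤ 1 := by
    obtain ⟨u, hu, hu1, _⟩ := hdom 0 (by omega)
    obtain ⟨i, rfl⟩ := hsurj u hu
    have : ee 0 ≤ e i := by
      rw [heek 0 (by omega)]
      exact hsm.monotone (by simp [Fin.le_def])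
    omega
  have egap : ∀ i, i + 1 < k → ee (i+1) ≤ ee i + 3 := by
    intro i hik
    by_contra hcon
    push_neg at hcon
    have hv : ee i + 2 < n := by
      have h1 := emono i (i+1) (by omega) hik
      have h2 := eltn (i+1) hik
      omega
    obtain ⟨u, hu, hu1, hu2⟩ := hdom (ee i + 2) hv
    obtain ⟨jj, rfl⟩ := hsurj u hu
    have hgt : ee i < e jj := by omega
    have hlt2 : (⟨i, by omega⟩ : Fin k) < jj := by
      rw [heek i (by omega)] at hgt
      exact hsm.lt_iff_lt.1 hgt
    have hle : ee (i+1) ≤ e jj := by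
      rw [heek (i+1) hik]
      apply hsm.monotone
      rw [Fin.mk_lt_mk] at hlt2
      rw [Fin.le_def]
      simp only []
      omega
    omega
  have echain : ∀ d i, i + d < k → ee (i+d) ≤ ee i + 3*d := by
    intro d
    induction d with
    | zero => intro i _; simp
    | succ d ih =>
      intro i h
      have h1 := ih i (by omega)
      have h2 := egap (i+d) (by omega)
      have h3 : i + (d+1) = (i+d)+1 := by omega
      rw [h3]; omega
  have eupper : ∀ i, i < k → ee i ≤ 3*i + 1 := by
    intro i h
    have h1 := echain i 0 (by omega)
    rw [Nat.zero_add] at h1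
    omega
  have elast : n ≤ ee (k-1) + 2 := by
    obtain ⟨u, hu, _, hu2⟩ := hdom (n-1) (by omega)
    obtain ⟨jj, rfl⟩ := hsurj u hu
    have hle : e jj ≤ ee (k-1) := by
      rw [heek (k-1) (by omega)]
      apply hsm.monotone
      rw [Fin.le_def]
      have := jj.isLt
      simp only []
      omega
    omega
  have elower : ∀ i, i < k → n ≤ ee i + 3*(k-1-i) + 2 := by
    intro i h
    have h1 := echain (k-1-i) i (by omega)
    have h2 : i + (k-1-i) = k-1 := by omega
    rw [h2] at h1
    omega
  -- define the deficit positions p and q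
  have hPpex : ∃ i, i = k ∨ (i < k ∧ ee i ≤ 3*i) := ⟨k, Or.inl rfl⟩
  have hQqex : ∃ i, i = k ∨ (i < k ∧ ee i + 1 ≤ 3*i) := ⟨k, Or.inl rfl⟩
  set p := Nat.find hPpex with hpdef
  set q := Nat.find hQqex with hqdef
  have hp_spec : p = k ∨ (p < k ∧ ee p ≤ 3*p) := by rw [hpdef]; exact Nat.find_spec hPpex
  have hq_spec : q = k ∨ (q < k ∧ ee q + 1 ≤ 3*q) := by rw [hqdef]; exact Nat.find_spec hQqex
  have hp_min : ∀ i, i < p → ¬(i = k ∨ (i < k ∧ ee i ≤ 3*i)) := by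
    rw [hpdef]; exact fun i h => Nat.find_min hPpex h
  have hq_min : ∀ i, i < q → ¬(i = k ∨ (i < k ∧ ee i + 1 ≤ 3*i)) := by
    rw [hqdef]; exact fun i h => Nat.find_min hQqex h
  have hpk : p ≤ k := by rw [hpdef]; exact Nat.find_le (Or.inl rfl)
  have hqk : q ≤ k := by rw [hqdef]; exact Nat.find_le (Or.inl rfl)
  have hpq : p ≤ q := by
    by_contra hcon
    push_neg at hcon
    rcases hq_spec with h | ⟨h1, h2⟩
    · omega
    · exact (hp_min q hcon) (Or.inr ⟨h1, by omega⟩)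
  have hq1 : 1 ≤ q := by
    rcases hq_spec with h | ⟨h1, h2⟩ <;> omega
  -- persistence inductions
  have persA : ∀ j, p ≤ j → j < k → ee j ≤ 3*j := by
    intro j hpj
    induction j, hpj using Nat.le_induction with
    | base =>
      intro hpltk
      rcases hp_spec with h | ⟨_, h2⟩
      · omega
      · exact h2
    | succ j hj ih =>
      intro hjk
      have h1 := ih (by omega)
      have h2 := egap j (by omega)
      omega
  have persB : ∀ j, q ≤ j → j < k → ee j + 1 ≤ 3*j := by
    intro j hqj
    induction j, hqj using Nat.le_induction with
    | base =>
      intro hqltk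
      rcases hq_spec with h | ⟨_, h2⟩
      · omega
      · exact h2
    | succ j hj ih =>
      intro hjk
      have h1 := ih (by omega)
      have h2 := egap j (by omega)
      omega
  have hval : ∀ i, i < k → ee i = g p q i := by
    intro i hik
    have hub := eupper i hik
    have hlb := elower i hik
    unfold g
    by_cases h1 : p ≤ i
    · by_cases h2 : q ≤ i
      · rw [if_pos h1, if_pos h2]
        have hB := persB i h2 hik
        omega
      · rw [if_pos h1, if_neg h2]
        have hA := persA i h1 hik
        have hq' := hq_min i (by omega)
        push_neg at hq'
        omega
    · have h2 : ¬ q ≤ i := by omega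
      rw [if_neg h1, if_neg h2]
      have hp' := hp_min i (by omega)
      push_neg at hp'
      omega
  refine ⟨p, q, hpq, hqk, fun h => by omega, ?_, ?_, ?_⟩
  · rw [← hval (k-1) (by omega)]; exact elast
  · rw [← hval (k-1) (by omega)]; exact eltn _ (by omega)
  · ext x
    rw [E_mem]
    constructor
    · intro hx
      obtain ⟨i, rfl⟩ := hsurj x hx
      refine ⟨i.val, i.isLt, ?_⟩
      rw [← hval i.val i.isLt, heek i.val i.isLt]
    · rintro ⟨i, hik, rfl⟩
      rw [← hval i hik]
      exact emem i hik

lemma count_res1 {k a b : ℕ} (hab : a ≤ b) (hbk : b ≤ k) :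
    ((E a b k).filter (fun x => x % 3 = 1)).card = a := by
  rw [E, Finset.filter_image]
  have hfil : (Finset.range k).filter (fun i => g a b i % 3 = 1) = Finset.range a := by
    ext i
    simp only [Finset.mem_filter, Finset.mem_range]
    unfold g
    split_ifs <;> omega
  rw [hfil, Finset.card_image_of_injOn, Finset.card_range]
  intro i _ j _ hij
  rcases Nat.lt_trichotomy i j with h | h | h
  · exact absurd hij (Nat.ne_of_lt (g_strict h))
  · exact h
  · exact absurd hij.symm (Nat.ne_of_lt (g_strict h))

lemma count_res2 {k a b : ℕ} (hab : a ≤ b) (hbk : b ≤ k) (hd : a = b → 1 ≤ a) :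
    ((E a b k).filter (fun x => ¬ x % 3 = 2)).card = b := by
  rw [E, Finset.filter_image]
  have hfil : (Finset.range k).filter (fun i => ¬ g a b i % 3 = 2) = Finset.range b := by
    ext i
    simp only [Finset.mem_filter, Finset.mem_range]
    unfold g
    split_ifs <;> omega
  rw [hfil, Finset.card_image_of_injOn, Finset.card_range]
  intro i _ j _ hij
  rcases Nat.lt_trichotomy i j with h | h | h
  · exact absurd hij (Nat.ne_of_lt (g_strict h))
  · exact h
  · exact absurd hij.symm (Nat.ne_of_lt (g_strict h))

lemma E_inj {k p q p' q' : ℕ} (h1 : p ≤ q) (h2 : q ≤ k) (hd : p = q → 1 ≤ p)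
    (h1' : p' ≤ q') (h2' : q' ≤ k) (hd' : p' = q' → 1 ≤ p')
    (hE : E p q k = E p' q' k) : p = p' ∧ q = q' := by
  have c1 := count_res1 h1 h2
  have c1' := count_res1 h1' h2'
  have c2 := count_res2 h1 h2 hd
  have c2' := count_res2 h1' h2' hd'
  rw [hE] at c1 c2
  omega

lemma isDomSet_iff {n : ℕ} (D : Finset (Fin n)) :
    IsDomSet (SimpleGraph.pathGraph n) D ↔ domN n (D.image Fin.val) := by
  constructor
  · intro h
    constructor
    · intro x hx
      simp only [Finset.mem_image] at hx
      obtain ⟨u, _, rfl⟩ := hx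
      exact Finset.mem_range.2 u.isLt
    · intro v hv
      by_cases hvD : (⟨v, hv⟩ : Fin n) ∈ D
      · exact ⟨v, Finset.mem_image.2 ⟨⟨v, hv⟩, hvD, rfl⟩, by omega, by omega⟩
      · obtain ⟨u, hu, hadj⟩ := h _ hvD
        rw [SimpleGraph.pathGraph_adj] at hadj
        exact ⟨u.val, Finset.mem_image.2 ⟨u, hu, rfl⟩, by simp at hadj ⊢ <;> omega,
          by simp at hadj ⊢ <;> omega⟩
  · rintro ⟨hsub, h⟩ v hvD
    obtain ⟨u, hu, h1, h2⟩ := h v.val v.isLt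
    obtain ⟨u', hu', rfl⟩ := Finset.mem_image.1 hu
    refine ⟨u', hu', ?_⟩
    rw [SimpleGraph.pathGraph_adj]
    have hne : u'.val ≠ v.val := by
      intro hh
      exact hvD (by rwa [← Fin.val_injective hh])
    omega

lemma image_attachFin {n : ℕ} (S : Finset ℕ) (h : ∀ m ∈ S, m < n) :
    (S.attachFin h).image Fin.val = S := by
  ext x
  simp only [Finset.mem_image]
  constructor
  · rintro ⟨a, ha, rfl⟩
    exact (Finset.mem_attachFin h).1 ha
  · intro hx
    exact ⟨⟨x, h x hx⟩, (Finset.mem_attachFin h).2 hx, rfl⟩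

lemma sets_eq (n : ℕ) :
    {t | ∃ D : Finset (Fin n), IsDomSet (SimpleGraph.pathGraph n) D ∧ D.card = t}
      = {t | ∃ S : Finset ℕ, domN n S ∧ S.card = t} := by
  ext t
  constructor
  · rintro ⟨D, hD, rfl⟩
    exact ⟨D.image Fin.val, (isDomSet_iff D).1 hD,
      Finset.card_image_of_injective D Fin.val_injective⟩
  · rintro ⟨S, hS, rfl⟩
    have hb : ∀ m ∈ S, m < n := fun m hm => Finset.mem_range.1 (hS.1 hm)
    refine ⟨S.attachFin hb, ?_, ?_⟩
    · rw [isDomSet_iff, image_attachFin]; exact hS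
    · exact Finset.card_attachFin S hb

lemma tau_eq_ncard (n : ℕ) :
    tau (SimpleGraph.pathGraph n)
      = {S : Finset ℕ | domN n S ∧ S.card = domNum (SimpleGraph.pathGraph n)}.ncard := by
  rw [tau]
  have himg : (Finset.image Fin.val) '' (minDomSets (SimpleGraph.pathGraph n))
      = {S : Finset ℕ | domN n S ∧ S.card = domNum (SimpleGraph.pathGraph n)} := by
    ext S
    constructor
    · rintro ⟨D, ⟨hD, hc⟩, rfl⟩
      exact ⟨(isDomSet_iff D).1 hD,
        by rw [Finset.card_image_of_injective D Fin.val_injective]; exact hc⟩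
    · rintro ⟨hS, hc⟩
      have hb : ∀ m ∈ S, m < n := fun m hm => Finset.mem_range.1 (hS.1 hm)
      refine ⟨S.attachFin hb, ⟨?_, ?_⟩, image_attachFin S hb⟩
      · rw [isDomSet_iff, image_attachFin]; exact hS
      · rw [Finset.card_attachFin]; exact hc
  rw [← himg]
  exact (Set.ncard_image_of_injective _ (Finset.image_injective Fin.val_injective)).symm

lemma domNum_path {n : ℕ} (hn : 2 ≤ n) : domNum (SimpleGraph.pathGraph n) = (n+2)/3 := by
  set k := (n+2)/3 with hk
  have hk1 : 1 ≤ k := by omega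
  have hex : ∃ p q : ℕ, n ≤ g p q (k-1) + 2 ∧ g p q (k-1) < n := by
    by_cases h : n % 3 = 1
    · refine ⟨k-1, k, ?_, ?_⟩ <;> (unfold g; split_ifs <;> omega)
    · refine ⟨k, k, ?_, ?_⟩ <;> (unfold g; split_ifs <;> omega)
  obtain ⟨p, q, hg1, hg2⟩ := hex
  have hkmem : k ∈ {t | ∃ S : Finset ℕ, domN n S ∧ S.card = t} :=
    ⟨E p q k, E_domN hk1 hg1 hg2, card_E p q k⟩
  rw [domNum, sets_eq n]
  have hlow : ∀ t ∈ {t | ∃ S : Finset ℕ, domN n S ∧ S.card = t}, k ≤ t := by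
    rintro t ⟨S, hS, rfl⟩
    have := domN_lower hS
    omega
  exact le_antisymm (Nat.sInf_le hkmem) (hlow _ (Nat.sInf_mem ⟨k, hkmem⟩))

def idxSet (n k : ℕ) : Finset (ℕ × ℕ) :=
  (Finset.range (k+1) ×ˢ Finset.range (k+1)).filter
    (fun pq => pq.1 ≤ pq.2 ∧ pq.2 ≤ k ∧ (pq.1 = pq.2 → 1 ≤ pq.1) ∧
      n ≤ g pq.1 pq.2 (k-1) + 2 ∧ g pq.1 pq.2 (k-1) < n)

lemma mem_idxSet {n k p q : ℕ} :
    (p, q) ∈ idxSet n k ↔ p ≤ q ∧ q ≤ k ∧ (p = q → 1 ≤ p) ∧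
      n ≤ g p q (k-1) + 2 ∧ g p q (k-1) < n := by
  simp only [idxSet, Finset.mem_filter, Finset.mem_product, Finset.mem_range]
  constructor
  · tauto
  · intro h
    exact ⟨⟨by omega, by omega⟩, h⟩

lemma tau_eq_card {n : ℕ} (hn : 2 ≤ n) :
    tau (SimpleGraph.pathGraph n) = (idxSet n ((n+2)/3)).card := by
  have hk1 : 1 ≤ (n+2)/3 := by omega
  have hn3 : n ≤ 3*((n+2)/3) := by omega
  have hn2 : 3*((n+2)/3) ≤ n + 2 := by omega
  rw [tau_eq_ncard, domNum_path hn]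
  set k := (n+2)/3 with hk
  have hMeq : {S : Finset ℕ | domN n S ∧ S.card = k}
      = ↑((idxSet n k).image (fun pq => E pq.1 pq.2 k)) := by
    ext S
    simp only [Set.mem_setOf_eq, Finset.coe_image, Set.mem_image, Finset.mem_coe]
    constructor
    · rintro ⟨hS, hc⟩
      obtain ⟨p, q, h1, h2, h3, h4, h5, rfl⟩ := classify hk1 hn3 hn2 hn hS hc
      exact ⟨(p, q), mem_idxSet.2 ⟨h1, h2, h3, h4, h5⟩, rfl⟩
    · rintro ⟨⟨p, q⟩, hpq, rfl⟩
      obtain ⟨h1, h2, h3, h4, h5⟩ := mem_idxSet.1 hpq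
      exact ⟨E_domN hk1 h4 h5, card_E p q k⟩
  rw [hMeq, Set.ncard_coe_finset]
  apply Finset.card_image_of_injOn
  rintro ⟨p, q⟩ hpq ⟨p', q'⟩ hpq' hEE
  obtain ⟨h1, h2, h3, _, _⟩ := mem_idxSet.1 hpq
  obtain ⟨h1', h2', h3', _, _⟩ := mem_idxSet.1 hpq'
  obtain ⟨hp, hq⟩ := E_inj h1 h2 h3 h1' h2' h3' hEE
  simp [hp, hq]

lemma count_case0 {n : ℕ} (hn : 2 ≤ n) (hm : n % 3 = 0) :
    (idxSet n ((n+2)/3)).card = 1 := by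
  have : idxSet n ((n+2)/3) = {((n+2)/3, (n+2)/3)} := by
    ext ⟨p, q⟩
    rw [idxSet, Finset.mem_filter]
    simp only [idxSet, g, Finset.mem_filter, Finset.mem_product, Finset.mem_range,
      Finset.mem_singleton, Prod.mk.injEq]
    split_ifs <;> omega
  rw [this, Finset.card_singleton]

lemma count_case2 {n : ℕ} (hn : 2 ≤ n) (hm : n % 3 = 2) :
    (idxSet n ((n+2)/3)).card = 2 + n / 3 := by
  set k := (n+2)/3 with hk
  have : idxSet n k = Finset.range (k+1) ×ˢ {k} := by
    ext ⟨p, q⟩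
    rw [idxSet, Finset.mem_filter]
    simp only [idxSet, g, Finset.mem_filter, Finset.mem_product, Finset.mem_range,
      Finset.mem_singleton]
    split_ifs <;> omega
  rw [this, Finset.card_product, Finset.card_range, Finset.card_singleton]
  omega

lemma count_case1 {n : ℕ} (hn : 2 ≤ n) (hm : n % 3 = 1) :
    (idxSet n ((n+2)/3)).card = n + (n / 3) * (n / 3 - 1) / 2 := by
  set m := n / 3 with hmdef
  have hkm : (n+2)/3 = m + 1 := by omega
  rw [hkm]
  have hset : idxSet n (m+1)
      = (Finset.range (m+1)).biUnion (fun p => {p} ×ˢ Finset.Ico (max p 1) (m+2)) := by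
    ext ⟨p, q⟩
    rw [idxSet, Finset.mem_filter]
    simp only [idxSet, g, Finset.mem_filter, Finset.mem_product, Finset.mem_range,
      Finset.mem_biUnion, Finset.mem_singleton, Finset.mem_Ico]
    constructor
    · intro h
      refine ⟨p, ?_, rfl, ?_, ?_⟩ <;> (split_ifs at h <;> omega)
    · rintro ⟨a, ha, rfl, h1, h2⟩
      split_ifs <;> omega
  rw [hset, Finset.card_biUnion]
  · have hterm : ∀ p ∈ Finset.range (m+1),
        ({p} ×ˢ Finset.Ico (max p 1) (m+2)).card = m + 2 - max p 1 := by
      intro p _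
      rw [Finset.card_product, Finset.card_singleton, Nat.card_Ico, one_mul]
    rw [Finset.sum_congr rfl hterm]
    have hrefl := Finset.sum_range_reflect (fun j => m + 2 - max j 1) (m+1)
    rw [← hrefl]
    rw [Finset.sum_range_succ]
    have hcong : ∀ j ∈ Finset.range m, m + 2 - max (m + 1 - 1 - j) 1 = j + 2 := by
      intro j hj
      rw [Finset.mem_range] at hj
      have : max (m + 1 - 1 - j) 1 = m - j := by omega
      omega
    rw [Finset.sum_congr rfl hcong]
    have hsum : ∀ mm : ℕ, (∑ j ∈ Finset.range mm, (j + 2)) = (∑ j ∈ Finset.range mm, j) + 2 * mm := by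
      intro mm
      rw [Finset.sum_add_distrib, Finset.sum_const, Finset.card_range]
      simp [smul_eq_mul]; ring
    rw [hsum]
    have hg := Finset.sum_range_id_mul_two m
    omega
  · intro a ha b hb hab
    simp only [Finset.disjoint_left]
    rintro ⟨x, y⟩ hx hy
    simp only [Finset.mem_product, Finset.mem_singleton] at hx hy
    exact hab (hx.1 ▸ hy.1 ▸ rfl)

end Stmt15Aux

theorem stmt_15 (n : ℕ) (hn : 2 ≤ n) :
    (n % 3 = 0 → tau (SimpleGraph.pathGraph n) = 1) ∧
    (n % 3 = 1 → tau (SimpleGraph.pathGraph n) = n + (n / 3) * (n / 3 - 1) / 2) ∧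
    (n % 3 = 2 → tau (SimpleGraph.pathGraph n) = 2 + n / 3) := by
  refine ⟨?_, ?_, ?_⟩ <;> intro hmod <;> rw [Stmt15Aux.tau_eq_card hn]
  · exact Stmt15Aux.count_case0 hn hmod
  · exact Stmt15Aux.count_case1 hn hmod
  · exact Stmt15Aux.count_case2 hn hmod
end

section
/- For n ≥ 3, τ(P_n) ≤ τ(C_n), where P_n is the path obtained from the cycle C_n by deleting one edge. -/
lemma dom_mono {V : Type*} {G H : SimpleGraph V} (h : G ≤ H) {D : Finset V}
    (hD : IsDomSet G D) : IsDomSet H D := by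
  intro v hv
  obtain ⟨u, hu, hadj⟩ := hD v hv
  exact ⟨u, hu, h hadj⟩

lemma path_dom (n : ℕ) (hn : 3 ≤ n) :
    ∃ D : Finset (Fin n), IsDomSet (SimpleGraph.pathGraph n) D ∧ D.card = (n + 2) / 3 := by
  refine ⟨(Finset.range ((n+2)/3)).image
    (fun k => (⟨min (3*k+1) (n-1), by omega⟩ : Fin n)), ?_, ?_⟩
  · intro v hv
    refine ⟨⟨min (3*(v.val/3)+1) (n-1), by omega⟩, ?_, ?_⟩
    · refine Finset.mem_image.mpr ⟨v.val/3, Finset.mem_range.mpr ?_, rfl⟩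
      have := v.isLt
      omega
    · rw [SimpleGraph.pathGraph_adj]
      have hne : v.val ≠ min (3*(v.val/3)+1) (n-1) := by
        intro h
        apply hv
        refine Finset.mem_image.mpr ⟨v.val/3, Finset.mem_range.mpr ?_, ?_⟩
        · have := v.isLt; omega
        · exact Fin.ext h.symm
      have := v.isLt
      simp only []
      omega
  · rw [Finset.card_image_of_injOn, Finset.card_range]
    intro a ha b hb hab
    simp only [Finset.mem_coe, Finset.mem_range] at ha hb
    have := Fin.mk.injEq (min (3*a+1) (n-1)) _ (min (3*b+1) (n-1)) _ ▸ hab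
    have h2 : min (3*a+1) (n-1) = min (3*b+1) (n-1) := Fin.mk.inj_iff.mp hab
    omega

lemma cycle_lb (n : ℕ) (hn : 3 ≤ n) (D : Finset (Fin n))
    (hD : IsDomSet (SimpleGraph.cycleGraph n) D) : (n + 2) / 3 ≤ D.card := by
  obtain ⟨m, rfl⟩ : ∃ m, n = m + 3 := ⟨n - 3, by omega⟩
  have hsub : (Finset.univ : Finset (Fin (m+3))) ⊆
      D.biUnion (fun u => {u - 1, u, u + 1}) := by
    intro v _
    by_cases hv : v ∈ D
    · exact Finset.mem_biUnion.mpr ⟨v, hv, by simp⟩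
    · obtain ⟨u, hu, hadj⟩ := hD v hv
      rw [SimpleGraph.cycleGraph_adj'] at hadj
      refine Finset.mem_biUnion.mpr ⟨u, hu, ?_⟩
      simp only [Finset.mem_insert, Finset.mem_singleton]
      rcases hadj with h | h
      · left
        have h1 : u - v = 1 := Fin.ext (by simpa using h)
        rw [← h1]; exact (sub_sub_cancel u v).symm
      · right; right
        have h1 : v - u = 1 := Fin.ext (by simpa using h)
        rw [← h1]; exact (add_sub_cancel u v).symm
  have h1 : (m + 3) ≤ 3 * D.card := by
    calc m + 3 = (Finset.univ : Finset (Fin (m+3))).card := by simp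
    _ ≤ (D.biUnion (fun u => {u - 1, u, u + 1})).card := Finset.card_le_card hsub
    _ ≤ ∑ u ∈ D, ({u - 1, u, u + 1} : Finset (Fin (m+3))).card := Finset.card_biUnion_le
    _ ≤ ∑ u ∈ D, 3 := Finset.sum_le_sum (fun u _ => by
        apply le_trans (Finset.card_insert_le _ _)
        apply Nat.succ_le_succ
        exact le_trans (Finset.card_insert_le _ _) (by simp))
    _ = 3 * D.card := by rw [Finset.sum_const, smul_eq_mul, mul_comm]
  omega

theorem stmt_16 (n : ℕ) (hn : 3 ≤ n) :
    tau (SimpleGraph.pathGraph n) ≤ tau (SimpleGraph.cycleGraph n) := by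
  have hneP : {k | ∃ D : Finset (Fin n), IsDomSet (SimpleGraph.pathGraph n) D ∧ D.card = k}.Nonempty :=
    ⟨Finset.univ.card, Finset.univ, fun v hv => absurd (Finset.mem_univ v) hv, rfl⟩
  have hneC : {k | ∃ D : Finset (Fin n), IsDomSet (SimpleGraph.cycleGraph n) D ∧ D.card = k}.Nonempty :=
    ⟨Finset.univ.card, Finset.univ, fun v hv => absurd (Finset.mem_univ v) hv, rfl⟩
  obtain ⟨D0, hD0, hc0⟩ := path_dom n hn
  have h1 : domNum (SimpleGraph.pathGraph n) ≤ (n + 2) / 3 :=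
    Nat.sInf_le ⟨D0, hD0, hc0⟩
  have h2 : (n + 2) / 3 ≤ domNum (SimpleGraph.cycleGraph n) := by
    apply le_csInf hneC
    rintro k ⟨D, hD, rfl⟩
    exact cycle_lb n hn D hD
  have h3 : domNum (SimpleGraph.cycleGraph n) ≤ domNum (SimpleGraph.pathGraph n) := by
    obtain ⟨D, hD, hc⟩ := Nat.sInf_mem hneP
    exact le_trans (Nat.sInf_le ⟨D, dom_mono SimpleGraph.pathGraph_le_cycleGraph hD, rfl⟩) (le_of_eq hc)
  have heq : domNum (SimpleGraph.pathGraph n) = domNum (SimpleGraph.cycleGraph n) :=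
    le_antisymm (h1.trans h2) h3
  have hsub : minDomSets (SimpleGraph.pathGraph n) ⊆ minDomSets (SimpleGraph.cycleGraph n) := by
    rintro D ⟨hd, hc⟩
    exact ⟨dom_mono SimpleGraph.pathGraph_le_cycleGraph hd, hc.trans heq⟩
  exact Set.ncard_le_ncard hsub (Set.toFinite _)
end

section
/- Let P_{3k+1} (k ≥ 1) have vertices labeled 1,…,3k+1 along the path, and write v = 3q + r with 0 ≤ r < 3. Then DV(v) = q(q+3)/2 if r = 0; DV(v) = (q+1)(k−q+1) if r = 1; and DV(v) = (k−q)(k−q+3)/2 if r = 2. -/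
namespace P18

open Finset

def posN (t0 t1 i : ℕ) : ℕ := if i < t0 then 3*i+1 else if i < t1 then 3*i else 3*i - 1

def Adm (k t0 t1 : ℕ) : Prop := t0 ≤ t1 ∧ t1 ≤ k+1 ∧ 1 ≤ t1 ∧ t0 ≤ k

instance (k t0 t1 : ℕ) : Decidable (Adm k t0 t1) := by unfold Adm; infer_instance

lemma posN_spec (t0 t1 i : ℕ) (h1 : 1 ≤ t1) :
    (i < t0 ∧ posN t0 t1 i = 3*i+1) ∨ (t0 ≤ i ∧ i < t1 ∧ posN t0 t1 i = 3*i) ∨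
    (t1 ≤ i ∧ posN t0 t1 i + 1 = 3*i) := by
  unfold posN; split_ifs <;> omega

lemma posN_le {k t0 t1 : ℕ} (h : Adm k t0 t1) {i : ℕ} (hi : i ≤ k) : posN t0 t1 i ≤ 3*k := by
  obtain ⟨h1,h2,h3,h4⟩ := h
  rcases posN_spec t0 t1 i h3 with ⟨a,b⟩|⟨a,b,c⟩|⟨a,b⟩ <;> omega

def Fv (k t0 t1 : ℕ) : Finset (Fin (3*k+1)) :=
  (range (k+1)).image (fun i => ⟨min (posN t0 t1 i) (3*k), by omega⟩)

lemma mem_Fv {k t0 t1 : ℕ} (h : Adm k t0 t1) (x : Fin (3*k+1)) :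
    x ∈ Fv k t0 t1 ↔ ∃ i, i ≤ k ∧ posN t0 t1 i = x.val := by
  simp only [Fv, mem_image, mem_range, Fin.ext_iff]
  constructor
  · rintro ⟨i, hi, hx⟩
    refine ⟨i, by omega, ?_⟩
    have hx' : min (posN t0 t1 i) (3*k) = x.val := hx
    rw [Nat.min_eq_left (posN_le h (show i ≤ k by omega))] at hx'
    exact hx'
  · rintro ⟨i, hi, hx⟩
    refine ⟨i, by omega, ?_⟩
    show min (posN t0 t1 i) (3*k) = x.val
    rw [Nat.min_eq_left (posN_le h hi)]
    exact hx

lemma card_Fv {k t0 t1 : ℕ} (h : Adm k t0 t1) : (Fv k t0 t1).card = k+1 := by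
  unfold Fv
  rw [Finset.card_image_of_injOn, card_range]
  intro i hi j hj he
  simp only [Finset.coe_range, Set.mem_Iio] at hi hj
  have h1 := posN_le h (show i ≤ k by omega)
  have h2 := posN_le h (show j ≤ k by omega)
  have hv : min (posN t0 t1 i) (3*k) = min (posN t0 t1 j) (3*k) := congrArg Fin.val he
  rw [Nat.min_eq_left h1, Nat.min_eq_left h2] at hv
  rcases posN_spec t0 t1 i h.2.2.1 with ⟨a,b⟩|⟨a,b,c⟩|⟨a,b⟩ <;>
    rcases posN_spec t0 t1 j h.2.2.1 with ⟨a2,b2⟩|⟨a2,b2,c2⟩|⟨a2,b2⟩ <;> omega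

lemma dom_Fv {k t0 t1 : ℕ} (h : Adm k t0 t1) :
    IsDomSet (SimpleGraph.pathGraph (3*k+1)) (Fv k t0 t1) := by
  intro x hx
  have ht1 := h.2.2.1
  have hnot : ∀ i, i ≤ k → posN t0 t1 i ≠ x.val := by
    intro i hi he; exact hx ((mem_Fv h x).mpr ⟨i, hi, he⟩)
  have hxlt : x.val < 3*k+1 := x.isLt
  obtain ⟨ha1, ha2, ha3, ha4⟩ := h
  have h : Adm k t0 t1 := ⟨ha1, ha2, ha3, ha4⟩
  have key : ∃ i, i ≤ k ∧ (posN t0 t1 i + 1 = x.val ∨ x.val + 1 = posN t0 t1 i) := by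
    have h3 : x.val % 3 = 0 ∨ x.val % 3 = 1 ∨ x.val % 3 = 2 := by omega
    rcases h3 with h3 | h3 | h3
    · refine ⟨x.val / 3, by omega, ?_⟩
      have hne := hnot (x.val/3) (by omega)
      rcases posN_spec t0 t1 (x.val/3) ht1 with ⟨a,b⟩|⟨a,b,c⟩|⟨a,b⟩ <;> omega
    · have hik : x.val / 3 + 1 ≤ k := by omega
      have hne := hnot (x.val/3) (by omega)
      rcases posN_spec t0 t1 (x.val/3) ht1 with ⟨a,b⟩|⟨a,b,c⟩|⟨a,b⟩
      · omega
      · exact ⟨x.val/3, by omega, by omega⟩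
      · refine ⟨x.val/3+1, hik, ?_⟩
        rcases posN_spec t0 t1 (x.val/3+1) ht1 with ⟨a2,b2⟩|⟨a2,b2,c2⟩|⟨a2,b2⟩ <;> omega
    · have hik : x.val / 3 + 1 ≤ k := by omega
      have hne := hnot (x.val/3+1) hik
      rcases posN_spec t0 t1 (x.val/3+1) ht1 with ⟨a2,b2⟩|⟨a2,b2,c2⟩|⟨a2,b2⟩
      · refine ⟨x.val/3, by omega, ?_⟩
        rcases posN_spec t0 t1 (x.val/3) ht1 with ⟨a,b⟩|⟨a,b,c⟩|⟨a,b⟩ <;> omega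
      · exact ⟨x.val/3+1, hik, by omega⟩
      · omega
  obtain ⟨i, hik, hadj⟩ := key
  have hle := posN_le h hik
  refine ⟨⟨min (posN t0 t1 i) (3*k), by omega⟩, ?_, ?_⟩
  · exact Finset.mem_image.mpr ⟨i, Finset.mem_range.mpr (by omega), rfl⟩
  · rw [SimpleGraph.pathGraph_adj]
    show min (posN t0 t1 i) (3*k) + 1 = x.val ∨ x.val + 1 = min (posN t0 t1 i) (3*k)
    omega

lemma lower_char (S : Finset ℕ) (h : ∀ i, i+1 ∈ S → i ∈ S) (x : ℕ) : x ∈ S ↔ x < S.card := by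
  have hdown : ∀ d y, y + d ∈ S → y ∈ S := by
    intro d
    induction d with
    | zero => intro y hy; simpa using hy
    | succ n ih =>
      intro y hy
      exact ih y (h _ (by rw [show y + n + 1 = y + (n+1) by ring]; exact hy))
  constructor
  · intro hx
    have hsub : range (x+1) ⊆ S := by
      intro y hy
      rw [mem_range] at hy
      exact hdown (x - y) y (by rw [show y + (x - y) = x by omega]; exact hx)
    have := Finset.card_le_card hsub
    rw [card_range] at this; omega
  · intro hx
    by_contra hxs
    have hsub : S ⊆ range x := by
      intro y hy
      rw [mem_range]
      by_contra hyx
      exact hxs (hdown (y - x) x (by rw [show x + (y - x) = y by omega]; exact hy))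
    have := Finset.card_le_card hsub
    rw [card_range] at this; omega

lemma exists_blocks {k : ℕ} {D : Finset (Fin (3*k+1))}
    (hD : IsDomSet (SimpleGraph.pathGraph (3*k+1)) D) :
    ∃ f : ℕ → Fin (3*k+1), ∀ i, f i ∈ D ∧ (i ≤ k → (3*i ≤ (f i).val + 1 ∧ (f i).val ≤ 3*i+1)) := by
  have hne : ∀ i : ℕ, ∃ u : Fin (3*k+1), u ∈ D ∧ (i ≤ k → (3*i ≤ u.val+1 ∧ u.val ≤ 3*i+1)) := by
    intro i
    by_cases hik : i ≤ k
    · by_cases hw : (⟨3*i, by omega⟩ : Fin (3*k+1)) ∈ D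
      · exact ⟨_, hw, fun _ => by constructor <;> simp <;> omega⟩
      · obtain ⟨u, hu, hadj⟩ := hD _ hw
        rw [SimpleGraph.pathGraph_adj] at hadj
        refine ⟨u, hu, fun _ => ?_⟩
        have hadj' : u.val + 1 = 3*i ∨ 3*i + 1 = u.val := hadj
        omega
    · by_cases h0 : (⟨0, by omega⟩ : Fin (3*k+1)) ∈ D
      · exact ⟨_, h0, fun hle => absurd hle hik⟩
      · obtain ⟨u, hu, _⟩ := hD _ h0
        exact ⟨u, hu, fun hle => absurd hle hik⟩
  choose f hf using hne
  exact ⟨f, hf⟩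

lemma card_ge {k : ℕ} {D : Finset (Fin (3*k+1))}
    (hD : IsDomSet (SimpleGraph.pathGraph (3*k+1)) D) : k+1 ≤ D.card := by
  obtain ⟨f, hf⟩ := exists_blocks hD
  have hle : (range (k+1)).card ≤ D.card := by
    apply Finset.card_le_card_of_injOn f (fun i hi => (hf i).1)
    intro i hi j hj hij
    simp only [Finset.coe_range, Set.mem_Iio] at hi hj
    have h1 := (hf i).2 (by omega)
    have h2 := (hf j).2 (by omega)
    have : (f i).val = (f j).val := by rw [hij]
    omega
  simpa using hle

lemma struct {k : ℕ} {D : Finset (Fin (3*k+1))}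
    (hD : IsDomSet (SimpleGraph.pathGraph (3*k+1)) D) (hc : D.card = k+1) :
    ∃ t0 t1, Adm k t0 t1 ∧ D = Fv k t0 t1 := by
  obtain ⟨f, hf⟩ := exists_blocks hD
  have hinj : Set.InjOn f ↑(range (k+1)) := by
    intro i hi j hj hij
    simp only [Finset.coe_range, Set.mem_Iio] at hi hj
    have h1 := (hf i).2 (by omega)
    have h2 := (hf j).2 (by omega)
    have : (f i).val = (f j).val := by rw [hij]
    omega
  have himg : (range (k+1)).image f = D := by
    apply Finset.eq_of_subset_of_card_le
    · intro x hx
      obtain ⟨i, _, rfl⟩ := Finset.mem_image.mp hx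
      exact (hf i).1
    · rw [Finset.card_image_of_injOn hinj, card_range, hc]
  have hmemD : ∀ u ∈ D, ∃ j, j ≤ k ∧ f j = u := by
    intro u hu
    rw [← himg] at hu
    obtain ⟨j, hj, hfj⟩ := Finset.mem_image.mp hu
    exact ⟨j, by simpa using Nat.lt_succ_iff.mp (Finset.mem_range.mp hj), hfj⟩
  have hdom : ∀ w : Fin (3*k+1), ∃ u ∈ D,
      u.val + 1 = w.val ∨ w.val + 1 = u.val ∨ u.val = w.val := by
    intro w
    by_cases hw : w ∈ D
    · exact ⟨w, hw, Or.inr (Or.inr rfl)⟩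
    · obtain ⟨u, hu, hadj⟩ := hD w hw
      rw [SimpleGraph.pathGraph_adj] at hadj
      exact ⟨u, hu, by tauto⟩
  have hstepA : ∀ i, i+1 ∈ (range (k+1)).filter (fun i => (f i).val = 3*i+1) →
      i ∈ (range (k+1)).filter (fun i => (f i).val = 3*i+1) := by
    intro i hi1
    simp only [mem_filter, mem_range] at hi1 ⊢
    obtain ⟨hik, hval⟩ := hi1
    refine ⟨by omega, ?_⟩
    obtain ⟨u, hu, hadj⟩ := hdom ⟨3*i+2, by omega⟩
    obtain ⟨j, hj, rfl⟩ := hmemD u hu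
    have hbj := (hf j).2 hj
    have hbi := (hf i).2 (by omega)
    have hbi1 := (hf (i+1)).2 (by omega)
    have hadj' : (f j).val + 1 = 3*i+2 ∨ 3*i+2 + 1 = (f j).val ∨ (f j).val = 3*i+2 := by
      simpa using hadj
    have hji : j = i ∨ j = i+1 := by omega
    rcases hji with rfl | rfl <;> omega
  have hstepB : ∀ i, i+1 ∈ (range (k+1)).filter (fun i => 3*i ≤ (f i).val) →
      i ∈ (range (k+1)).filter (fun i => 3*i ≤ (f i).val) := by
    intro i hi1
    simp only [mem_filter, mem_range] at hi1 ⊢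
    obtain ⟨hik, hval⟩ := hi1
    refine ⟨by omega, ?_⟩
    obtain ⟨u, hu, hadj⟩ := hdom ⟨3*i+1, by omega⟩
    obtain ⟨j, hj, rfl⟩ := hmemD u hu
    have hbj := (hf j).2 hj
    have hbi := (hf i).2 (by omega)
    have hbi1 := (hf (i+1)).2 (by omega)
    have hadj' : (f j).val + 1 = 3*i+1 ∨ 3*i+1 + 1 = (f j).val ∨ (f j).val = 3*i+1 := by
      simpa using hadj
    have hji : j = i ∨ j = i+1 := by omega
    rcases hji with rfl | rfl <;> omega
  set A := (range (k+1)).filter (fun i => (f i).val = 3*i+1) with hA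
  set Bs := (range (k+1)).filter (fun i => 3*i ≤ (f i).val) with hB
  have hAchar := lower_char A hstepA
  have hBchar := lower_char Bs hstepB
  have hadm : Adm k A.card Bs.card := by
    refine ⟨?_, ?_, ?_, ?_⟩
    · apply Finset.card_le_card
      intro x hx
      simp only [hA, hB, mem_filter, mem_range] at hx ⊢
      omega
    · exact (Finset.card_filter_le _ _).trans (by simp)
    · apply Finset.card_pos.mpr
      exact ⟨0, by simp [hB]⟩
    · have hk1 : k ∉ A := by
        simp only [hA, mem_filter, mem_range]
        intro hcon
        have := (f k).isLt
        omega
      have hsub : A ⊆ range (k+1) := filter_subset _ _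
      have hlt : A.card < (range (k+1)).card :=
        Finset.card_lt_card ((Finset.ssubset_iff_of_subset hsub).mpr
          ⟨k, by simp, hk1⟩)
      simp only [card_range] at hlt
      omega
  refine ⟨A.card, Bs.card, hadm, ?_⟩
  have hAmem : ∀ x, x ∈ A ↔ (x < k+1 ∧ (f x).val = 3*x+1) := by
    intro x; rw [hA, mem_filter, mem_range]
  have hBmem : ∀ x, x ∈ Bs ↔ (x < k+1 ∧ 3*x ≤ (f x).val) := by
    intro x; rw [hB, mem_filter, mem_range]
  have hvals : ∀ i, i ≤ k → (f i).val = posN A.card Bs.card i := by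
    intro i hi
    have hik1 : i < k+1 := by omega
    have hAc := (hAmem i).symm.trans (hAchar i)
    have hBc := (hBmem i).symm.trans (hBchar i)
    have hb := (hf i).2 hi
    rcases posN_spec A.card Bs.card i hadm.2.2.1 with ⟨a,b⟩|⟨a,b,c⟩|⟨a,b⟩ <;> omega
  rw [← himg]
  unfold Fv
  apply Finset.image_congr
  intro i hi
  simp only [Finset.coe_range, Set.mem_Iio] at hi
  have hik : i ≤ k := by omega
  apply Fin.ext
  show (f i).val = min (posN A.card Bs.card i) (3*k)
  rw [hvals i hik, Nat.min_eq_left (posN_le hadm hik)]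

lemma domNum_path (k : ℕ) : domNum (SimpleGraph.pathGraph (3*k+1)) = k+1 := by
  have hadm : Adm k 0 1 := ⟨by omega, by omega, le_refl 1, by omega⟩
  have hmem : (k+1) ∈ {n | ∃ D : Finset (Fin (3*k+1)),
      IsDomSet (SimpleGraph.pathGraph (3*k+1)) D ∧ D.card = n} :=
    ⟨Fv k 0 1, dom_Fv hadm, card_Fv hadm⟩
  refine le_antisymm (Nat.sInf_le hmem) (le_csInf ⟨_, hmem⟩ ?_)
  rintro n ⟨D, hD, rfl⟩
  exact card_ge hD

lemma filter_res1 {k t0 t1 : ℕ} (h : Adm k t0 t1) :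
    ((Fv k t0 t1).filter (fun x => x.val % 3 = 1)).card = t0 := by
  have ha1 := h.1
  unfold Fv
  rw [Finset.filter_image, Finset.card_image_of_injOn]
  · have : (range (k+1)).filter
        (fun i => (⟨min (posN t0 t1 i) (3*k), by omega⟩ : Fin (3*k+1)).val % 3 = 1) = range t0 := by
      ext i
      simp only [mem_filter, mem_range]
      constructor
      · rintro ⟨hik, hmod⟩
        have hmod' : min (posN t0 t1 i) (3*k) % 3 = 1 := hmod
        rw [Nat.min_eq_left (posN_le h (by omega))] at hmod'
        rcases posN_spec t0 t1 i h.2.2.1 with ⟨a,b⟩|⟨a,b,c⟩|⟨a,b⟩ <;> omega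
      · intro hit0
        have hik : i < k + 1 := by have := h.2.2.2; omega
        refine ⟨hik, ?_⟩
        show min (posN t0 t1 i) (3*k) % 3 = 1
        rw [Nat.min_eq_left (posN_le h (by omega))]
        rcases posN_spec t0 t1 i h.2.2.1 with ⟨a,b⟩|⟨a,b,c⟩|⟨a,b⟩ <;> omega
    rw [this, card_range]
  · intro i hi j hj he
    simp only [Finset.coe_filter, mem_range, Set.mem_setOf_eq] at hi hj
    have h1 := posN_le h (show i ≤ k by omega)
    have h2 := posN_le h (show j ≤ k by omega)
    have hv : min (posN t0 t1 i) (3*k) = min (posN t0 t1 j) (3*k) := congrArg Fin.val he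
    rw [Nat.min_eq_left h1, Nat.min_eq_left h2] at hv
    rcases posN_spec t0 t1 i h.2.2.1 with ⟨a,b⟩|⟨a,b,c⟩|⟨a,b⟩ <;>
      rcases posN_spec t0 t1 j h.2.2.1 with ⟨a2,b2⟩|⟨a2,b2,c2⟩|⟨a2,b2⟩ <;> omega

lemma filter_res0 {k t0 t1 : ℕ} (h : Adm k t0 t1) :
    ((Fv k t0 t1).filter (fun x => x.val % 3 = 0)).card = t1 - t0 := by
  unfold Fv
  rw [Finset.filter_image, Finset.card_image_of_injOn]
  · have : (range (k+1)).filter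
        (fun i => (⟨min (posN t0 t1 i) (3*k), by omega⟩ : Fin (3*k+1)).val % 3 = 0) = Ico t0 t1 := by
      ext i
      simp only [mem_filter, mem_range, Finset.mem_Ico]
      constructor
      · rintro ⟨hik, hmod⟩
        have hmod' : min (posN t0 t1 i) (3*k) % 3 = 0 := hmod
        rw [Nat.min_eq_left (posN_le h (by omega))] at hmod'
        rcases posN_spec t0 t1 i h.2.2.1 with ⟨a,b⟩|⟨a,b,c⟩|⟨a,b⟩ <;> omega
      · intro hit
        have hik : i < k + 1 := by have := h.2.1; omega
        refine ⟨hik, ?_⟩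
        show min (posN t0 t1 i) (3*k) % 3 = 0
        rw [Nat.min_eq_left (posN_le h (by omega))]
        rcases posN_spec t0 t1 i h.2.2.1 with ⟨a,b⟩|⟨a,b,c⟩|⟨a,b⟩ <;> omega
    rw [this, Nat.card_Ico]
  · intro i hi j hj he
    simp only [Finset.coe_filter, mem_range, Set.mem_setOf_eq] at hi hj
    have h1 := posN_le h (show i ≤ k by omega)
    have h2 := posN_le h (show j ≤ k by omega)
    have hv : min (posN t0 t1 i) (3*k) = min (posN t0 t1 j) (3*k) := congrArg Fin.val he
    rw [Nat.min_eq_left h1, Nat.min_eq_left h2] at hv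
    rcases posN_spec t0 t1 i h.2.2.1 with ⟨a,b⟩|⟨a,b,c⟩|⟨a,b⟩ <;>
      rcases posN_spec t0 t1 j h.2.2.1 with ⟨a2,b2⟩|⟨a2,b2,c2⟩|⟨a2,b2⟩ <;> omega

lemma Fv_inj {k t0 t1 t0' t1' : ℕ} (h : Adm k t0 t1) (h' : Adm k t0' t1')
    (he : Fv k t0 t1 = Fv k t0' t1') : t0 = t0' ∧ t1 = t1' := by
  have e1 : t0 = t0' := by
    have := filter_res1 h
    rw [he, filter_res1 h'] at this
    omega
  have e0 : t1 - t0 = t1' - t0' := by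
    have := filter_res0 h
    rw [he, filter_res0 h'] at this
    omega
  have := h.1
  have := h'.1
  omega

lemma DV_eq (k : ℕ) (v : Fin (3*k+1)) :
    DV (SimpleGraph.pathGraph (3*k+1)) v =
      (((range (k+2)) ×ˢ (range (k+2))).filter
        (fun p => Adm k p.1 p.2 ∧ v ∈ Fv k p.1 p.2)).card := by
  set Tf := ((range (k+2)) ×ˢ (range (k+2))).filter
        (fun p => Adm k p.1 p.2 ∧ v ∈ Fv k p.1 p.2) with hTf
  have hset : {D ∈ minDomSets (SimpleGraph.pathGraph (3*k+1)) | v ∈ D} =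
      ↑(Tf.image (fun p => Fv k p.1 p.2)) := by
    ext D
    simp only [Set.mem_sep_iff, minDomSets, Set.mem_setOf_eq, domNum_path,
      Finset.coe_image, Set.mem_image, Finset.mem_coe, hTf, mem_filter,
      mem_product, mem_range]
    constructor
    · rintro ⟨⟨hdom, hcard⟩, hv⟩
      obtain ⟨t0, t1, hadm, rfl⟩ := struct hdom hcard
      exact ⟨(t0, t1), ⟨⟨by have := hadm.2.2.2; omega, by have := hadm.2.1; omega⟩,
        hadm, hv⟩, rfl⟩
    · rintro ⟨⟨t0, t1⟩, ⟨⟨hr1, hr2⟩, hadm, hv⟩, rfl⟩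
      exact ⟨⟨dom_Fv hadm, card_Fv hadm⟩, hv⟩
  rw [DV, hset, Set.ncard_coe_finset]
  apply Finset.card_image_of_injOn
  intro p hp p' hp' he
  simp only [hTf, Finset.mem_coe, mem_filter] at hp hp'
  obtain ⟨e1, e2⟩ := Fv_inj hp.2.1 hp'.2.1 he
  exact Prod.ext e1 e2

lemma tri_card (m : ℕ) : ((range m).sigma (fun i => range (i+2))).card * 2 = m*(m+3) := by
  rw [Finset.card_sigma]
  simp only [Finset.card_range]
  have hs : (∑ i ∈ range m, (i+2)) = (∑ i ∈ range m, i) + 2*m := by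
    rw [Finset.sum_add_distrib, Finset.sum_const, card_range, smul_eq_mul]; ring
  rw [hs]
  cases m with
  | zero => simp
  | succ n =>
    have h : (∑ i ∈ range (n+1), i) * 2 = (n+1)*n := by
      simpa using Finset.sum_range_id_mul_two (n+1)
    calc ((∑ i ∈ range (n+1), i) + 2*(n+1)) * 2
        = (∑ i ∈ range (n+1), i) * 2 + 4*(n+1) := by ring
      _ = (n+1)*n + 4*(n+1) := by rw [h]
      _ = (n+1)*((n+1)+3) := by ring

lemma count_case1 (k q : ℕ) (v : Fin (3*k+1)) (hv : v.val = 3*q) :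
    (((range (k+2)) ×ˢ (range (k+2))).filter
        (fun p => Adm k p.1 p.2 ∧ v ∈ Fv k p.1 p.2)).card = (q+1)*(k-q+1) := by
  have hxlt : v.val < 3*k+1 := v.isLt
  have hqk : q ≤ k := by omega
  have hT : ∀ p ∈ (range (k+2)) ×ˢ (range (k+2)),
      ((Adm k p.1 p.2 ∧ v ∈ Fv k p.1 p.2) ↔ (p.1 ≤ q ∧ q+1 ≤ p.2)) := by
    rintro ⟨t0, t1⟩ hp
    simp only [mem_product, mem_range] at hp
    dsimp only
    constructor
    · rintro ⟨hadm, hvmem⟩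
      have ha1 := hadm.1
      have ha4 := hadm.2.2.2
      rw [mem_Fv hadm] at hvmem
      obtain ⟨i, hik, hpos⟩ := hvmem
      rcases posN_spec t0 t1 i hadm.2.2.1 with ⟨a,b⟩|⟨a,b,c⟩|⟨a,b⟩ <;> omega
    · rintro ⟨h1, h2⟩
      have hadm : Adm k t0 t1 := ⟨by omega, by omega, by omega, by omega⟩
      refine ⟨hadm, ?_⟩
      rw [mem_Fv hadm]
      refine ⟨q, hqk, ?_⟩
      rcases posN_spec t0 t1 q hadm.2.2.1 with ⟨a,b⟩|⟨a,b,c⟩|⟨a,b⟩ <;> omega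
  rw [Finset.filter_congr hT, Finset.filter_product (fun a => a ≤ q) (fun b => q+1 ≤ b),
    Finset.card_product]
  have e1 : (range (k+2)).filter (fun a => a ≤ q) = range (q+1) := by
    ext a; simp only [mem_filter, mem_range]; omega
  have e2 : (range (k+2)).filter (fun b => q+1 ≤ b) = Ico (q+1) (k+2) := by
    ext b; simp only [mem_filter, mem_range, Finset.mem_Ico]; omega
  rw [e1, e2, card_range, Nat.card_Ico]
  congr 1
  omega

lemma count_case0 (k q : ℕ) (v : Fin (3*k+1)) (hv : v.val + 1 = 3*q) :
    (((range (k+2)) ×ˢ (range (k+2))).filter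
        (fun p => Adm k p.1 p.2 ∧ v ∈ Fv k p.1 p.2)).card = q*(q+3)/2 := by
  have hxlt : v.val < 3*k+1 := v.isLt
  have hq1 : 1 ≤ q := by omega
  have hqk : q ≤ k := by omega
  have hT : ∀ p ∈ (range (k+2)) ×ˢ (range (k+2)),
      ((Adm k p.1 p.2 ∧ v ∈ Fv k p.1 p.2) ↔ (p.1 ≤ p.2 ∧ 1 ≤ p.2 ∧ p.2 ≤ q)) := by
    rintro ⟨t0, t1⟩ hp
    simp only [mem_product, mem_range] at hp
    dsimp only
    constructor
    · rintro ⟨hadm, hvmem⟩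
      have ha1 := hadm.1
      have ha3 := hadm.2.2.1
      rw [mem_Fv hadm] at hvmem
      obtain ⟨i, hik, hpos⟩ := hvmem
      rcases posN_spec t0 t1 i hadm.2.2.1 with ⟨a,b⟩|⟨a,b,c⟩|⟨a,b⟩ <;> omega
    · rintro ⟨h1, h2, h3⟩
      have hadm : Adm k t0 t1 := ⟨by omega, by omega, by omega, by omega⟩
      refine ⟨hadm, ?_⟩
      rw [mem_Fv hadm]
      refine ⟨q, hqk, ?_⟩
      rcases posN_spec t0 t1 q hadm.2.2.1 with ⟨a,b⟩|⟨a,b,c⟩|⟨a,b⟩ <;> omega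
  rw [Finset.filter_congr hT]
  have hbij : (((range (k+2)) ×ˢ (range (k+2))).filter
      (fun p => p.1 ≤ p.2 ∧ 1 ≤ p.2 ∧ p.2 ≤ q)).card
      = ((range q).sigma (fun i => range (i+2))).card := by
    apply Finset.card_bij' (fun p _ => (⟨p.2 - 1, p.1⟩ : (_ : ℕ) × ℕ))
      (fun s _ => ((s.2, s.1 + 1) : ℕ × ℕ))
    · intro p hp
      simp only [mem_filter, mem_product, mem_range] at hp
      simp only [Finset.mem_sigma, mem_range]
      omega
    · intro s hs
      simp only [Finset.mem_sigma, mem_range] at hs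
      simp only [mem_filter, mem_product, mem_range]
      omega
    · intro p hp
      obtain ⟨p1, p2⟩ := p
      simp only [mem_filter, mem_product, mem_range] at hp
      dsimp only at hp ⊢
      simp only [Prod.mk.injEq]
      refine ⟨?_, ?_⟩ <;> first | trivial | omega
    · intro s hs
      obtain ⟨s1, s2⟩ := s
      simp only [Finset.mem_sigma, mem_range] at hs
      dsimp only at hs ⊢
      rw [show s1 + 1 - 1 = s1 by omega]
  rw [hbij]
  have h2 : ((range q).sigma (fun i => range (i+2))).card * 2 = q*(q+3) := tri_card q
  generalize hM : q*(q+3) = M at h2 ⊢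
  omega

lemma count_case2 (k q : ℕ) (v : Fin (3*k+1)) (hv : v.val = 3*q + 1) :
    (((range (k+2)) ×ˢ (range (k+2))).filter
        (fun p => Adm k p.1 p.2 ∧ v ∈ Fv k p.1 p.2)).card = (k-q)*(k-q+3)/2 := by
  have hxlt : v.val < 3*k+1 := v.isLt
  have hqk : q < k := by omega
  have hT : ∀ p ∈ (range (k+2)) ×ˢ (range (k+2)),
      ((Adm k p.1 p.2 ∧ v ∈ Fv k p.1 p.2) ↔
        (q+1 ≤ p.1 ∧ p.1 ≤ p.2 ∧ p.1 ≤ k ∧ p.2 ≤ k+1)) := by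
    rintro ⟨t0, t1⟩ hp
    simp only [mem_product, mem_range] at hp
    dsimp only
    constructor
    · rintro ⟨hadm, hvmem⟩
      have ha1 := hadm.1
      have ha2 := hadm.2.1
      have ha4 := hadm.2.2.2
      rw [mem_Fv hadm] at hvmem
      obtain ⟨i, hik, hpos⟩ := hvmem
      rcases posN_spec t0 t1 i hadm.2.2.1 with ⟨a,b⟩|⟨a,b,c⟩|⟨a,b⟩ <;> omega
    · rintro ⟨h1, h2, h3, h4⟩
      have hadm : Adm k t0 t1 := ⟨by omega, by omega, by omega, by omega⟩
      refine ⟨hadm, ?_⟩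
      rw [mem_Fv hadm]
      refine ⟨q, by omega, ?_⟩
      rcases posN_spec t0 t1 q hadm.2.2.1 with ⟨a,b⟩|⟨a,b,c⟩|⟨a,b⟩ <;> omega
  rw [Finset.filter_congr hT]
  have hbij : (((range (k+2)) ×ˢ (range (k+2))).filter
      (fun p => q+1 ≤ p.1 ∧ p.1 ≤ p.2 ∧ p.1 ≤ k ∧ p.2 ≤ k+1)).card
      = ((range (k-q)).sigma (fun i => range (i+2))).card := by
    apply Finset.card_bij' (fun p _ => (⟨k - p.1, k+1 - p.2⟩ : (_ : ℕ) × ℕ))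
      (fun s _ => ((k - s.1, k+1 - s.2) : ℕ × ℕ))
    · intro p hp
      simp only [mem_filter, mem_product, mem_range] at hp
      simp only [Finset.mem_sigma, mem_range]
      omega
    · intro s hs
      simp only [Finset.mem_sigma, mem_range] at hs
      simp only [mem_filter, mem_product, mem_range]
      omega
    · intro p hp
      obtain ⟨p1, p2⟩ := p
      simp only [mem_filter, mem_product, mem_range] at hp
      dsimp only at hp ⊢
      simp only [Prod.mk.injEq]
      refine ⟨?_, ?_⟩ <;> first | trivial | omega
    · intro s hs
      obtain ⟨s1, s2⟩ := s
      simp only [Finset.mem_sigma, mem_range] at hs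
      dsimp only at hs ⊢
      rw [show k - (k - s1) = s1 by omega, show k + 1 - (k + 1 - s2) = s2 by omega]
  rw [hbij]
  have h2 : ((range (k-q)).sigma (fun i => range (i+2))).card * 2 = (k-q)*((k-q)+3) :=
    tri_card (k-q)
  generalize hM : (k-q)*(k-q+3) = M at h2 ⊢
  omega

end P18

/-- Vertices of `SimpleGraph.pathGraph (3*k+1)` are labeled `1,…,3k+1`; vertex
`v : Fin (3*k+1)` has label `v.val + 1 = 3*q + r` with `0 ≤ r < 3`. -/
theorem stmt_18 (k : ℕ) (hk : 1 ≤ k) (v : Fin (3 * k + 1)) (q r : ℕ)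
    (hq : v.val + 1 = 3 * q + r) (hr : r < 3) :
    (r = 0 → DV (SimpleGraph.pathGraph (3 * k + 1)) v = q * (q + 3) / 2) ∧
    (r = 1 → DV (SimpleGraph.pathGraph (3 * k + 1)) v = (q + 1) * (k - q + 1)) ∧
    (r = 2 → DV (SimpleGraph.pathGraph (3 * k + 1)) v = (k - q) * (k - q + 3) / 2) := by
  have hxlt : v.val < 3*k+1 := v.isLt
  refine ⟨fun h0 => ?_, fun h1 => ?_, fun h2 => ?_⟩
  · rw [P18.DV_eq]
    exact P18.count_case0 k q v (by omega)
  · rw [P18.DV_eq]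
    exact P18.count_case1 k q v (by omega)
  · rw [P18.DV_eq]
    exact P18.count_case2 k q v (by omega)
end

section
/- Let P_{3k+2} (k ≥ 0) have vertices labeled 1,…,3k+2 along the path, and write v = 3q + r with 0 ≤ r < 3. Then DV(v) = 0 if r = 0; DV(v) = 1 + q if r = 1; and DV(v) = k + 1 − q if r = 2. In particular τ(P_{3k+2}) = k + 2. -/
namespace Stmt19

variable {k : ℕ}

/-- The candidate minimum dominating set with parameter `j`. -/
def Dset (k j : ℕ) : Finset (Fin (3*k+2)) :=
  Finset.univ.filter (fun i => (i.val % 3 = 1 ∧ i.val / 3 < j) ∨ (i.val % 3 = 0 ∧ j ≤ i.val / 3))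

lemma mem_Dset {j : ℕ} {i : Fin (3*k+2)} :
    i ∈ Dset k j ↔ (i.val % 3 = 1 ∧ i.val / 3 < j) ∨ (i.val % 3 = 0 ∧ j ≤ i.val / 3) := by
  simp [Dset]

lemma card_Dset {j : ℕ} : (Dset k j).card = k + 1 := by
  rw [show k + 1 = (Finset.range (k+1)).card by simp]
  apply Finset.card_bij (fun a _ => a.val / 3)
  · intro a ha
    rw [mem_Dset] at ha
    have h2 := a.isLt
    simp only [Finset.mem_range]
    omega
  · intro a ha b hb hab
    rw [mem_Dset] at ha hb
    apply Fin.ext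
    omega
  · intro t ht
    simp only [Finset.mem_range] at ht
    by_cases hj : t < j
    · refine ⟨⟨3*t+1, by omega⟩, ?_, ?_⟩
      · rw [mem_Dset]; simp only [Fin.val_mk]; left; constructor <;> omega
      · simp only [Fin.val_mk]; omega
    · refine ⟨⟨3*t, by omega⟩, ?_, ?_⟩
      · rw [mem_Dset]; simp only [Fin.val_mk]; right; constructor <;> omega
      · simp only [Fin.val_mk]; omega

lemma isDomSet_Dset {j : ℕ} : IsDomSet (SimpleGraph.pathGraph (3*k+2)) (Dset k j) := by
  intro v hv
  rw [mem_Dset] at hv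
  have hlt := v.isLt
  have h3 : v.val % 3 = 0 ∨ v.val % 3 = 1 ∨ v.val % 3 = 2 := by omega
  rcases h3 with h | h | h
  · -- v = 3t with t < j (since v ∉ Dset); dominated by 3t+1
    have ht : v.val / 3 < j := by
      by_contra hc
      exact hv (Or.inr ⟨h, by omega⟩)
    refine ⟨(⟨v.val + 1, by omega⟩ : Fin (3*k+2)), ?_, ?_⟩
    · rw [mem_Dset]; simp only [Fin.val_mk]; left; constructor <;> omega
    · rw [SimpleGraph.pathGraph_adj]; right; simp
  · -- v = 3t+1 with j ≤ t
    have ht : j ≤ v.val / 3 := by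
      by_contra hc
      exact hv (Or.inl ⟨h, by omega⟩)
    refine ⟨(⟨v.val - 1, by omega⟩ : Fin (3*k+2)), ?_, ?_⟩
    · rw [mem_Dset]; simp only [Fin.val_mk]; right; constructor <;> omega
    · rw [SimpleGraph.pathGraph_adj]; left; simp; omega
  · -- v = 3t+2
    by_cases hj : v.val / 3 < j
    · refine ⟨(⟨v.val - 1, by omega⟩ : Fin (3*k+2)), ?_, ?_⟩
      · rw [mem_Dset]; simp only [Fin.val_mk]; left; constructor <;> omega
      · rw [SimpleGraph.pathGraph_adj]; left; simp; omega
    · refine ⟨(⟨v.val + 1, by omega⟩ : Fin (3*k+2)), ?_, ?_⟩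
      · rw [mem_Dset]; simp only [Fin.val_mk]; right; constructor <;> omega
      · rw [SimpleGraph.pathGraph_adj]; right; simp


lemma blocks {D : Finset (Fin (3*k+2))} (hD : IsDomSet (SimpleGraph.pathGraph (3*k+2)) D)
    {t : ℕ} (ht : t ≤ k) : ∃ d ∈ D, d.val / 3 = t := by
  set m : Fin (3*k+2) := ⟨3*t+1, by omega⟩ with hm
  have hmv : m.val = 3*t+1 := rfl
  by_cases h : m ∈ D
  · exact ⟨m, h, by omega⟩
  · obtain ⟨u, hu, hadj⟩ := hD m h
    rw [SimpleGraph.pathGraph_adj] at hadj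
    exact ⟨u, hu, by omega⟩

lemma card_lower {D : Finset (Fin (3*k+2))} (hD : IsDomSet (SimpleGraph.pathGraph (3*k+2)) D) :
    k + 1 ≤ D.card := by
  have h : ∀ t : Fin (k+1), ∃ d, d ∈ D ∧ d.val / 3 = t.val := fun t => by
    obtain ⟨d, hd, hdt⟩ := blocks hD (Nat.lt_succ_iff.mp t.isLt)
    exact ⟨d, hd, hdt⟩
  choose f hf1 hf2 using h
  have hinj : Set.InjOn f ↑(Finset.univ : Finset (Fin (k+1))) := by
    intro a _ b _ hab
    apply Fin.ext
    rw [← hf2 a, ← hf2 b, hab]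
  have := Finset.card_le_card_of_injOn f (fun t _ => hf1 t) hinj
  simpa using this

lemma domNum_eq : domNum (SimpleGraph.pathGraph (3*k+2)) = k + 1 := by
  apply le_antisymm
  · exact Nat.sInf_le ⟨Dset k 0, isDomSet_Dset, card_Dset⟩
  · have hne : {n | ∃ D : Finset (Fin (3*k+2)),
        IsDomSet (SimpleGraph.pathGraph (3*k+2)) D ∧ D.card = n}.Nonempty :=
      ⟨k+1, Dset k 0, isDomSet_Dset, card_Dset⟩
    rw [domNum]
    apply le_csInf hne
    rintro n ⟨D, hD, rfl⟩
    exact card_lower hD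

section Struct

variable {D : Finset (Fin (3*k+2))} (hD : IsDomSet (SimpleGraph.pathGraph (3*k+2)) D)
  (hcard : D.card = k + 1)

include hD hcard

lemma uniq : ∀ d ∈ D, ∀ d' ∈ D, d.val / 3 = d'.val / 3 → d = d' := by
  have hmaps : ∀ a ∈ D, a.val / 3 ∈ Finset.range (k+1) := fun a _ => by
    have := a.isLt
    simp only [Finset.mem_range]
    omega
  have hsurj : ∀ b ∈ Finset.range (k+1), ∃ a ∈ D, a.val / 3 = b := fun b hb => by
    simp only [Finset.mem_range] at hb
    exact blocks hD (by omega)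
  have hst : D.card ≤ (Finset.range (k+1)).card := by simp [hcard]
  exact fun d hd d' hd' h =>
    Finset.inj_on_of_surj_on_of_card_le (fun a _ => a.val / 3) hmaps
      (fun b hb => by obtain ⟨a, ha, hab⟩ := hsurj b hb; exact ⟨a, ha, hab⟩) hst hd hd' h

lemma no_two : ∀ d ∈ D, d.val % 3 ≠ 2 := by
  have hu := uniq hD hcard
  suffices h : ∀ t, ∀ d ∈ D, d.val / 3 = t → d.val % 3 ≠ 2 by
    intro d hd
    exact h (d.val / 3) d hd rfl
  intro t
  induction t with
  | zero =>
    intro d hd hdt hmod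
    have hdv : d.val = 2 := by omega
    by_cases h0 : (⟨0, by omega⟩ : Fin (3*k+2)) ∈ D
    · have := congrArg Fin.val (hu _ h0 _ hd (by simp only [Fin.val_mk]; omega))
      simp only [Fin.val_mk] at this
      omega
    · obtain ⟨u, hu', hadj⟩ := hD _ h0
      rw [SimpleGraph.pathGraph_adj] at hadj
      simp only [Fin.val_mk] at hadj
      have huv : u.val = 1 := by omega
      have := congrArg Fin.val (hu _ hu' _ hd (by omega))
      omega
  | succ t ih =>
    intro d hd hdt hmod
    have hlt := d.isLt
    have hdv : d.val = 3*t + 5 := by omega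
    have hm3 : 3*t + 3 < 3*k + 2 := by omega
    by_cases hm : (⟨3*t+3, hm3⟩ : Fin (3*k+2)) ∈ D
    · have := congrArg Fin.val (hu _ hm _ hd (by simp only [Fin.val_mk]; omega))
      simp only [Fin.val_mk] at this
      omega
    · obtain ⟨u, hu', hadj⟩ := hD _ hm
      rw [SimpleGraph.pathGraph_adj] at hadj
      simp only [Fin.val_mk] at hadj
      rcases hadj with h1 | h1
      · -- u.val = 3t+2, block t, contradicts ih
        exact ih u hu' (by omega) (by omega)
      · -- u.val = 3t+4, block t+1, equals d
        have := congrArg Fin.val (hu _ hu' _ hd (by omega))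
        omega

lemma step_zero {t : ℕ} (ht : t < k) (h0 : ∃ d ∈ D, d.val = 3*t) :
    ∃ d ∈ D, d.val = 3*(t+1) := by
  have hu := uniq hD hcard
  have hA := no_two hD hcard
  obtain ⟨d0, hd0, hd0v⟩ := h0
  obtain ⟨d1, hd1, hd1v⟩ := blocks hD (show t+1 ≤ k by omega)
  have h1 : d1.val = 3*(t+1) ∨ d1.val = 3*(t+1)+1 := by
    have := hA d1 hd1
    omega
  rcases h1 with h1 | h1
  · exact ⟨d1, hd1, h1⟩
  · -- d1 = 3t+4 : vertex 3t+2 cannot be dominated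
    exfalso
    have hm2 : 3*t + 2 < 3*k + 2 := by omega
    by_cases hm : (⟨3*t+2, hm2⟩ : Fin (3*k+2)) ∈ D
    · have := congrArg Fin.val (hu _ hm _ hd0 (by simp only [Fin.val_mk]; omega))
      simp only [Fin.val_mk] at this
      omega
    · obtain ⟨u, hu', hadj⟩ := hD _ hm
      rw [SimpleGraph.pathGraph_adj] at hadj
      simp only [Fin.val_mk] at hadj
      rcases hadj with h2 | h2
      · -- u.val = 3t+1, block t, equals d0
        have := congrArg Fin.val (hu _ hu' _ hd0 (by omega))
        omega
      · -- u.val = 3t+3, block t+1, equals d1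
        have := congrArg Fin.val (hu _ hu' _ hd1 (by omega))
        omega

lemma mono_zero : ∀ b ≤ k, ∀ a ≤ b, (∃ d ∈ D, d.val = 3*a) → ∃ d ∈ D, d.val = 3*b := by
  intro b
  induction b with
  | zero =>
    intro _ a ha h
    have : a = 0 := by omega
    subst this
    exact h
  | succ b ih =>
    intro hbk a hab h
    rcases Nat.lt_succ_iff_lt_or_eq.mp (Nat.lt_succ_of_le hab) with h' | h'
    · exact step_zero hD hcard (by omega) (ih (by omega) a (by omega) h)
    · subst h'; exact h

lemma struct : ∃ j ≤ k + 1, D = Dset k j := by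
  have hu := uniq hD hcard
  have hA := no_two hD hcard
  by_cases hex : ∃ t, t ≤ k ∧ ∃ d ∈ D, d.val = 3*t
  · set j := Nat.find hex with hj
    have hjspec := Nat.find_spec hex
    refine ⟨j, by omega, ?_⟩
    ext i
    rw [mem_Dset]
    have hlt := i.isLt
    constructor
    · intro hi
      have h2 := hA i hi
      have h3 : i.val % 3 = 0 ∨ i.val % 3 = 1 := by omega
      rcases h3 with h | h
      · right
        refine ⟨h, ?_⟩
        exact Nat.find_min' hex ⟨by omega, i, hi, by omega⟩
      · left
        refine ⟨h, ?_⟩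
        by_contra hc
        push_neg at hc
        obtain ⟨d, hd, hdv⟩ := mono_zero hD hcard (i.val / 3) (by omega) j (by omega) hjspec.2
        have := congrArg Fin.val (hu _ hd _ hi (by omega))
        omega
    · rintro (⟨h1, h2⟩ | ⟨h1, h2⟩)
      · obtain ⟨d, hd, hdv⟩ := blocks hD (show i.val / 3 ≤ k by omega)
        have h3 : d.val = 3*(i.val/3) ∨ d.val = 3*(i.val/3)+1 := by
          have := hA d hd
          omega
        rcases h3 with h3 | h3
        · exfalso
          have : j ≤ i.val / 3 := Nat.find_min' hex ⟨by omega, d, hd, h3⟩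
          omega
        · have : d = i := Fin.ext (by omega)
          rwa [← this]
      · have hjk : j ≤ k := by omega
        obtain ⟨d, hd, hdv⟩ := mono_zero hD hcard (i.val / 3) (by omega) j h2 hjspec.2
        have : d = i := Fin.ext (by omega)
        rwa [← this]
  · push_neg at hex
    refine ⟨k+1, le_refl _, ?_⟩
    ext i
    rw [mem_Dset]
    have hlt := i.isLt
    constructor
    · intro hi
      have h2 := hA i hi
      have h3 : i.val % 3 = 0 ∨ i.val % 3 = 1 := by omega
      rcases h3 with h | h
      · exfalso
        exact hex (i.val / 3) (by omega) i hi (by omega)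
      · left
        exact ⟨h, by omega⟩
    · rintro (⟨h1, h2⟩ | ⟨h1, h2⟩)
      · obtain ⟨d, hd, hdv⟩ := blocks hD (show i.val / 3 ≤ k by omega)
        have h3 : d.val = 3*(i.val/3) ∨ d.val = 3*(i.val/3)+1 := by
          have := hA d hd
          omega
        rcases h3 with h3 | h3
        · exact absurd h3 (by have := hex (i.val/3) (by omega) d hd; omega)
        · have : d = i := Fin.ext (by omega)
          rwa [← this]
      · omega

end Struct

lemma Dset_inj {j j' : ℕ} (hj : j ≤ k+1) (hj' : j' ≤ k+1) (h : Dset k j = Dset k j') :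
    j = j' := by
  by_contra hne
  have key : ∀ a b : ℕ, a ≤ k+1 → b ≤ k+1 → a < b → Dset k a ≠ Dset k b := by
    intro a b ha hb hab heq
    have hx : (⟨3*a, by omega⟩ : Fin (3*k+2)) ∈ Dset k a := by
      rw [mem_Dset]
      simp only [Fin.val_mk]
      right
      constructor <;> omega
    rw [heq, mem_Dset] at hx
    simp only [Fin.val_mk] at hx
    omega
  rcases Nat.lt_or_ge j j' with h' | h'
  · exact key j j' hj hj' h' h
  · exact key j' j hj' hj (by omega) h.symm

lemma minDomSets_eq : minDomSets (SimpleGraph.pathGraph (3*k+2)) =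
    ↑((Finset.range (k+2)).image (Dset k)) := by
  ext D
  simp only [minDomSets, Set.mem_setOf_eq, domNum_eq, Finset.coe_image,
    Set.mem_image, Finset.mem_coe, Finset.mem_range]
  constructor
  · rintro ⟨hD, hcard⟩
    obtain ⟨j, hj, rfl⟩ := struct hD hcard
    exact ⟨j, by omega, rfl⟩
  · rintro ⟨j, hj, rfl⟩
    exact ⟨isDomSet_Dset, card_Dset⟩

lemma tau_eq : tau (SimpleGraph.pathGraph (3*k+2)) = k + 2 := by
  rw [tau, minDomSets_eq, Set.ncard_coe_finset,
    Finset.card_image_of_injOn, Finset.card_range]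
  intro a ha b hb hab
  simp only [Finset.coe_range, Set.mem_Iio] at ha hb
  exact Dset_inj (by omega) (by omega) hab

lemma DV_eq (v : Fin (3*k+2)) : DV (SimpleGraph.pathGraph (3*k+2)) v =
    ((Finset.range (k+2)).filter (fun j => v ∈ Dset k j)).card := by
  have hset : {D ∈ minDomSets (SimpleGraph.pathGraph (3*k+2)) | v ∈ D} =
      ↑(((Finset.range (k+2)).filter (fun j => v ∈ Dset k j)).image (Dset k)) := by
    ext D
    simp only [Set.mem_setOf_eq, minDomSets_eq, Finset.coe_image, Set.mem_image,
      Finset.mem_coe, Finset.mem_image, Finset.mem_filter, Finset.mem_range]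
    constructor
    · rintro ⟨⟨j, hj, rfl⟩, hv⟩
      exact ⟨j, ⟨hj, hv⟩, rfl⟩
    · rintro ⟨j, ⟨hj, hv⟩, rfl⟩
      exact ⟨⟨j, hj, rfl⟩, hv⟩
  rw [DV, hset, Set.ncard_coe_finset, Finset.card_image_of_injOn]
  intro a ha b hb hab
  simp only [Finset.coe_filter, Set.mem_setOf_eq, Finset.mem_range] at ha hb
  exact Dset_inj (by omega) (by omega) hab

end Stmt19

/-- Vertices of `SimpleGraph.pathGraph (3*k+2)` are labeled `1,…,3k+2`; vertex
`v : Fin (3*k+2)` has label `v.val + 1 = 3*q + r` with `0 ≤ r < 3`. -/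
theorem stmt_19 (k : ℕ) (v : Fin (3 * k + 2)) (q r : ℕ)
    (hq : v.val + 1 = 3 * q + r) (hr : r < 3) :
    (r = 0 → DV (SimpleGraph.pathGraph (3 * k + 2)) v = 0) ∧
    (r = 1 → DV (SimpleGraph.pathGraph (3 * k + 2)) v = 1 + q) ∧
    (r = 2 → DV (SimpleGraph.pathGraph (3 * k + 2)) v = k + 1 - q) ∧
    tau (SimpleGraph.pathGraph (3 * k + 2)) = k + 2 := by
  have hlt := v.isLt
  refine ⟨?_, ?_, ?_, Stmt19.tau_eq⟩
  · intro h0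
    subst h0
    rw [Stmt19.DV_eq]
    have hmod : v.val % 3 = 2 := by omega
    rw [Finset.filter_eq_empty_iff.mpr, Finset.card_empty]
    intro j _
    rw [Stmt19.mem_Dset]
    omega
  · intro h1
    subst h1
    rw [Stmt19.DV_eq]
    have hmod : v.val = 3 * q := by omega
    have hqk : q ≤ k := by omega
    have : (Finset.range (k+2)).filter (fun j => v ∈ Stmt19.Dset k j) =
        Finset.range (q+1) := by
      ext j
      simp only [Finset.mem_filter, Finset.mem_range, Stmt19.mem_Dset]
      omega
    rw [this, Finset.card_range]
    omega
  · intro h2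
    subst h2
    rw [Stmt19.DV_eq]
    have hmod : v.val = 3 * q + 1 := by omega
    have hqk : q ≤ k := by omega
    have : (Finset.range (k+2)).filter (fun j => v ∈ Stmt19.Dset k j) =
        Finset.Ico (q+1) (k+2) := by
      ext j
      simp only [Finset.mem_filter, Finset.mem_range, Finset.mem_Ico, Stmt19.mem_Dset]
      omega
    rw [this, Nat.card_Ico]
    omega
end
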